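/- arXiv:1005.1696 — 9 statements merged into one kernel-verified Lean document; each statement's English description precedes it below -/
import Mathlib

section
/- Let d > m ≥ 1 be integers and K ⊂ ℂ^{m+1} a compact set with a_m ≠ 0 for every a = (a₀,…,a_m) ∈ K. Let Q(z,t,a) = t·z^d + a_m z^m + … + a₁ z + a₀. Let θ ∈ ℝ and suppose there exist δ > 0 and R > 0 such that for all (t,a) ∈ [0,1]×K, every root z of Q(·,t,a) with |z| > R satisfies z ∉ {ρ·e^{iφ} : ρ > 0, |φ − θ| < δ (mod 2π)}. Then there exists b > R such that for every (t,a) ∈ [0,1]×K: Q(r·e^{iθ},t,a) ≠ 0 for all r ≥ b, and ∫_{b}^{∞} | (5/16)·(Q'(r e^{iθ},t,a)/Q(r e^{iθ},t,a))² − (1/4)·Q''(r e^{iθ},t,a)/Q(r e^{iθ},t,a) | · |Q(r e^{iθ},t,a)|^{−1/2} dr < 1/2, where ' denotes differentiation in z. -/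
open Complex Filter MeasureTheory

/-- The polynomial potential `Q(z,t,a) = t z^d + a_m z^m + … + a₁ z + a₀`. -/
noncomputable def QPot (d m : ℕ) (t : ℝ) (a : Fin (m + 1) → ℂ) (z : ℂ) : ℂ :=
  (t : ℂ) * z ^ d + ∑ j : Fin (m + 1), a j * z ^ (j : ℕ)

section AuxLemmas
open Polynomial

lemma cos_le_of_forall {d ψ : ℝ} (h1 : 0 < d) (h2 : d ≤ Real.pi/2)
    (h : ∀ k : ℤ, d ≤ |ψ - 2*Real.pi*k|) : Real.cos ψ ≤ Real.cos d := by
  set k : ℤ := round (ψ / (2*Real.pi)) with hk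
  have hpi := Real.pi_pos
  have h2pi : (0:ℝ) < 2*Real.pi := by linarith
  have hb : |ψ / (2*Real.pi) - k| ≤ 1/2 := abs_sub_round _
  set ψ₀ : ℝ := ψ - 2*Real.pi*k with hψ₀
  have hψ₀pi : |ψ₀| ≤ Real.pi := by
    have he : ψ₀ = (ψ/(2*Real.pi) - k) * (2*Real.pi) := by field_simp; exact hψ₀
    have : |ψ₀| = |ψ/(2*Real.pi) - k| * (2*Real.pi) := by
      rw [he, abs_mul, abs_of_pos h2pi]
    rw [this]
    calc |ψ/(2*Real.pi) - k| * (2*Real.pi) ≤ (1/2) * (2*Real.pi) :=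
          mul_le_mul_of_nonneg_right hb (le_of_lt h2pi)
      _ = Real.pi := by ring
  have hd : d ≤ |ψ₀| := h k
  have hcos : Real.cos ψ = Real.cos |ψ₀| := by
    rw [Real.cos_abs]
    have : ψ = ψ₀ + k * (2*Real.pi) := by rw [hψ₀]; ring
    rw [this, Real.cos_add_int_mul_two_pi]
  rw [hcos]
  exact Real.cos_le_cos_of_nonneg_of_le_pi (le_of_lt h1) hψ₀pi hd

lemma sector_dist {d θ φ r ρ : ℝ} (h1 : 0 < d) (h2 : d ≤ Real.pi/2)
    (hr : 0 < r) (hρ : 0 < ρ) (h : ∀ k : ℤ, d ≤ |φ - θ - 2*Real.pi*k|) :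
    Real.sin d * max r ρ ≤
      Norm.norm ((r:ℂ) * Complex.exp ((θ:ℂ)*Complex.I) - (ρ:ℂ) * Complex.exp ((φ:ℂ)*Complex.I)) := by
  have hcos : Real.cos (φ - θ) ≤ Real.cos d := cos_le_of_forall h1 h2 h
  have hsin : 0 < Real.sin d := Real.sin_pos_of_pos_of_lt_pi h1 (lt_of_le_of_lt h2 (by linarith [Real.pi_pos]))
  set ψ : ℝ := φ - θ with hψ
  have hfac : (r:ℂ) * Complex.exp ((θ:ℂ)*Complex.I) - (ρ:ℂ) * Complex.exp ((φ:ℂ)*Complex.I)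
      = Complex.exp ((θ:ℂ)*Complex.I) * ((r:ℂ) - (ρ:ℂ) * Complex.exp ((ψ:ℂ)*Complex.I)) := by
    rw [mul_sub]
    congr 1
    · ring
    · rw [← mul_assoc, mul_comm (Complex.exp _), mul_assoc, ← Complex.exp_add]
      congr 2
      push_cast [hψ]; ring
  rw [hfac, norm_mul, Complex.norm_exp_ofReal_mul_I, one_mul]
  have key : (Norm.norm ((r:ℂ) - (ρ:ℂ) * Complex.exp ((ψ:ℂ)*Complex.I)))^2
      = r^2 + ρ^2 - 2*r*ρ*Real.cos ψ := by
    rw [Complex.sq_norm, Complex.normSq_apply]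
    simp only [Complex.sub_re, Complex.sub_im, Complex.ofReal_re, Complex.ofReal_im,
      Complex.mul_re, Complex.mul_im, Complex.exp_ofReal_mul_I_re, Complex.exp_ofReal_mul_I_im]
    nlinarith [Real.sin_sq_add_cos_sq ψ]
  have habs := norm_nonneg ((r:ℂ) - (ρ:ℂ) * Complex.exp ((ψ:ℂ)*Complex.I))
  rcases max_cases r ρ with ⟨hmax, hge⟩ | ⟨hmax, hge⟩ <;> rw [hmax] <;>
    nlinarith [Real.sin_sq_add_cos_sq d, sq_nonneg (Real.cos d * r - ρ),
      sq_nonneg (Real.cos d * ρ - r), mul_pos hr hρ, hcos, mul_le_mul_of_nonneg_left hcos (le_of_lt (mul_pos hr hρ)), Real.sin_le_one d]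



noncomputable def Ppoly (d m : ℕ) (t : ℝ) (a : Fin (m + 1) → ℂ) : Polynomial ℂ :=
  C (t:ℂ) * X ^ d + ∑ j : Fin (m + 1), C (a j) * X ^ (j : ℕ)

lemma Ppoly_eval (d m : ℕ) (t : ℝ) (a : Fin (m + 1) → ℂ) (z : ℂ) :
    (Ppoly d m t a).eval z = QPot d m t a z := by
  simp [Ppoly, QPot, eval_finset_sum]

lemma Ppoly_coeff_m (d m : ℕ) (hdm : m < d) (t : ℝ) (a : Fin (m + 1) → ℂ) :
    (Ppoly d m t a).coeff m = a (Fin.last m) := by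
  rw [Ppoly]
  rw [coeff_add, coeff_C_mul, coeff_X_pow, if_neg (by omega), mul_zero, zero_add]
  rw [finset_sum_coeff]
  simp only [coeff_C_mul, coeff_X_pow]
  rw [Finset.sum_eq_single (Fin.last m)]
  · simp [Fin.val_last]
  · intro j _ hj
    rw [if_neg, mul_zero]
    intro hc
    exact hj (by ext; simpa [Fin.val_last] using hc.symm)
  · intro h; exact absurd (Finset.mem_univ _) h

lemma Ppoly_coeff_d (d m : ℕ) (hdm : m < d) (t : ℝ) (a : Fin (m + 1) → ℂ) :
    (Ppoly d m t a).coeff d = (t:ℂ) := by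
  rw [Ppoly]
  rw [coeff_add, coeff_C_mul, coeff_X_pow, if_pos rfl, mul_one]
  rw [finset_sum_coeff]
  have h0 : ∀ j : Fin (m+1), (C (a j) * X ^ (j:ℕ)).coeff d = 0 := by
    intro j
    rw [coeff_C_mul, coeff_X_pow, if_neg (by omega), mul_zero]
  simp [h0]

lemma Ppoly_natDegree_le (d m : ℕ) (hdm : m < d) (t : ℝ) (a : Fin (m + 1) → ℂ) :
    (Ppoly d m t a).natDegree ≤ d := by
  rw [Ppoly]
  apply le_trans (natDegree_add_le _ _)
  apply max_le
  · exact le_trans (natDegree_C_mul_le _ _) (natDegree_X_pow_le d)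
  · apply le_trans (natDegree_sum_le _ _)
    refine (Finset.fold_max_le d).2 ⟨Nat.zero_le _, fun j _ => ?_⟩
    exact le_trans (natDegree_C_mul_le _ _) (le_trans (natDegree_X_pow_le _) (by omega))

lemma nat_choose_le_two_pow (n k : ℕ) : n.choose k ≤ 2 ^ n := by
  rcases le_or_gt k n with hk | hk
  · calc n.choose k ≤ ∑ i ∈ Finset.range (n+1), n.choose i :=
        Finset.single_le_sum (fun i _ => Nat.zero_le _) (Finset.mem_range.2 (Nat.lt_succ_of_le hk))
      _ = 2 ^ n := Nat.sum_range_choose n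
  · rw [Nat.choose_eq_zero_of_lt hk]; exact Nat.zero_le _

lemma multiset_prod_map_le {s : Multiset ℂ} {f g : ℂ → ℝ}
    (h0 : ∀ x ∈ s, 0 ≤ f x) (h : ∀ x ∈ s, f x ≤ g x) :
    (s.map f).prod ≤ (s.map g).prod := by
  induction s using Multiset.induction_on with
  | empty => simp
  | cons x s ih =>
    simp only [Multiset.map_cons, Multiset.prod_cons]
    have hfx := h0 x (Multiset.mem_cons_self x s)
    have hfs : (0:ℝ) ≤ (s.map f).prod := by
      apply Multiset.prod_nonneg
      intro y hy
      obtain ⟨z, hz, rfl⟩ := Multiset.mem_map.1 hy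
      exact h0 z (Multiset.mem_cons_of_mem hz)
    exact mul_le_mul (h x (Multiset.mem_cons_self x s))
      (ih (fun y hy => h0 y (Multiset.mem_cons_of_mem hy))
          (fun y hy => h y (Multiset.mem_cons_of_mem hy))) hfs
      (le_trans hfx (h x (Multiset.mem_cons_self x s)))

lemma QPot_lower (d m : ℕ) (hm : 1 ≤ m) (hdm : m < d)
    (t : ℝ) (ht0 : 0 ≤ t) (a : Fin (m+1) → ℂ) (ham : a (Fin.last m) ≠ 0)
    (θ δ' R r : ℝ) (hδ1 : 0 < δ') (hδ2 : δ' ≤ Real.pi/2) (hR : 0 < R)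
    (hroots : ∀ z : ℂ, QPot d m t a z = 0 → R < Norm.norm z →
       ∀ k : ℤ, δ' ≤ |Complex.arg z - θ - 2*Real.pi*k|)
    (hr1 : 1 ≤ r) (hrR : 2*R ≤ r) :
    (min (Real.sin δ') (1/2))^d * Norm.norm (a (Fin.last m)) / 2^d * r^m
      ≤ Norm.norm (QPot d m t a ((r:ℂ) * Complex.exp ((θ:ℂ)*Complex.I)))
    ∧ t * (min (Real.sin δ') (1/2))^d * r^d
      ≤ Norm.norm (QPot d m t a ((r:ℂ) * Complex.exp ((θ:ℂ)*Complex.I))) := by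
  have hr0 : (0:ℝ) < r := lt_of_lt_of_le one_pos hr1
  set κ : ℝ := min (Real.sin δ') (1/2) with hκdef
  have hsin : 0 < Real.sin δ' :=
    Real.sin_pos_of_pos_of_lt_pi hδ1 (lt_of_le_of_lt hδ2 (by linarith [Real.pi_pos]))
  have hκ0 : 0 < κ := lt_min hsin (by norm_num)
  have hκ1 : κ ≤ 1 := le_trans (min_le_right _ _) (by norm_num)
  set w : ℂ := (r:ℂ) * Complex.exp ((θ:ℂ)*Complex.I) with hw
  set P : Polynomial ℂ := Ppoly d m t a with hP
  have hcm : P.coeff m = a (Fin.last m) := Ppoly_coeff_m d m hdm t a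
  have hP0 : P ≠ 0 := fun h => ham (by rw [← hcm, h, coeff_zero])
  have hdle : P.natDegree ≤ d := Ppoly_natDegree_le d m hdm t a
  have hmle : m ≤ P.natDegree := le_natDegree_of_ne_zero (by rw [hcm]; exact ham)
  have hsplit : Splits P := IsAlgClosed.splits P
  have hcard : Multiset.card P.roots = P.natDegree := (splits_iff_card_roots).mp hsplit
  set n : ℕ := P.natDegree with hn
  -- per-root estimate
  have hroot_est : ∀ z ∈ P.roots, κ * max r (Norm.norm z) ≤ Norm.norm (w - z) := by
    intro z hz
    have hz0 : QPot d m t a z = 0 := by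
      rw [← Ppoly_eval]; exact (isRoot_of_mem_roots hz)
    rcases le_or_gt (Norm.norm z) R with hzR | hzR
    · have hmax : max r (Norm.norm z) = r := max_eq_left (le_trans hzR (by linarith))
      rw [hmax]
      have h1 : Norm.norm w - Norm.norm z ≤ Norm.norm (w - z) := by
        exact norm_sub_norm_le w z
      have hwabs : Norm.norm w = r := by
        rw [hw, norm_mul, Complex.norm_exp_ofReal_mul_I, mul_one, Complex.norm_real, Real.norm_eq_abs,
          abs_of_pos hr0]
      have hκr : κ * r ≤ r/2 := by
        have : κ ≤ 1/2 := min_le_right _ _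
        nlinarith
      have : Norm.norm w - Norm.norm z ≥ r/2 := by rw [hwabs]; linarith
      linarith
    · have hzne : z ≠ 0 := by
        intro h; rw [h] at hzR; simp at hzR; linarith
      have hang := hroots z hz0 hzR
      have hzrep : z = ((Norm.norm z : ℝ):ℂ) * Complex.exp ((Complex.arg z : ℂ) * Complex.I) :=
        (Complex.norm_mul_exp_arg_mul_I z).symm
      have hd := sector_dist hδ1 hδ2 hr0 (lt_trans hR hzR) hang
      calc κ * max r (Norm.norm z)
          ≤ Real.sin δ' * max r (Norm.norm z) := by
            apply mul_le_mul_of_nonneg_right (min_le_left _ _)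
            exact le_trans (le_of_lt hr0) (le_max_left _ _)
        _ ≤ Norm.norm ((r:ℂ) * Complex.exp ((θ:ℂ)*Complex.I)
              - ((Norm.norm z : ℝ):ℂ) * Complex.exp ((Complex.arg z : ℂ) * Complex.I)) := hd
        _ = Norm.norm (w - z) := by rw [← hzrep, ← hw]
  -- factorization and abs formula
  have hfac : C P.leadingCoeff * (P.roots.map fun z => X - C z).prod = P :=
    C_leadingCoeff_mul_prod_multiset_X_sub_C hcard
  have hevalfac : P.eval w = P.leadingCoeff * ((P.roots.map fun z => (w - z)).prod) := by
    conv_lhs => rw [← hfac]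
    rw [eval_mul, eval_C, eval_multiset_prod, Multiset.map_map]
    simp [Function.comp]
  have habsQ : Norm.norm (QPot d m t a w)
      = Norm.norm P.leadingCoeff * (P.roots.map fun z => Norm.norm (w - z)).prod := by
    rw [← Ppoly_eval d m t a w, ← hP, hevalfac, norm_mul]
    congr 1
    rw [show ∀ s : Multiset ℂ, ‖s.prod‖ = (s.map (‖·‖)).prod from fun s => map_multiset_prod (normHom (α := ℂ)) s, Multiset.map_map]
    rfl
  set Pmax : ℝ := (P.roots.map fun z => max r (Norm.norm z)).prod with hPmaxdef
  have hmaxf_nonneg : ∀ z : ℂ, (0:ℝ) ≤ max r (Norm.norm z) := fun z =>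
    le_trans hr0.le (le_max_left _ _)
  have hPmax_nonneg : 0 ≤ Pmax := by
    apply Multiset.prod_nonneg
    intro y hy
    obtain ⟨z, hz, rfl⟩ := Multiset.mem_map.1 hy
    exact hmaxf_nonneg z
  have hprod_lower : κ^n * Pmax ≤ (P.roots.map fun z => Norm.norm (w - z)).prod := by
    have h1 : ((P.roots.map fun z => κ * max r (Norm.norm z))).prod
        ≤ (P.roots.map fun z => Norm.norm (w - z)).prod :=
      multiset_prod_map_le (fun z _ => mul_nonneg hκ0.le (hmaxf_nonneg z)) hroot_est
    have h2 : ((P.roots.map fun z => κ * max r (Norm.norm z))).prod = κ^n * Pmax := by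
      rw [Multiset.prod_map_mul]
      congr 1
      rw [Multiset.map_const', Multiset.prod_replicate, hcard]
    linarith
  -- Vieta bound
  have hvieta : P.coeff m = P.leadingCoeff * (-1) ^ (n - m) * P.roots.esymm (n - m) :=
    Polynomial.coeff_eq_esymm_roots_of_card hcard hmle
  have habs_am : Norm.norm (a (Fin.last m))
      = Norm.norm P.leadingCoeff * Norm.norm (P.roots.esymm (n - m)) := by
    rw [← hcm, hvieta, norm_mul, norm_mul, norm_pow]
    simp
  have hT : ∀ T ∈ P.roots.powersetCard (n - m), Norm.norm T.prod * r^m ≤ Pmax := by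
    intro T hTmem
    obtain ⟨hTle, hTcard⟩ := Multiset.mem_powersetCard.1 hTmem
    have h1 : Norm.norm T.prod ≤ (T.map fun z => max r (Norm.norm z)).prod := by
      rw [show ∀ s : Multiset ℂ, ‖s.prod‖ = (s.map (‖·‖)).prod from fun s => map_multiset_prod (normHom (α := ℂ)) s]
      exact multiset_prod_map_le (fun z _ => norm_nonneg z) (fun z _ => le_max_right _ _)
    have hTnonneg : (0:ℝ) ≤ (T.map fun z => max r (Norm.norm z)).prod := by
      apply Multiset.prod_nonneg
      intro y hy
      obtain ⟨z, hz, rfl⟩ := Multiset.mem_map.1 hy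
      exact hmaxf_nonneg z
    have hsplit2 : Pmax = (T.map fun z => max r (Norm.norm z)).prod
        * ((P.roots - T).map fun z => max r (Norm.norm z)).prod := by
      rw [hPmaxdef]
      conv_lhs => rw [← tsub_add_cancel_of_le hTle]
      rw [Multiset.map_add, Multiset.prod_add]
      ring
    have hcard2 : Multiset.card (P.roots - T) = m := by
      rw [Multiset.card_sub hTle, hcard, hTcard]
      omega
    have h2 : r^m ≤ ((P.roots - T).map fun z => max r (Norm.norm z)).prod := by
      calc r^m = ((P.roots - T).map fun _ => r).prod := by
            rw [Multiset.map_const', Multiset.prod_replicate, hcard2]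
        _ ≤ _ := multiset_prod_map_le (fun z _ => hr0.le) (fun z _ => le_max_left _ _)
    calc Norm.norm T.prod * r^m ≤ (T.map fun z => max r (Norm.norm z)).prod
          * ((P.roots - T).map fun z => max r (Norm.norm z)).prod := by
          apply mul_le_mul h1 h2 (by positivity) hTnonneg
      _ = Pmax := hsplit2.symm
  have hesymm : Norm.norm (P.roots.esymm (n - m)) * r^m ≤ (2:ℝ)^d * Pmax := by
    have hsum : Norm.norm (P.roots.esymm (n - m))
        ≤ (((P.roots.powersetCard (n - m)).map fun T => Norm.norm T.prod)).sum := by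
      rw [Multiset.esymm]
      calc Norm.norm ((P.roots.powersetCard (n - m)).map Multiset.prod).sum
          ≤ (((P.roots.powersetCard (n - m)).map Multiset.prod).map Norm.norm).sum := by
            simpa using
              norm_multiset_sum_le ((P.roots.powersetCard (n - m)).map Multiset.prod)
        _ = _ := by rw [Multiset.map_map]; rfl
    have hmul : Norm.norm (P.roots.esymm (n - m)) * r^m
        ≤ (((P.roots.powersetCard (n - m)).map fun T => Norm.norm T.prod * r^m)).sum := by
      have := mul_le_mul_of_nonneg_right hsum (pow_nonneg hr0.le m)
      calc Norm.norm (P.roots.esymm (n - m)) * r^m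
          ≤ (((P.roots.powersetCard (n - m)).map fun T => Norm.norm T.prod)).sum * r^m := this
        _ = _ := by
            rw [← Multiset.sum_map_mul_right]
    have hbound : (((P.roots.powersetCard (n - m)).map fun T => Norm.norm T.prod * r^m)).sum
        ≤ (Multiset.card (P.roots.powersetCard (n - m))) • Pmax := by
      have := Multiset.sum_le_card_nsmul
        ((P.roots.powersetCard (n - m)).map fun T => Norm.norm T.prod * r^m) Pmax ?_
      · simpa [Multiset.card_map] using this
      · intro x hx
        obtain ⟨T, hTm, rfl⟩ := Multiset.mem_map.1 hx
        exact hT T hTm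
    have hcardpow : Multiset.card (P.roots.powersetCard (n - m)) = n.choose (n - m) := by
      rw [Multiset.card_powersetCard, hcard]
    have hchoose : (n.choose (n - m) : ℝ) ≤ (2:ℝ)^d := by
      calc (n.choose (n - m) : ℝ) ≤ ((2^n : ℕ) : ℝ) := by
            exact_mod_cast nat_choose_le_two_pow n (n - m)
        _ ≤ (2:ℝ)^d := by
            push_cast
            exact pow_le_pow_right₀ one_le_two hdle
    calc Norm.norm (P.roots.esymm (n - m)) * r^m
        ≤ (Multiset.card (P.roots.powersetCard (n - m))) • Pmax := le_trans hmul hbound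
      _ = (n.choose (n - m) : ℝ) * Pmax := by rw [hcardpow, nsmul_eq_mul]
      _ ≤ (2:ℝ)^d * Pmax := mul_le_mul_of_nonneg_right hchoose hPmax_nonneg
  have hleadPmax : Norm.norm (a (Fin.last m)) * r^m ≤ Norm.norm P.leadingCoeff * ((2:ℝ)^d * Pmax) := by
    rw [habs_am, mul_assoc]
    exact mul_le_mul_of_nonneg_left hesymm (norm_nonneg _)
  have hκdn : κ^d ≤ κ^n := pow_le_pow_of_le_one hκ0.le hκ1 hdle
  constructor
  · rw [habsQ]
    calc κ^d * Norm.norm (a (Fin.last m)) / 2^d * r^m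
        = κ^d * (Norm.norm (a (Fin.last m)) * r^m) / 2^d := by ring
      _ ≤ κ^d * (Norm.norm P.leadingCoeff * ((2:ℝ)^d * Pmax)) / 2^d := by
          apply div_le_div_of_nonneg_right ?_ (by positivity)
          exact mul_le_mul_of_nonneg_left hleadPmax (pow_nonneg hκ0.le d)
      _ = κ^d * (Norm.norm P.leadingCoeff * Pmax) := by
          field_simp
      _ ≤ κ^n * (Norm.norm P.leadingCoeff * Pmax) := by
          apply mul_le_mul_of_nonneg_right hκdn
          exact mul_nonneg (norm_nonneg _) hPmax_nonneg
      _ = Norm.norm P.leadingCoeff * (κ^n * Pmax) := by ring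
      _ ≤ Norm.norm P.leadingCoeff * (P.roots.map fun z => Norm.norm (w - z)).prod :=
          mul_le_mul_of_nonneg_left hprod_lower (norm_nonneg _)
  · rcases eq_or_lt_of_le ht0 with ht0' | ht0'
    · rw [← ht0']
      simpa using norm_nonneg (QPot d m t a w)
    · have hcd : P.coeff d = (t:ℂ) := Ppoly_coeff_d d m hdm t a
      have htne : (t:ℂ) ≠ 0 := by exact_mod_cast ne_of_gt ht0'
      have hnd : n = d := le_antisymm hdle (le_natDegree_of_ne_zero (by rw [hcd]; exact htne))
      have hlead : Norm.norm P.leadingCoeff = t := by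
        rw [Polynomial.leadingCoeff, ← hn, hnd, hcd, Complex.norm_real, Real.norm_eq_abs, abs_of_pos ht0']
      have hPmax_r : r^d ≤ Pmax := by
        calc r^d = (P.roots.map fun _ => r).prod := by
              rw [Multiset.map_const', Multiset.prod_replicate, hcard, hnd]
          _ ≤ Pmax := multiset_prod_map_le (fun z _ => hr0.le) (fun z _ => le_max_left _ _)
      rw [habsQ, hlead]
      calc t * κ^d * r^d ≤ t * (κ^n * Pmax) := by
            rw [hnd]
            have : κ^d * r^d ≤ κ^d * Pmax := mul_le_mul_of_nonneg_left hPmax_r (pow_nonneg hκ0.le d)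
            nlinarith
        _ ≤ t * (P.roots.map fun z => Norm.norm (w - z)).prod :=
            mul_le_mul_of_nonneg_left hprod_lower ht0'.le

lemma QPot_deriv (d m : ℕ) (t : ℝ) (a : Fin (m+1) → ℂ) :
    deriv (QPot d m t a) = fun z => (t:ℂ) * ((d:ℂ) * z^(d-1))
      + ∑ j : Fin (m+1), a j * (((j:ℕ):ℂ) * z^((j:ℕ)-1)) := by
  funext z
  have h : HasDerivAt (QPot d m t a) ((t:ℂ) * ((d:ℂ) * z^(d-1))
      + ∑ j : Fin (m+1), a j * (((j:ℕ):ℂ) * z^((j:ℕ)-1))) z := by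
    unfold QPot
    exact HasDerivAt.add ((hasDerivAt_pow d z).const_mul (t:ℂ))
      (HasDerivAt.fun_sum (fun j _ => (hasDerivAt_pow (j:ℕ) z).const_mul (a j)))
  exact h.deriv

lemma QPot_deriv2 (d m : ℕ) (t : ℝ) (a : Fin (m+1) → ℂ) :
    deriv (deriv (QPot d m t a)) = fun z => (t:ℂ) * ((d:ℂ) * (((d-1:ℕ):ℂ) * z^(d-1-1)))
      + ∑ j : Fin (m+1), a j * (((j:ℕ):ℂ) * ((((j:ℕ)-1:ℕ):ℂ) * z^((j:ℕ)-1-1))) := by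
  rw [QPot_deriv]
  funext z
  have h : HasDerivAt (fun z : ℂ => (t:ℂ) * ((d:ℂ) * z^(d-1))
      + ∑ j : Fin (m+1), a j * (((j:ℕ):ℂ) * z^((j:ℕ)-1)))
      ((t:ℂ) * ((d:ℂ) * (((d-1:ℕ):ℂ) * z^(d-1-1)))
      + ∑ j : Fin (m+1), a j * (((j:ℕ):ℂ) * ((((j:ℕ)-1:ℕ):ℂ) * z^((j:ℕ)-1-1)))) z := by
    apply HasDerivAt.add
    · exact ((hasDerivAt_pow (d-1) z).const_mul (d:ℂ)).const_mul (t:ℂ)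
    · exact HasDerivAt.fun_sum (fun j _ =>
        (((hasDerivAt_pow ((j:ℕ)-1) z).const_mul ((j:ℕ):ℂ)).const_mul (a j)))
  exact h.deriv

lemma QPot_deriv_bound (d m : ℕ) (hm : 1 ≤ m) (hdm : m < d)
    (t : ℝ) (ht0 : 0 ≤ t) (a : Fin (m+1) → ℂ) (A : ℝ)
    (hA : ∀ j, Norm.norm (a j) ≤ A)
    (r : ℝ) (hr1 : 1 ≤ r) (w : ℂ) (hw : Norm.norm w = r) :
    Norm.norm (deriv (QPot d m t a) w) * r
      ≤ t*d*r^d + ((m+1)*m*A)*r^m := by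
  have hr0 : (0:ℝ) < r := lt_of_lt_of_le one_pos hr1
  have hA0 : 0 ≤ A := le_trans (norm_nonneg _) (hA 0)
  rw [QPot_deriv]
  have h1 : Norm.norm ((t:ℂ) * ((d:ℂ) * w^(d-1))) = t * d * r^(d-1) := by
    simp only [norm_mul, Complex.norm_real, Real.norm_eq_abs, Complex.norm_natCast, norm_pow, hw,
      _root_.abs_of_nonneg ht0]
    ring
  have h2 : Norm.norm (∑ j : Fin (m+1), a j * (((j:ℕ):ℂ) * w^((j:ℕ)-1)))
      ≤ (m+1) * (m * A * r^(m-1)) := by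
    calc Norm.norm (∑ j : Fin (m+1), a j * (((j:ℕ):ℂ) * w^((j:ℕ)-1)))
        ≤ ∑ j : Fin (m+1), Norm.norm (a j * (((j:ℕ):ℂ) * w^((j:ℕ)-1))) := by
          simpa using
            norm_sum_le Finset.univ (fun j : Fin (m+1) => a j * (((j:ℕ):ℂ) * w^((j:ℕ)-1)))
      _ ≤ ∑ _j : Fin (m+1), m * A * r^(m-1) := by
          apply Finset.sum_le_sum
          intro j _
          simp only [norm_mul, Complex.norm_natCast, norm_pow, hw]
          rcases Nat.eq_zero_or_pos (j:ℕ) with hj | hj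
          · rw [hj]; simp; positivity
          · have hjm : (j:ℕ) ≤ m := Nat.lt_succ_iff.mp j.isLt
            have : r^((j:ℕ)-1) ≤ r^(m-1) := pow_le_pow_right₀ hr1 (by omega)
            have hja : (((j:ℕ)):ℝ) ≤ (m:ℝ) := by exact_mod_cast hjm
            have := hA j
            have h0 : (0:ℝ) ≤ ((j:ℕ):ℝ) := Nat.cast_nonneg _
            have hrp : (0:ℝ) ≤ r^((j:ℕ)-1) := by positivity
            calc Norm.norm (a j) * (((j:ℕ):ℝ) * r^((j:ℕ)-1))
                ≤ A * (((j:ℕ):ℝ) * r^((j:ℕ)-1)) := by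
                  apply mul_le_mul_of_nonneg_right (hA j) (by positivity)
              _ ≤ A * ((m:ℝ) * r^(m-1)) := by
                  apply mul_le_mul_of_nonneg_left ?_ hA0
                  exact mul_le_mul hja ‹r^((j:ℕ)-1) ≤ r^(m-1)› hrp (Nat.cast_nonneg _)
              _ = m * A * r^(m-1) := by ring
      _ = (m+1) * (m * A * r^(m-1)) := by
          rw [Finset.sum_const, Finset.card_univ, Fintype.card_fin, nsmul_eq_mul]
          push_cast; ring
  have hd1 : r^(d-1) * r = r^d := by
    rw [← pow_succ, Nat.sub_add_cancel (by omega)]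
  have hm1 : r^(m-1) * r = r^m := by
    rw [← pow_succ, Nat.sub_add_cancel hm]
  calc Norm.norm ((t:ℂ) * ((d:ℂ) * w^(d-1))
        + ∑ j : Fin (m+1), a j * (((j:ℕ):ℂ) * w^((j:ℕ)-1))) * r
      ≤ (t * d * r^(d-1) + (m+1) * (m * A * r^(m-1))) * r := by
        apply mul_le_mul_of_nonneg_right ?_ hr0.le
        calc _ ≤ Norm.norm ((t:ℂ) * ((d:ℂ) * w^(d-1)))
              + Norm.norm (∑ j : Fin (m+1), a j * (((j:ℕ):ℂ) * w^((j:ℕ)-1))) :=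
              norm_add_le _ _
          _ ≤ _ := by rw [h1]; linarith
    _ = t*d*(r^(d-1)*r) + ((m+1)*m*A)*(r^(m-1)*r) := by ring
    _ = t*d*r^d + ((m+1)*m*A)*r^m := by rw [hd1, hm1]

lemma QPot_deriv2_bound (d m : ℕ) (hm : 1 ≤ m) (hdm : m < d)
    (t : ℝ) (ht0 : 0 ≤ t) (a : Fin (m+1) → ℂ) (A : ℝ)
    (hA : ∀ j, Norm.norm (a j) ≤ A)
    (r : ℝ) (hr1 : 1 ≤ r) (w : ℂ) (hw : Norm.norm w = r) :
    Norm.norm (deriv (deriv (QPot d m t a)) w) * r^2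
      ≤ t*d*d*r^d + ((m+1)*m*m*A)*r^m := by
  have hr0 : (0:ℝ) < r := lt_of_lt_of_le one_pos hr1
  have hA0 : 0 ≤ A := le_trans (norm_nonneg _) (hA 0)
  rw [QPot_deriv2]
  have hd2 : r^(d-1-1) * r^2 = r^d := by
    rw [← pow_add]; congr 1; omega
  have h1 : Norm.norm ((t:ℂ) * ((d:ℂ) * (((d-1:ℕ):ℂ) * w^(d-1-1)))) * r^2
      ≤ t * d * d * r^d := by
    simp only [norm_mul, Complex.norm_real, Real.norm_eq_abs, Complex.norm_natCast, norm_pow, hw,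
      _root_.abs_of_nonneg ht0]
    have : ((d-1:ℕ):ℝ) ≤ (d:ℝ) := by exact_mod_cast Nat.sub_le d 1
    calc t * ((d:ℝ) * (((d-1:ℕ):ℝ) * r^(d-1-1))) * r^2
        = t * (d:ℝ) * ((d-1:ℕ):ℝ) * (r^(d-1-1) * r^2) := by ring
      _ ≤ t * (d:ℝ) * (d:ℝ) * (r^(d-1-1) * r^2) := by
          apply mul_le_mul_of_nonneg_right ?_ (by positivity)
          apply mul_le_mul_of_nonneg_left this (by positivity)
      _ = t * d * d * r^d := by rw [hd2]
  have h2 : ∀ j : Fin (m+1),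
      Norm.norm (a j * (((j:ℕ):ℂ) * ((((j:ℕ)-1:ℕ):ℂ) * w^((j:ℕ)-1-1)))) * r^2
        ≤ m * m * A * r^m := by
    intro j
    rcases le_or_gt (j:ℕ) 1 with hj | hj
    · have : (((j:ℕ)-1:ℕ):ℂ) = 0 := by
        norm_cast
        omega
      rw [this]
      simp
      positivity
    · have hjm : (j:ℕ) ≤ m := Nat.lt_succ_iff.mp j.isLt
      have hjd : r^((j:ℕ)-1-1) * r^2 = r^(j:ℕ) := by
        rw [← pow_add]; congr 1; omega
      simp only [norm_mul, Complex.norm_natCast, norm_pow, hw]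
      have e1 : (((j:ℕ)):ℝ) ≤ (m:ℝ) := by exact_mod_cast hjm
      have e2 : ((((j:ℕ)-1:ℕ)):ℝ) ≤ (m:ℝ) := by
        have : ((j:ℕ)-1:ℕ) ≤ m := by omega
        exact_mod_cast this
      have e3 : r^((j:ℕ)) ≤ r^m := pow_le_pow_right₀ hr1 hjm
      calc Norm.norm (a j) * (((j:ℕ):ℝ) * (((((j:ℕ)-1:ℕ)):ℝ) * r^((j:ℕ)-1-1))) * r^2
          = Norm.norm (a j) * ((j:ℕ):ℝ) * ((((j:ℕ)-1:ℕ)):ℝ) * (r^((j:ℕ)-1-1) * r^2) := by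
            ring
        _ ≤ A * (m:ℝ) * (m:ℝ) * r^m := by
            rw [hjd]
            apply mul_le_mul ?_ e3 (by positivity) (by positivity)
            apply mul_le_mul ?_ e2 (by positivity) (by positivity)
            exact mul_le_mul (hA j) e1 (by positivity) hA0
        _ = m * m * A * r^m := by ring
  calc Norm.norm ((t:ℂ) * ((d:ℂ) * (((d-1:ℕ):ℂ) * w^(d-1-1)))
        + ∑ j : Fin (m+1), a j * (((j:ℕ):ℂ) * ((((j:ℕ)-1:ℕ):ℂ) * w^((j:ℕ)-1-1)))) * r^2
      ≤ Norm.norm ((t:ℂ) * ((d:ℂ) * (((d-1:ℕ):ℂ) * w^(d-1-1)))) * r^2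
        + (∑ j : Fin (m+1), Norm.norm (a j * (((j:ℕ):ℂ) * ((((j:ℕ)-1:ℕ):ℂ) * w^((j:ℕ)-1-1))))) * r^2 := by
        have := norm_add_le ((t:ℂ) * ((d:ℂ) * (((d-1:ℕ):ℂ) * w^(d-1-1))))
          (∑ j : Fin (m+1), a j * (((j:ℕ):ℂ) * ((((j:ℕ)-1:ℕ):ℂ) * w^((j:ℕ)-1-1))))
        have hsum := norm_sum_le Finset.univ
          (fun j : Fin (m+1) => a j * (((j:ℕ):ℂ) * ((((j:ℕ)-1:ℕ):ℂ) * w^((j:ℕ)-1-1))))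
        nlinarith [sq_nonneg r, hr0]
    _ ≤ t * d * d * r^d + (∑ _j : Fin (m+1), m * m * A * r^m) := by
        have : (∑ j : Fin (m+1), Norm.norm (a j * (((j:ℕ):ℂ) * ((((j:ℕ)-1:ℕ):ℂ) * w^((j:ℕ)-1-1))))) * r^2
            = ∑ j : Fin (m+1), Norm.norm (a j * (((j:ℕ):ℂ) * ((((j:ℕ)-1:ℕ):ℂ) * w^((j:ℕ)-1-1)))) * r^2 := by
          rw [Finset.sum_mul]
        rw [this]
        exact add_le_add h1 (Finset.sum_le_sum (fun j _ => h2 j))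
    _ = t*d*d*r^d + ((m+1)*m*m*A)*r^m := by
        rw [Finset.sum_const, Finset.card_univ, Fintype.card_fin, nsmul_eq_mul]
        push_cast; ring

end AuxLemmas

set_option maxHeartbeats 1000000 in

/-- Uniform estimate of the integral controlling the error term in the Liouville
transformation: there is `b > R` such that along the ray `{r e^{iθ} : r ≥ b}` the potential
has no zeros and
`∫_b^∞ |(5/16)(Q'/Q)² − (1/4)Q''/Q| · |Q|^{-1/2} dr < 1/2` for all `(t,a) ∈ [0,1] × K`. -/
theorem uniform_integral_bound
    (d m : ℕ) (hm : 1 ≤ m) (hdm : m < d)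
    (K : Set (Fin (m + 1) → ℂ)) (hK : IsCompact K)
    (hKm : ∀ a ∈ K, a (Fin.last m) ≠ 0)
    (θ δ R : ℝ) (hδ : 0 < δ) (hR : 0 < R)
    (hroots : ∀ t ∈ Set.Icc (0 : ℝ) 1, ∀ a ∈ K, ∀ z : ℂ,
      QPot d m t a z = 0 → R < Norm.norm z →
      ¬ ∃ ρ φ : ℝ, ∃ k : ℤ, 0 < ρ ∧ |φ - θ - 2 * Real.pi * (k : ℝ)| < δ ∧
        z = (ρ : ℂ) * Complex.exp ((φ : ℂ) * Complex.I)) :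
    ∃ b : ℝ, R < b ∧ ∀ t ∈ Set.Icc (0 : ℝ) 1, ∀ a ∈ K,
      (∀ r : ℝ, b ≤ r →
        QPot d m t a ((r : ℂ) * Complex.exp ((θ : ℂ) * Complex.I)) ≠ 0) ∧
      (∫⁻ r in Set.Ioi b, ENNReal.ofReal
          (Norm.norm
            ((5 / 16) * (deriv (QPot d m t a) ((r : ℂ) * Complex.exp ((θ : ℂ) * Complex.I)) /
                QPot d m t a ((r : ℂ) * Complex.exp ((θ : ℂ) * Complex.I))) ^ 2 -
             (1 / 4) * deriv (deriv (QPot d m t a))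
                ((r : ℂ) * Complex.exp ((θ : ℂ) * Complex.I)) /
                QPot d m t a ((r : ℂ) * Complex.exp ((θ : ℂ) * Complex.I))) *
            (Norm.norm (QPot d m t a ((r : ℂ) * Complex.exp ((θ : ℂ) * Complex.I))))
              ^ (-(1 / 2 : ℝ))))
        < ENNReal.ofReal (1 / 2) := by
  
  classical
  have hπ := Real.pi_pos
  set δ' : ℝ := min δ (Real.pi/2) with hδ'def
  have hδ'1 : 0 < δ' := lt_min hδ (by linarith)
  have hδ'2 : δ' ≤ Real.pi/2 := min_le_right _ _
  set κ : ℝ := min (Real.sin δ') (1/2) with hκdef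
  have hsin : 0 < Real.sin δ' := Real.sin_pos_of_pos_of_lt_pi hδ'1 (by linarith)
  have hκ0 : 0 < κ := lt_min hsin (by norm_num)
  rcases K.eq_empty_or_nonempty with hKe | hKne
  · exact ⟨R+1, by linarith, fun t ht a ha => by rw [hKe] at ha; exact absurd ha (Set.notMem_empty a)⟩
  obtain ⟨a₀, ha₀K, ha₀min⟩ := hK.exists_isMinOn hKne
    (Continuous.continuousOn ((continuous_apply (Fin.last m)).norm))
  set c₀ : ℝ := ‖a₀ (Fin.last m)‖ with hc₀
  have hc₀0 : 0 < c₀ := norm_pos_iff.2 (hKm a₀ ha₀K)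
  have hc₀le : ∀ a ∈ K, c₀ ≤ Norm.norm (a (Fin.last m)) := fun a ha => ha₀min ha
  obtain ⟨A₀, hA₀⟩ := hK.isBounded.exists_norm_le
  set A : ℝ := max A₀ 0 with hAdef
  have hA : ∀ a ∈ K, ∀ j, Norm.norm (a j) ≤ A := by
    intro a ha j
    calc Norm.norm (a j) = ‖a j‖ := rfl
      _ ≤ ‖a‖ := norm_le_pi_norm a j
      _ ≤ A₀ := hA₀ a ha
      _ ≤ A := le_max_left _ _
  have hA0 : 0 ≤ A := le_max_right _ _
  set c₂ : ℝ := κ^d * c₀ / 2^d with hc₂def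
  have hc₂0 : 0 < c₂ := by positivity
  set C₁ : ℝ := d/κ^d + (m+1)*m*A/c₂ with hC₁def
  set C₂ : ℝ := d*d/κ^d + (m+1)*m*m*A/c₂ with hC₂def
  have hC₁0 : 0 ≤ C₁ := by positivity
  have hC₂0 : 0 ≤ C₂ := by positivity
  set C₃ : ℝ := ((5/16) * C₁^2 + (1/4) * C₂) * c₂^(-(1/2:ℝ)) with hC₃def
  have hC₃0 : 0 ≤ C₃ := by positivity
  set b : ℝ := max (max (2*R) (R+1)) (max 1 (4*C₃/3 + 1)) with hbdef
  have hb2R : 2*R ≤ b := le_trans (le_max_left (2*R) (R+1)) (le_max_left _ _)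
  have hbR : R < b := lt_of_lt_of_le (by linarith) (le_trans (le_max_right (2*R) (R+1)) (le_max_left _ _))
  have hb1 : 1 ≤ b := le_trans (le_max_left 1 (4*C₃/3+1)) (le_max_right _ _)
  have hbC : 4*C₃/3 + 1 ≤ b := le_trans (le_max_right 1 (4*C₃/3+1)) (le_max_right _ _)
  have hb0 : 0 < b := lt_of_lt_of_le one_pos hb1
  refine ⟨b, hbR, ?_⟩
  intro t ht a haK
  have hroots' : ∀ z : ℂ, QPot d m t a z = 0 → R < Norm.norm z →
      ∀ k : ℤ, δ' ≤ |Complex.arg z - θ - 2*Real.pi*k| := by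
    intro z hz hzR k
    by_contra hlt
    push_neg at hlt
    apply hroots t ht a haK z hz hzR
    exact ⟨Norm.norm z, Complex.arg z, k, by linarith,
      lt_of_lt_of_le hlt (min_le_left _ _), (Complex.norm_mul_exp_arg_mul_I z).symm⟩
  have hlow : ∀ r : ℝ, b ≤ r →
      c₂ * r^m ≤ Norm.norm (QPot d m t a ((r:ℂ)*Complex.exp ((θ:ℂ)*Complex.I)))
      ∧ t * κ^d * r^d ≤ Norm.norm (QPot d m t a ((r:ℂ)*Complex.exp ((θ:ℂ)*Complex.I))) := by
    intro r hr
    have h := QPot_lower d m hm hdm t ht.1 a (hKm a haK) θ δ' R r hδ'1 hδ'2 hR hroots'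
      (le_trans hb1 hr) (le_trans hb2R hr)
    have hr0 : (0:ℝ) < r := lt_of_lt_of_le hb0 hr
    refine ⟨le_trans ?_ h.1, h.2⟩
    apply mul_le_mul_of_nonneg_right ?_ (by positivity)
    rw [hc₂def]
    apply div_le_div_of_nonneg_right ?_ (by positivity)
    exact mul_le_mul_of_nonneg_left (hc₀le a haK) (by positivity)
  have hQne : ∀ r : ℝ, b ≤ r →
      QPot d m t a ((r:ℂ)*Complex.exp ((θ:ℂ)*Complex.I)) ≠ 0 := by
    intro r hr h0
    have h1 := (hlow r hr).1
    rw [h0] at h1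
    simp only [norm_zero] at h1
    have hr0 : 0 < r := lt_of_lt_of_le hb0 hr
    have h2 := mul_pos hc₂0 (pow_pos hr0 m)
    linarith
  refine ⟨hQne, ?_⟩
  -- pointwise bound
  have hpt : ∀ r : ℝ, r ∈ Set.Ioi b →
      Norm.norm
            ((5 / 16) * (deriv (QPot d m t a) ((r : ℂ) * Complex.exp ((θ : ℂ) * Complex.I)) /
                QPot d m t a ((r : ℂ) * Complex.exp ((θ : ℂ) * Complex.I))) ^ 2 -
             (1 / 4) * deriv (deriv (QPot d m t a))
                ((r : ℂ) * Complex.exp ((θ : ℂ) * Complex.I)) /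
                QPot d m t a ((r : ℂ) * Complex.exp ((θ : ℂ) * Complex.I))) *
            (Norm.norm (QPot d m t a ((r : ℂ) * Complex.exp ((θ : ℂ) * Complex.I))))
              ^ (-(1 / 2 : ℝ))
        ≤ C₃ * r^(-(5/2):ℝ) := by
    intro r hr
    rw [Set.mem_Ioi] at hr
    have hrb : b ≤ r := hr.le
    have hr1 : 1 ≤ r := le_trans hb1 hrb
    have hr0 : 0 < r := lt_of_lt_of_le hb0 hrb
    set w : ℂ := (r:ℂ) * Complex.exp ((θ:ℂ)*Complex.I) with hwdef
    have hwabs : Norm.norm w = r := by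
      rw [hwdef, norm_mul, Complex.norm_exp_ofReal_mul_I, mul_one, Complex.norm_real, Real.norm_eq_abs,
        _root_.abs_of_pos hr0]
    set q : ℝ := Norm.norm (QPot d m t a w) with hqdef
    have hql := hlow r hrb
    have hq0 : 0 < q := lt_of_lt_of_le (by positivity) hql.1
    have hd1 := QPot_deriv_bound d m hm hdm t ht.1 a A (hA a haK) r hr1 w hwabs
    have hd2 := QPot_deriv2_bound d m hm hdm t ht.1 a A (hA a haK) r hr1 w hwabs
    have key1 : t*d*r^d ≤ (d/κ^d) * q := by
      have : (d/κ^d) * (t * κ^d * r^d) = t*d*r^d := by field_simp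
      rw [← this]
      exact mul_le_mul_of_nonneg_left hql.2 (by positivity)
    have key1' : t*d*d*r^d ≤ (d*d/κ^d) * q := by
      have : (d*d/κ^d) * (t * κ^d * r^d) = t*d*d*r^d := by field_simp
      rw [← this]
      exact mul_le_mul_of_nonneg_left hql.2 (by positivity)
    have key2 : ((m+1)*m*A)*r^m ≤ ((m+1)*m*A/c₂) * q := by
      have : ((m+1)*m*A/c₂) * (c₂ * r^m) = ((m+1)*m*A)*r^m := by field_simp
      rw [← this]
      exact mul_le_mul_of_nonneg_left hql.1 (by positivity)
    have key2' : ((m+1)*m*m*A)*r^m ≤ ((m+1)*m*m*A/c₂) * q := by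
      have : ((m+1)*m*m*A/c₂) * (c₂ * r^m) = ((m+1)*m*m*A)*r^m := by field_simp
      rw [← this]
      exact mul_le_mul_of_nonneg_left hql.1 (by positivity)
    have hX : Norm.norm (deriv (QPot d m t a) w / QPot d m t a w) ≤ C₁ / r := by
      rw [norm_div, ← hqdef]
      rw [div_le_div_iff₀ hq0 hr0]
      calc Norm.norm (deriv (QPot d m t a) w) * r ≤ t*d*r^d + ((m+1)*m*A)*r^m := hd1
        _ ≤ (d/κ^d) * q + ((m+1)*m*A/c₂) * q := add_le_add key1 key2
        _ = C₁ * q := by rw [hC₁def]; ring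
    have hY : Norm.norm (deriv (deriv (QPot d m t a)) w / QPot d m t a w) ≤ C₂ / r^2 := by
      rw [norm_div, ← hqdef]
      rw [div_le_div_iff₀ hq0 (by positivity)]
      calc Norm.norm (deriv (deriv (QPot d m t a)) w) * r^2
          ≤ t*d*d*r^d + ((m+1)*m*m*A)*r^m := hd2
        _ ≤ (d*d/κ^d) * q + ((m+1)*m*m*A/c₂) * q := add_le_add key1' key2'
        _ = C₂ * q := by rw [hC₂def]; ring
    have hn516 : ‖(5/16:ℂ)‖ = 5/16 := by
      rw [show (5/16:ℂ) = ((5/16:ℝ):ℂ) by norm_num, Complex.norm_real]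
      norm_num
    have hn14 : ‖(1/4:ℂ)‖ = 1/4 := by
      rw [show (1/4:ℂ) = ((1/4:ℝ):ℂ) by norm_num, Complex.norm_real]
      norm_num
    have habs1 : Norm.norm
        ((5 / 16) * (deriv (QPot d m t a) w / QPot d m t a w) ^ 2 -
         (1 / 4) * deriv (deriv (QPot d m t a)) w / QPot d m t a w)
        ≤ ((5/16) * C₁^2 + (1/4) * C₂) / r^2 := by
      have step1 : ‖(5 / 16 : ℂ) * (deriv (QPot d m t a) w / QPot d m t a w) ^ 2 -
          (1 / 4 : ℂ) * deriv (deriv (QPot d m t a)) w / QPot d m t a w‖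
          ≤ ‖(5 / 16 : ℂ) * (deriv (QPot d m t a) w / QPot d m t a w) ^ 2‖
            + ‖(1 / 4 : ℂ) * deriv (deriv (QPot d m t a)) w / QPot d m t a w‖ :=
        norm_sub_le _ _
      have step2 : ‖(5 / 16 : ℂ) * (deriv (QPot d m t a) w / QPot d m t a w) ^ 2‖
          = (5/16) * (Norm.norm (deriv (QPot d m t a) w / QPot d m t a w))^2 := by
        rw [norm_mul, norm_pow, hn516]
      have step3 : ‖(1 / 4 : ℂ) * deriv (deriv (QPot d m t a)) w / QPot d m t a w‖
          = (1/4) * Norm.norm (deriv (deriv (QPot d m t a)) w / QPot d m t a w) := by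
        rw [mul_div_assoc, norm_mul, hn14]
      have h1 : (Norm.norm (deriv (QPot d m t a) w / QPot d m t a w))^2 ≤ (C₁/r)^2 :=
        pow_le_pow_left₀ (norm_nonneg _) hX 2
      have e1 : (5/16:ℝ) * (Norm.norm (deriv (QPot d m t a) w / QPot d m t a w))^2
          ≤ (5/16) * (C₁/r)^2 := by
        apply mul_le_mul_of_nonneg_left h1 (by norm_num)
      have e2 : (1/4:ℝ) * Norm.norm (deriv (deriv (QPot d m t a)) w / QPot d m t a w)
          ≤ (1/4) * (C₂/r^2) := by
        apply mul_le_mul_of_nonneg_left hY (by norm_num)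
      have efin : (5/16:ℝ) * (C₁/r)^2 + (1/4) * (C₂/r^2)
          = ((5/16) * C₁^2 + (1/4) * C₂) / r^2 := by
        field_simp
      rw [step2, step3] at step1
      linarith
    have habs2 : q ^ (-(1 / 2 : ℝ)) ≤ c₂^(-(1/2:ℝ)) * r^(-(1/2):ℝ) := by
      have hc2r : c₂ * r ≤ q := by
        calc c₂ * r ≤ c₂ * r^m := by
              apply mul_le_mul_of_nonneg_left ?_ hc₂0.le
              calc r = r^1 := (pow_one r).symm
                _ ≤ r^m := pow_le_pow_right₀ hr1 hm
          _ ≤ q := hql.1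
      calc q ^ (-(1 / 2 : ℝ)) ≤ (c₂ * r) ^ (-(1/2:ℝ)) :=
            Real.rpow_le_rpow_of_nonpos (by positivity) hc2r (by norm_num)
        _ = c₂^(-(1/2:ℝ)) * r^(-(1/2):ℝ) := Real.mul_rpow hc₂0.le hr0.le
    calc Norm.norm ((5 / 16) * (deriv (QPot d m t a) w / QPot d m t a w) ^ 2 -
            (1 / 4) * deriv (deriv (QPot d m t a)) w / QPot d m t a w) * q ^ (-(1 / 2 : ℝ))
        ≤ (((5/16) * C₁^2 + (1/4) * C₂) / r^2) * (c₂^(-(1/2:ℝ)) * r^(-(1/2):ℝ)) := by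
          apply mul_le_mul habs1 habs2 (Real.rpow_nonneg hq0.le _) (by positivity)
      _ = C₃ * (r^(-(2:ℝ)) * r^(-(1/2):ℝ)) := by
          rw [hC₃def]
          have : r^(-(2:ℝ)) = 1/r^2 := by
            rw [Real.rpow_neg hr0.le, ← Real.rpow_natCast r 2]
            norm_num
          rw [this]
          ring
      _ = C₃ * r^(-(5/2):ℝ) := by
          rw [← Real.rpow_add hr0]
          norm_num
  have hmono : (∫⁻ r in Set.Ioi b, ENNReal.ofReal
          (Norm.norm
            ((5 / 16) * (deriv (QPot d m t a) ((r : ℂ) * Complex.exp ((θ : ℂ) * Complex.I)) /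
                QPot d m t a ((r : ℂ) * Complex.exp ((θ : ℂ) * Complex.I))) ^ 2 -
             (1 / 4) * deriv (deriv (QPot d m t a))
                ((r : ℂ) * Complex.exp ((θ : ℂ) * Complex.I)) /
                QPot d m t a ((r : ℂ) * Complex.exp ((θ : ℂ) * Complex.I))) *
            (Norm.norm (QPot d m t a ((r : ℂ) * Complex.exp ((θ : ℂ) * Complex.I))))
              ^ (-(1 / 2 : ℝ))))
      ≤ ∫⁻ r in Set.Ioi b, ENNReal.ofReal (C₃ * r^(-(5/2):ℝ)) :=
    setLIntegral_mono' measurableSet_Ioi (fun r hr => ENNReal.ofReal_le_ofReal (hpt r hr))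
  have hint : IntegrableOn (fun r : ℝ => C₃ * r^(-(5/2):ℝ)) (Set.Ioi b) :=
    (integrableOn_Ioi_rpow_of_lt (by norm_num) hb0).const_mul C₃
  have hnn : 0 ≤ᵐ[volume.restrict (Set.Ioi b)] fun r : ℝ => C₃ * r^(-(5/2):ℝ) :=
    (ae_restrict_iff' measurableSet_Ioi).2 (ae_of_all _
      (fun r hr => mul_nonneg hC₃0 (Real.rpow_nonneg (le_of_lt (lt_trans hb0 hr)) _)))
  have heq : (∫⁻ r in Set.Ioi b, ENNReal.ofReal (C₃ * r^(-(5/2):ℝ)))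
      = ENNReal.ofReal (∫ r in Set.Ioi b, C₃ * r^(-(5/2):ℝ)) :=
    (MeasureTheory.ofReal_integral_eq_lintegral_ofReal hint hnn).symm
  have hval : (∫ r in Set.Ioi b, C₃ * r^(-(5/2):ℝ)) = C₃ * ((2/3) * b^(-(3/2):ℝ)) := by
    rw [MeasureTheory.integral_const_mul, integral_Ioi_rpow_of_lt (by norm_num) hb0]
    congr 1
    rw [show (-(5/2:ℝ)+1) = -(3/2:ℝ) by norm_num]
    ring
  have hfin : C₃ * ((2/3) * b^(-(3/2):ℝ)) < 1/2 := by
    have h1 : b^(-(3/2):ℝ) ≤ b^(-(1:ℝ)) :=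
      Real.rpow_le_rpow_of_exponent_le hb1 (by norm_num)
    have h2 : b^(-(1:ℝ)) = 1/b := by
      rw [Real.rpow_neg hb0.le, Real.rpow_one]
      norm_num
    have h3 : C₃ * ((2/3) * b^(-(3/2):ℝ)) ≤ C₃ * ((2/3) * (1/b)) := by
      apply mul_le_mul_of_nonneg_left ?_ hC₃0
      rw [← h2]
      linarith
    have h4 : C₃ * ((2/3) * (1/b)) < 1/2 := by
      have he : C₃ * ((2/3) * (1/b)) = (2*C₃/3)/b := by
        field_simp
      rw [he, div_lt_iff₀ hb0]
      linarith
    linarith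
  calc _ ≤ ∫⁻ r in Set.Ioi b, ENNReal.ofReal (C₃ * r^(-(5/2):ℝ)) := hmono
    _ = ENNReal.ofReal (C₃ * ((2/3) * b^(-(3/2):ℝ))) := by rw [heq, hval]
    _ < ENNReal.ofReal (1/2) := (ENNReal.ofReal_lt_ofReal_iff (by norm_num)).2 hfin
end

section
/- Let d > m ≥ 1 be integers, t, c ∈ ℂ \ {0}, and Q(z) = t·z^d + c·z^m. If θ ∈ ℝ is such that t·e^{i(d+2)θ} is a positive real number (L(θ) is an anti-Stokes ray of t z^d) and c·e^{i(m+2)θ} is not a negative real number (L(θ) is not a Stokes line of c z^m), then θ is a good ray for Q. -/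
open Complex

/-- The direction `θ` (i.e. the ray `L(θ) = {r e^{iθ} : r > 0}`) is a *good ray* for the
binomial `Q(z) = t z^d + c z^m`:
(i) `L(θ)` is not a Stokes line of `t z^d dz²`;
(ii) `L(θ)` is not a Stokes line of `c z^m dz²`;
(iii) `L(θ)` contains no turning point of `Q`;
(iv) `L(θ)` is not tangent to any vertical trajectory of `Q(z)dz²`. -/
def GoodRay (d m : ℕ) (t c : ℂ) (θ : ℝ) : Prop :=
  (¬ ∃ x : ℝ, x < 0 ∧ t * Complex.exp ((((d : ℝ) + 2) * θ : ℂ) * Complex.I) = (x : ℂ)) ∧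
  (¬ ∃ x : ℝ, x < 0 ∧ c * Complex.exp ((((m : ℝ) + 2) * θ : ℂ) * Complex.I) = (x : ℂ)) ∧
  (∀ r : ℝ, 0 < r →
    t * ((r : ℂ) * Complex.exp ((θ : ℂ) * Complex.I)) ^ d +
      c * ((r : ℂ) * Complex.exp ((θ : ℂ) * Complex.I)) ^ m ≠ 0) ∧
  (∀ r : ℝ, 0 < r → ¬ ∃ x : ℝ, x ≤ 0 ∧
    ((r : ℂ) * Complex.exp ((θ : ℂ) * Complex.I)) ^ 2 *
      (t * ((r : ℂ) * Complex.exp ((θ : ℂ) * Complex.I)) ^ d +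
       c * ((r : ℂ) * Complex.exp ((θ : ℂ) * Complex.I)) ^ m) = (x : ℂ))

lemma exp_aux (n : ℕ) (θ : ℝ) :
    Complex.exp ((((n : ℝ) + 2) * θ : ℂ) * Complex.I)
      = Complex.exp ((θ : ℂ) * Complex.I) ^ (n + 2) := by
  rw [← Complex.exp_nat_mul]
  congr 1
  push_cast
  ring

/-- An anti-Stokes ray of `t z^d` that is not a Stokes line of `c z^m` is a good ray
for `Q = t z^d + c z^m`. -/
theorem antiStokes_ray_is_good
    (d m : ℕ) (hm : 1 ≤ m) (hdm : m < d)
    (t c : ℂ) (ht : t ≠ 0) (hc : c ≠ 0) (θ : ℝ)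
    (hanti : ∃ x : ℝ, 0 < x ∧
      t * Complex.exp ((((d : ℝ) + 2) * θ : ℂ) * Complex.I) = (x : ℂ))
    (hnotStokes : ¬ ∃ x : ℝ, x < 0 ∧
      c * Complex.exp ((((m : ℝ) + 2) * θ : ℂ) * Complex.I) = (x : ℂ)) :
    GoodRay d m t c θ := by
  obtain ⟨a, ha, hta⟩ := hanti
  set E : ℂ := Complex.exp ((θ : ℂ) * Complex.I) with hE
  rw [exp_aux] at hta
  rw [exp_aux] at hnotStokes
  -- main computation
  have key : ∀ r : ℝ, 0 < r → ∀ x : ℝ, x ≤ 0 →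
      ((r : ℂ) * E) ^ 2 * (t * ((r : ℂ) * E) ^ d + c * ((r : ℂ) * E) ^ m) ≠ (x : ℂ) := by
    intro r hr x hx heq
    apply hnotStokes
    refine ⟨(x - a * r ^ (d + 2)) / r ^ (m + 2), ?_, ?_⟩
    · apply div_neg_of_neg_of_pos
      · nlinarith [pow_pos hr (d + 2), pow_pos hr (m + 2)]
      · positivity
    · have hrm : ((r : ℂ)) ^ (m + 2) ≠ 0 :=
        pow_ne_zero _ (Complex.ofReal_ne_zero.mpr hr.ne')
      have h1 : (x : ℂ) = a * (r : ℂ) ^ (d + 2) + c * E ^ (m + 2) * (r : ℂ) ^ (m + 2) := by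
        rw [← heq]
        have : t * E ^ (d + 2) = (a : ℂ) := hta
        calc ((r : ℂ) * E) ^ 2 * (t * ((r : ℂ) * E) ^ d + c * ((r : ℂ) * E) ^ m)
            = (t * E ^ (d + 2)) * (r : ℂ) ^ (d + 2)
              + c * E ^ (m + 2) * (r : ℂ) ^ (m + 2) := by ring
          _ = _ := by rw [this]
      push_cast
      rw [eq_div_iff hrm]
      linear_combination -h1
  refine ⟨?_, ?_, ?_, ?_⟩
  · rintro ⟨x, hx, hxe⟩
    rw [exp_aux] at hxe
    rw [hta] at hxe
    have : (a : ℂ) = (x : ℂ) := hxe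
    have := Complex.ofReal_inj.mp this
    linarith
  · rintro ⟨x, hx, he⟩
    exact hnotStokes ⟨x, hx, by rwa [exp_aux] at he⟩
  · intro r hr h0
    exact key r hr 0 le_rfl (by rw [h0]; simp)
  · intro r hr ⟨x, hx, hxe⟩
    exact key r hr x hx hxe
end

section
/- Let d > m ≥ 1 be integers, t, c ∈ ℂ \ {0}, and Q(z) = t·z^d + c·z^m. (Forward direction) Suppose θ₁ < θ₀ < θ₂ are real numbers with t·e^{i(d+2)θ₀} a positive real number, and suppose that for every θ ∈ (θ₁,θ₂): t·e^{i(d+2)θ} ∉ (−∞,0), c·e^{i(m+2)θ} ∉ (−∞,0), and (−c/t)·e^{−i(d−m)θ} ∉ (0,∞). Then every θ ∈ (θ₁,θ₂) is a good ray for Q. (Converse) If θ is a good ray for Q, then there exist θ₁ < θ₂ with θ ∈ (θ₁,θ₂) and some θ₀ ∈ (θ₁,θ₂) with t·e^{i(d+2)θ₀} ∈ (0,∞), such that for every φ ∈ (θ₁,θ₂): t·e^{i(d+2)φ} ∉ (−∞,0), c·e^{i(m+2)φ} ∉ (−∞,0), and (−c/t)·e^{−i(d−m)φ} ∉ (0,∞).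 (Every sector of the partition determined by the Stokes lines of the two monomials and the rays through turning points that contains an anti-Stokes ray of t z^d is good, and every good ray lies in such a sector.) -/
open Complex


lemma exp_odd_pi (k : ℤ) :
    Complex.exp ((((2 * (k:ℝ) + 1) * Real.pi : ℝ) : ℂ) * Complex.I) = -1 := by
  have h : ((((2 * (k:ℝ) + 1) * Real.pi : ℝ) : ℂ) * Complex.I)
      = (k:ℂ) * (2 * (Real.pi:ℂ) * Complex.I) + (Real.pi:ℂ) * Complex.I := by
    push_cast; ring
  rw [h, Complex.exp_add, Complex.exp_int_mul_two_pi_mul_I, Complex.exp_pi_mul_I]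
  ring

lemma L1 {R x u : ℝ} (hR : 0 < R) (hx : x < 0)
    (h : (R:ℂ) * Complex.exp ((u:ℂ) * Complex.I) = (x:ℂ)) :
    ∃ k : ℤ, u = (2 * (k:ℝ) + 1) * Real.pi := by
  have habs : ‖(R:ℂ) * Complex.exp ((u:ℂ) * Complex.I)‖ = R := by
    rw [norm_mul, Complex.norm_exp_ofReal_mul_I, Complex.norm_real, Real.norm_eq_abs, abs_of_pos hR, mul_one]
  have hxR : x = -R := by
    have := congrArg norm h
    rw [habs, Complex.norm_real, Real.norm_eq_abs, abs_of_neg hx] at this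
    linarith
  have hexp : Complex.exp ((u:ℂ) * Complex.I) = -1 := by
    have hR' : (R:ℂ) ≠ 0 := by exact_mod_cast hR.ne'
    have h2 : (R:ℂ) * Complex.exp ((u:ℂ) * Complex.I) = (R:ℂ) * (-1) := by
      rw [h, hxR]; push_cast; ring
    exact mul_left_cancel₀ hR' h2
  have h1 : Complex.exp (((u - Real.pi : ℝ):ℂ) * Complex.I) = 1 := by
    have : (((u - Real.pi : ℝ):ℂ) * Complex.I) = (u:ℂ) * Complex.I - (Real.pi:ℂ) * Complex.I := by
      push_cast; ring
    rw [this, Complex.exp_sub, hexp, Complex.exp_pi_mul_I]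
    norm_num
  rw [Complex.exp_eq_one_iff] at h1
  obtain ⟨n, hn⟩ := h1
  refine ⟨n, ?_⟩
  have hI : ((u - Real.pi : ℝ):ℂ) = (n:ℂ) * (2 * (Real.pi:ℂ)) := by
    have := hn
    rw [show (n:ℂ) * (2 * ↑Real.pi * Complex.I) = ((n:ℂ) * (2 * ↑Real.pi)) * Complex.I by ring] at this
    exact mul_right_cancel₀ Complex.I_ne_zero this
  have : u - Real.pi = (n:ℝ) * (2 * Real.pi) := by exact_mod_cast hI
  linarith

lemma no_odd {u : ℝ} (hu : u ∈ Set.Ioo (-Real.pi) Real.pi) (k : ℤ) :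
    u ≠ (2 * (k:ℝ) + 1) * Real.pi := by
  intro h
  have hπ := Real.pi_pos
  rcases le_or_gt 0 k with hk | hk
  · have : (0:ℝ) ≤ k := by exact_mod_cast hk
    nlinarith [hu.2]
  · have hk1 : k + 1 ≤ 0 := by omega
    have : (k:ℝ) + 1 ≤ 0 := by exact_mod_cast hk1
    nlinarith [hu.1]

lemma L2 {R : ℝ} (hR : 0 < R) {u : ℝ} (hu : u ∈ Set.Ioo (-Real.pi) Real.pi) :
    ¬ ∃ x : ℝ, x < 0 ∧ (R:ℂ) * Complex.exp ((u:ℂ) * Complex.I) = (x:ℂ) := by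
  rintro ⟨x, hx, h⟩
  obtain ⟨k, hk⟩ := L1 hR hx h
  exact no_odd hu k hk

lemma sin_sign_pos {x : ℝ} (h1 : 0 < x) (h2 : x < Real.pi) : 0 < Real.sin x :=
  Real.sin_pos_of_pos_of_lt_pi h1 h2

lemma trig_pos {R S α β : ℝ} (hR : 0 < R) (hS : 0 < S)
    (hα : α ∈ Set.Ioo (-Real.pi) Real.pi) (hβ : β ∈ Set.Ioo (-Real.pi) Real.pi)
    (hδ : β - α ∈ Set.Ioo (-Real.pi) Real.pi)
    (him : R * Real.sin α + S * Real.sin β = 0) :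
    0 < R * Real.cos α + S * Real.cos β := by
  have hπ := Real.pi_pos
  have key : (R * Real.cos α + S * Real.cos β) * (Real.sin α * (-Real.sin β))
      = R * Real.sin α * Real.sin (α - β) := by
    rw [Real.sin_sub]
    linear_combination (-(Real.sin α * Real.cos β)) * him
  rcases lt_trichotomy (Real.sin α) 0 with hsa | hsa | hsa
  · -- sin α < 0 : then sin β > 0, α < 0 < β
    have hsb : 0 < Real.sin β := by nlinarith
    have hα0 : α < 0 := by
      by_contra hh
      push_neg at hh
      exact absurd (Real.sin_nonneg_of_nonneg_of_le_pi hh hα.2.le) (not_le.mpr hsa)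
    have hβ0 : 0 < β := by
      by_contra hh
      push_neg at hh
      have : Real.sin (-β) ≥ 0 :=
        Real.sin_nonneg_of_nonneg_of_le_pi (by linarith) (by linarith [hβ.1])
      rw [Real.sin_neg] at this
      linarith
    have hab : Real.sin (α - β) < 0 := by
      have h1 : 0 < -(α - β) := by linarith
      have h2 : -(α - β) < Real.pi := by linarith [hδ.2]
      have := Real.sin_pos_of_pos_of_lt_pi h1 h2
      rw [Real.sin_neg] at this
      linarith
    have hP : 0 < Real.sin α * (-Real.sin β) := by nlinarith
    have hQ : 0 < R * Real.sin α * Real.sin (α - β) :=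
      mul_pos_of_neg_of_neg (mul_neg_of_pos_of_neg hR hsa) hab
    by_contra hh
    push_neg at hh
    nlinarith
  · -- sin α = 0 : α = 0, β = 0
    have hα0 : α = 0 := (Real.sin_eq_zero_iff_of_lt_of_lt hα.1 hα.2).mp hsa
    have hsb : Real.sin β = 0 := by
      rw [hsa] at him; nlinarith
    have hβ0 : β = 0 := (Real.sin_eq_zero_iff_of_lt_of_lt hβ.1 hβ.2).mp hsb
    rw [hα0, hβ0, Real.cos_zero]
    nlinarith
  · -- sin α > 0 : sin β < 0, β < 0 < α
    have hsb : Real.sin β < 0 := by nlinarith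
    have hβ0 : β < 0 := by
      by_contra hh
      push_neg at hh
      exact absurd (Real.sin_nonneg_of_nonneg_of_le_pi hh hβ.2.le) (not_le.mpr hsb)
    have hα0 : 0 < α := by
      by_contra hh
      push_neg at hh
      have : Real.sin (-α) ≥ 0 :=
        Real.sin_nonneg_of_nonneg_of_le_pi (by linarith) (by linarith [hα.1])
      rw [Real.sin_neg] at this
      linarith
    have hab : 0 < Real.sin (α - β) := by
      refine Real.sin_pos_of_pos_of_lt_pi (by linarith) (by linarith [hδ.1])
    have hP : 0 < Real.sin α * (-Real.sin β) := by nlinarith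
    have hQ : 0 < R * Real.sin α * Real.sin (α - β) :=
      mul_pos (mul_pos hR hsa) hab
    by_contra hh
    push_neg at hh
    nlinarith

lemma toReal (R S α β : ℝ) :
    (R:ℂ) * Complex.exp ((α:ℂ) * Complex.I) + (S:ℂ) * Complex.exp ((β:ℂ) * Complex.I)
      = (((R * Real.cos α + S * Real.cos β : ℝ)):ℂ)
        + (((R * Real.sin α + S * Real.sin β : ℝ)):ℂ) * Complex.I := by
  apply Complex.ext
  · simp [Complex.add_re, Complex.mul_re, Complex.exp_ofReal_mul_I_re,
      Complex.exp_ofReal_mul_I_im, Complex.cos_ofReal_re, Complex.sin_ofReal_re]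
  · simp [Complex.add_im, Complex.mul_im, Complex.exp_ofReal_mul_I_re,
      Complex.exp_ofReal_mul_I_im, Complex.cos_ofReal_re, Complex.sin_ofReal_re]

lemma sum_ne {R S α β : ℝ} (hR : 0 < R) (hS : 0 < S)
    (hα : α ∈ Set.Ioo (-Real.pi) Real.pi) (hβ : β ∈ Set.Ioo (-Real.pi) Real.pi)
    (hδ : β - α ∈ Set.Ioo (-Real.pi) Real.pi) :
    ¬ ∃ x : ℝ, x ≤ 0 ∧
      (R:ℂ) * Complex.exp ((α:ℂ) * Complex.I) + (S:ℂ) * Complex.exp ((β:ℂ) * Complex.I)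
        = (x:ℂ) := by
  rintro ⟨x, hx, h⟩
  rw [toReal] at h
  have him : R * Real.sin α + S * Real.sin β = 0 := by
    have := congrArg Complex.im h
    simpa [Complex.sin_ofReal_re, Complex.cos_ofReal_re] using this
  have hre : R * Real.cos α + S * Real.cos β = x := by
    have := congrArg Complex.re h
    simpa [Complex.sin_ofReal_re, Complex.cos_ofReal_re] using this
  have := trig_pos hR hS hα hβ hδ him
  linarith

lemma pow_form (r θ : ℝ) (n : ℕ) :
    ((r:ℂ) * Complex.exp ((θ:ℂ) * Complex.I)) ^ n
      = (((r ^ n : ℝ)):ℂ) * Complex.exp ((((n : ℝ) * θ : ℝ):ℂ) * Complex.I) := by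
  rw [mul_pow, ← Complex.exp_nat_mul]
  push_cast
  ring_nf

lemma exp_combine (a b : ℝ) :
    Complex.exp (((a : ℝ):ℂ) * Complex.I) * Complex.exp (((b : ℝ):ℂ) * Complex.I)
      = Complex.exp ((((a + b : ℝ)):ℂ) * Complex.I) := by
  rw [← Complex.exp_add]
  push_cast
  ring_nf

lemma zq (d m : ℕ) (t c : ℂ) (r θ : ℝ) :
    ((r : ℂ) * Complex.exp ((θ : ℂ) * Complex.I)) ^ 2 *
      (t * ((r : ℂ) * Complex.exp ((θ : ℂ) * Complex.I)) ^ d +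
       c * ((r : ℂ) * Complex.exp ((θ : ℂ) * Complex.I)) ^ m)
    = (((r ^ (d + 2) : ℝ)):ℂ) * (t * Complex.exp ((((d : ℝ) + 2) * θ : ℂ) * Complex.I))
      + (((r ^ (m + 2) : ℝ)):ℂ) * (c * Complex.exp ((((m : ℝ) + 2) * θ : ℂ) * Complex.I)) := by
  have h2 := pow_form r θ 2
  have hd := pow_form r θ d
  have hm := pow_form r θ m
  rw [h2, hd, hm]
  have ed : Complex.exp ((((2 : ℝ) * θ : ℝ):ℂ) * Complex.I)
      * Complex.exp ((((d:ℝ) * θ : ℝ):ℂ) * Complex.I)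
      = Complex.exp ((((d : ℝ) + 2) * θ : ℂ) * Complex.I) := by
    rw [exp_combine]
    congr 1
    push_cast
    ring
  have em : Complex.exp ((((2 : ℝ) * θ : ℝ):ℂ) * Complex.I)
      * Complex.exp ((((m:ℝ) * θ : ℝ):ℂ) * Complex.I)
      = Complex.exp ((((m : ℝ) + 2) * θ : ℂ) * Complex.I) := by
    rw [exp_combine]
    congr 1
    push_cast
    ring
  rw [← ed, ← em]
  push_cast
  ring

lemma shift (t : ℂ) (s s₀ : ℝ) :
    t * Complex.exp ((s:ℂ) * Complex.I)
      = (t * Complex.exp ((s₀:ℂ) * Complex.I)) * Complex.exp ((((s - s₀ : ℝ)):ℂ) * Complex.I) := by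
  rw [mul_assoc, exp_combine]
  congr 2
  push_cast
  ring

lemma gident (t c : ℂ) (ht : t ≠ 0) (a b w : ℝ) (h : a - w = b) :
    (t * Complex.exp ((a:ℂ) * Complex.I)) *
        ((-c / t) * Complex.exp ((((-w : ℝ)):ℂ) * Complex.I))
      = -(c * Complex.exp ((b:ℂ) * Complex.I)) := by
  have h1 : Complex.exp ((a:ℂ) * Complex.I) * Complex.exp ((((-w : ℝ)):ℂ) * Complex.I)
      = Complex.exp ((b:ℂ) * Complex.I) := by
    rw [exp_combine, show a + -w = b by linarith]
  calc (t * Complex.exp ((a:ℂ) * Complex.I)) *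
        ((-c / t) * Complex.exp ((((-w : ℝ)):ℂ) * Complex.I))
      = (t * (-c / t)) * (Complex.exp ((a:ℂ) * Complex.I)
          * Complex.exp ((((-w : ℝ)):ℂ) * Complex.I)) := by ring
    _ = (-c) * Complex.exp ((b:ℂ) * Complex.I) := by
        rw [h1]
        field_simp
    _ = -(c * Complex.exp ((b:ℂ) * Complex.I)) := by ring

lemma window {f : ℝ → ℝ} (hf : Continuous f) {θ₀ θ₁ θ₂ : ℝ}
    (h0 : θ₀ ∈ Set.Ioo θ₁ θ₂) (hf0 : f θ₀ ∈ Set.Ioo (-Real.pi) Real.pi)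
    (havoid : ∀ φ ∈ Set.Ioo θ₁ θ₂, ∀ k : ℤ, f φ ≠ (2 * (k:ℝ) + 1) * Real.pi) :
    ∀ φ ∈ Set.Ioo θ₁ θ₂, f φ ∈ Set.Ioo (-Real.pi) Real.pi := by
  intro φ hφ
  have hsub : Set.uIcc φ θ₀ ⊆ Set.Ioo θ₁ θ₂ := by
    intro x hx
    rw [Set.mem_uIcc] at hx
    rcases hx with ⟨h1, h2⟩ | ⟨h1, h2⟩ <;>
      exact ⟨by rcases hφ with ⟨a,b⟩; rcases h0 with ⟨e,g⟩; linarith,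
        by rcases hφ with ⟨a,b⟩; rcases h0 with ⟨e,g⟩; linarith⟩
  constructor
  · by_contra hh
    push_neg at hh
    have hmem : -Real.pi ∈ Set.uIcc (f φ) (f θ₀) := by
      rw [Set.mem_uIcc]
      left
      exact ⟨hh, hf0.1.le⟩
    obtain ⟨ψ, hψ, hfψ⟩ := intermediate_value_uIcc (hf.continuousOn) hmem
    have := havoid ψ (hsub hψ) (-1)
    apply this
    rw [hfψ]
    push_cast
    ring
  · by_contra hh
    push_neg at hh
    have hmem : Real.pi ∈ Set.uIcc (f φ) (f θ₀) := by
      rw [Set.mem_uIcc]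
      right
      exact ⟨hf0.2.le, hh⟩
    obtain ⟨ψ, hψ, hfψ⟩ := intermediate_value_uIcc (hf.continuousOn) hmem
    have := havoid ψ (hsub hψ) 0
    apply this
    rw [hfψ]
    push_cast
    ring

lemma outer_band {α β : ℝ} (hα : α ∈ Set.Ioo (-Real.pi) Real.pi)
    (hβ : β ∈ Set.Ioo (-Real.pi) Real.pi)
    (h : Real.pi < β - α ∨ β - α < -Real.pi) :
    ∃ ρ : ℝ, 0 < ρ ∧ ∀ S : ℝ, 0 < S →
      (ρ * S) * Real.sin α + S * Real.sin β = 0 ∧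
      (ρ * S) * Real.cos α + S * Real.cos β < 0 := by
  have hπ := Real.pi_pos
  have ha1 := hα.1
  have ha2 := hα.2
  have hb1 := hβ.1
  have hb2 := hβ.2
  rcases h with hcase | hcase
  · have hα0 : α < 0 := by linarith [hβ.2]
    have hβ0 : 0 < β := by linarith [hα.1]
    have hsa : Real.sin α < 0 := Real.sin_neg_of_neg_of_neg_pi_lt hα0 hα.1
    have hsb : 0 < Real.sin β := Real.sin_pos_of_pos_of_lt_pi hβ0 hβ.2
    have hsab : 0 < Real.sin (α - β) := by
      rw [← Real.sin_add_two_pi]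
      exact Real.sin_pos_of_pos_of_lt_pi (by linarith) (by linarith)
    refine ⟨-Real.sin β / Real.sin α, by rw [div_pos_iff]; right; constructor <;> linarith, ?_⟩
    intro S hS
    set ρ := -Real.sin β / Real.sin α with hρdef
    have hρ : 0 < ρ := by rw [hρdef, div_pos_iff]; right; constructor <;> linarith
    have hsa0 : Real.sin α ≠ 0 := ne_of_lt hsa
    have hsum : ρ * Real.sin α = -Real.sin β := by
      rw [hρdef]; field_simp
    have him : (ρ * S) * Real.sin α + S * Real.sin β = 0 := by
      rw [show (ρ * S) * Real.sin α = S * (ρ * Real.sin α) by ring, hsum]; ring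
    refine ⟨him, ?_⟩
    have key : ((ρ * S) * Real.cos α + S * Real.cos β) * (Real.sin α * (-Real.sin β))
        = (ρ * S) * Real.sin α * Real.sin (α - β) := by
      rw [Real.sin_sub]
      linear_combination (-(Real.sin α * Real.cos β)) * him
    have hP : 0 < Real.sin α * (-Real.sin β) := mul_pos_of_neg_of_neg hsa (by linarith)
    have hQ : (ρ * S) * Real.sin α * Real.sin (α - β) < 0 :=
      mul_neg_of_neg_of_pos (mul_neg_of_pos_of_neg (mul_pos hρ hS) hsa) hsab
    by_contra hh
    push_neg at hh
    nlinarith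
  · have hβ0 : β < 0 := by linarith [hα.2]
    have hα0 : 0 < α := by linarith [hβ.1]
    have hsa : 0 < Real.sin α := Real.sin_pos_of_pos_of_lt_pi hα0 hα.2
    have hsb : Real.sin β < 0 := Real.sin_neg_of_neg_of_neg_pi_lt hβ0 hβ.1
    have hsab : Real.sin (α - β) < 0 := by
      rw [← Real.sin_sub_two_pi]
      exact Real.sin_neg_of_neg_of_neg_pi_lt (by linarith) (by linarith)
    refine ⟨-Real.sin β / Real.sin α, div_pos (by linarith) hsa, ?_⟩
    intro S hS
    set ρ := -Real.sin β / Real.sin α with hρdef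
    have hρ : 0 < ρ := div_pos (by linarith) hsa
    have hsa0 : Real.sin α ≠ 0 := ne_of_gt hsa
    have hsum : ρ * Real.sin α = -Real.sin β := by
      rw [hρdef]; field_simp
    have him : (ρ * S) * Real.sin α + S * Real.sin β = 0 := by
      rw [show (ρ * S) * Real.sin α = S * (ρ * Real.sin α) by ring, hsum]; ring
    refine ⟨him, ?_⟩
    have key : ((ρ * S) * Real.cos α + S * Real.cos β) * (Real.sin α * (-Real.sin β))
        = (ρ * S) * Real.sin α * Real.sin (α - β) := by
      rw [Real.sin_sub]
      linear_combination (-(Real.sin α * Real.cos β)) * him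
    have hP : 0 < Real.sin α * (-Real.sin β) := mul_pos hsa (by linarith)
    have hQ : (ρ * S) * Real.sin α * Real.sin (α - β) < 0 :=
      mul_neg_of_pos_of_neg (mul_pos (mul_pos hρ hS) hsa) hsab
    by_contra hh
    push_neg at hh
    nlinarith


lemma rep (u : ℂ) (s s₀ : ℝ) :
    u * Complex.exp ((s:ℂ) * Complex.I)
      = ((‖u‖ : ℝ):ℂ) *
        Complex.exp (((Complex.arg (u * Complex.exp ((s₀:ℂ) * Complex.I)) + (s - s₀) : ℝ):ℂ)
          * Complex.I) := by
  have habs : ‖u * Complex.exp ((s₀:ℂ) * Complex.I)‖ = ‖u‖ := by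
    rw [norm_mul, Complex.norm_exp_ofReal_mul_I, mul_one]
  conv_lhs => rw [shift u s s₀]
  conv_lhs => rw [← Complex.norm_mul_exp_arg_mul_I (u * Complex.exp ((s₀:ℂ) * Complex.I))]
  rw [habs, mul_assoc, exp_combine]

lemma cast_t (d : ℕ) (φ : ℝ) :
    ((((d : ℝ) + 2) * φ : ℂ) * Complex.I) = (((((d:ℝ)+2)*φ : ℝ)):ℂ) * Complex.I := by
  push_cast; ring

lemma cast_g (d m : ℕ) (φ : ℝ) :
    ((-(((d : ℝ) - (m : ℝ)) * φ) : ℂ) * Complex.I)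
      = (((-(((d:ℝ) - (m:ℝ)) * φ) : ℝ)):ℂ) * Complex.I := by
  push_cast; ring

lemma mul_cast_assoc (a b : ℝ) (X : ℂ) :
    (a:ℂ) * ((b:ℂ) * X) = (((a * b : ℝ)):ℂ) * X := by
  push_cast; ring

lemma gamma_eq (t c : ℂ) (ht : t ≠ 0) (sa sb w a b : ℝ) (hw : sa - w = sb)
    (Rt Sc : ℝ) (hRt : 0 < Rt)
    (hrt : t * Complex.exp ((sa:ℂ) * Complex.I) = (Rt:ℂ) * Complex.exp ((a:ℂ) * Complex.I))
    (hrc : c * Complex.exp ((sb:ℂ) * Complex.I) = (Sc:ℂ) * Complex.exp ((b:ℂ) * Complex.I))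
    (k : ℤ) (hk : b - a = (2 * (k:ℝ) + 1) * Real.pi) :
    (-c / t) * Complex.exp ((((-w : ℝ)):ℂ) * Complex.I) = (((Sc / Rt : ℝ)):ℂ) := by
  have hgi := gident t c ht sa sb w hw
  rw [hrt, hrc] at hgi
  have hb : Complex.exp ((b:ℂ) * Complex.I) = - Complex.exp ((a:ℂ) * Complex.I) := by
    rw [show (b:ℝ) = a + (2 * (k:ℝ) + 1) * Real.pi by linarith, ← exp_combine, exp_odd_pi]
    ring
  rw [hb] at hgi
  have hRt0 : (Rt:ℂ) ≠ 0 := by exact_mod_cast hRt.ne'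
  have hne : (Rt:ℂ) * Complex.exp ((a:ℂ) * Complex.I) ≠ 0 :=
    mul_ne_zero hRt0 (Complex.exp_ne_zero _)
  apply mul_left_cancel₀ hne
  rw [hgi]
  push_cast
  field_simp

lemma gamma_push (t c : ℂ) (ht : t ≠ 0) (sa sb w a b : ℝ) (hw : sa - w = sb)
    (Rt Sc x : ℝ)
    (hrt : t * Complex.exp ((sa:ℂ) * Complex.I) = (Rt:ℂ) * Complex.exp ((a:ℂ) * Complex.I))
    (hrc : c * Complex.exp ((sb:ℂ) * Complex.I) = (Sc:ℂ) * Complex.exp ((b:ℂ) * Complex.I))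
    (hx : (-c / t) * Complex.exp ((((-w : ℝ)):ℂ) * Complex.I) = (x:ℂ)) :
    (Sc:ℂ) * Complex.exp ((((b - a : ℝ)):ℂ) * Complex.I) = (((-(x * Rt) : ℝ)):ℂ) := by
  have hgi := gident t c ht sa sb w hw
  rw [hrt, hrc, hx] at hgi
  have hb : Complex.exp ((b:ℂ) * Complex.I)
      = Complex.exp ((a:ℂ) * Complex.I) * Complex.exp ((((b - a : ℝ)):ℂ) * Complex.I) := by
    rw [exp_combine, show a + (b - a) = b by ring]
  rw [hb] at hgi
  have hne : Complex.exp ((a:ℂ) * Complex.I) ≠ 0 := Complex.exp_ne_zero _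
  apply mul_right_cancel₀ hne
  rw [show ((-(x * Rt) : ℝ):ℂ) = -((x:ℂ) * (Rt:ℂ)) by push_cast; ring]
  linear_combination hgi


set_option maxHeartbeats 1600000 in
/-- A sector (of the partition determined by the Stokes lines of the two monomials and the
rays through the turning points) containing an anti-Stokes ray of `t z^d` consists of good
rays, and conversely every good ray lies in such a sector. -/
theorem good_sectors (d m : ℕ) (hm : 1 ≤ m) (hdm : m < d)
    (t c : ℂ) (ht : t ≠ 0) (hc : c ≠ 0) :
    -- Forward direction
    (∀ θ₁ θ₀ θ₂ : ℝ, θ₁ < θ₀ → θ₀ < θ₂ →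
      (∃ x : ℝ, 0 < x ∧
        t * Complex.exp ((((d : ℝ) + 2) * θ₀ : ℂ) * Complex.I) = (x : ℂ)) →
      (∀ θ ∈ Set.Ioo θ₁ θ₂,
        (¬ ∃ x : ℝ, x < 0 ∧
          t * Complex.exp ((((d : ℝ) + 2) * θ : ℂ) * Complex.I) = (x : ℂ)) ∧
        (¬ ∃ x : ℝ, x < 0 ∧
          c * Complex.exp ((((m : ℝ) + 2) * θ : ℂ) * Complex.I) = (x : ℂ)) ∧
        (¬ ∃ x : ℝ, 0 < x ∧
          (-c / t) * Complex.exp ((-(((d : ℝ) - (m : ℝ)) * θ) : ℂ) * Complex.I) = (x : ℂ))) →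
      ∀ θ ∈ Set.Ioo θ₁ θ₂, GoodRay d m t c θ) ∧
    -- Converse
    (∀ θ : ℝ, GoodRay d m t c θ →
      ∃ θ₁ θ₂ : ℝ, θ₁ < θ₂ ∧ θ ∈ Set.Ioo θ₁ θ₂ ∧
        (∃ θ₀ ∈ Set.Ioo θ₁ θ₂, ∃ x : ℝ, 0 < x ∧
          t * Complex.exp ((((d : ℝ) + 2) * θ₀ : ℂ) * Complex.I) = (x : ℂ)) ∧
        ∀ φ ∈ Set.Ioo θ₁ θ₂,
          (¬ ∃ x : ℝ, x < 0 ∧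
            t * Complex.exp ((((d : ℝ) + 2) * φ : ℂ) * Complex.I) = (x : ℂ)) ∧
          (¬ ∃ x : ℝ, x < 0 ∧
            c * Complex.exp ((((m : ℝ) + 2) * φ : ℂ) * Complex.I) = (x : ℂ)) ∧
          (¬ ∃ x : ℝ, 0 < x ∧
            (-c / t) * Complex.exp ((-(((d : ℝ) - (m : ℝ)) * φ) : ℂ) * Complex.I) = (x : ℂ))) := by
  have hπ := Real.pi_pos
  have hd2 : (0:ℝ) < (d:ℝ) + 2 := by positivity
  have hm2 : (0:ℝ) < (m:ℝ) + 2 := by positivity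
  have hdmR : (m:ℝ) + 2 < (d:ℝ) + 2 := by
    have : (m:ℝ) < (d:ℝ) := by exact_mod_cast hdm
    linarith
  have habst : 0 < ‖t‖ := by simpa using norm_pos_iff.mpr ht
  have habsc : 0 < ‖c‖ := by simpa using norm_pos_iff.mpr hc
  constructor
  · -- Forward
    rintro θ₁ θ₀ θ₂ h10 h02 ⟨x₀, hx₀, hw₀⟩ hcond θ hθ
    have hθ₀mem : θ₀ ∈ Set.Ioo θ₁ θ₂ := ⟨h10, h02⟩
    rw [cast_t d θ₀] at hw₀
    have harg : Complex.arg (t * Complex.exp ((((((d:ℝ)+2)*θ₀ : ℝ)):ℂ) * Complex.I)) = 0 := by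
      rw [hw₀]; exact Complex.arg_ofReal_of_nonneg hx₀.le
    have rep_t : ∀ φ : ℝ, t * Complex.exp ((((((d:ℝ)+2)*φ : ℝ)):ℂ) * Complex.I)
        = ((‖t‖ : ℝ):ℂ) *
          Complex.exp (((((d:ℝ)+2)*φ - ((d:ℝ)+2)*θ₀ : ℝ):ℂ) * Complex.I) := by
      intro φ
      rw [rep t (((d:ℝ)+2)*φ) (((d:ℝ)+2)*θ₀), harg, zero_add]
    have rep_c : ∀ φ : ℝ, c * Complex.exp ((((((m:ℝ)+2)*φ : ℝ)):ℂ) * Complex.I)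
        = ((‖c‖ : ℝ):ℂ) *
          Complex.exp ((((Complex.arg (c * Complex.exp ((((((m:ℝ)+2)*θ₀ : ℝ)):ℂ) * Complex.I))
            + (((m:ℝ)+2)*φ - ((m:ℝ)+2)*θ₀) : ℝ)):ℂ) * Complex.I) :=
      fun φ => rep c (((m:ℝ)+2)*φ) (((m:ℝ)+2)*θ₀)
    set b₀ := Complex.arg (c * Complex.exp ((((((m:ℝ)+2)*θ₀ : ℝ)):ℂ) * Complex.I)) with hb₀def
    have hb₀mem : b₀ ∈ Set.Ioo (-Real.pi) Real.pi := by
      constructor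
      · rw [hb₀def]; exact Complex.neg_pi_lt_arg _
      · refine lt_of_le_of_ne (by rw [hb₀def]; exact Complex.arg_le_pi _) ?_
        intro hpi
        rw [hb₀def] at hpi
        have h00 := Complex.arg_eq_pi_iff.mp hpi
        apply (hcond θ₀ hθ₀mem).2.1
        refine ⟨(c * Complex.exp ((((((m:ℝ)+2)*θ₀ : ℝ)):ℂ) * Complex.I)).re, h00.1, ?_⟩
        rw [cast_t m θ₀]
        exact (Complex.ext (by simp) (by simpa using h00.2.symm)).symm
    have hAa : ∀ φ ∈ Set.Ioo θ₁ θ₂, ∀ k : ℤ,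
        ((d:ℝ)+2)*φ - ((d:ℝ)+2)*θ₀ ≠ (2*(k:ℝ)+1)*Real.pi := by
      intro φ hφ k hk
      apply (hcond φ hφ).1
      refine ⟨-(‖t‖), by linarith, ?_⟩
      rw [cast_t d φ, rep_t φ, hk, exp_odd_pi]
      push_cast; ring
    have hBa : ∀ φ ∈ Set.Ioo θ₁ θ₂, ∀ k : ℤ,
        b₀ + (((m:ℝ)+2)*φ - ((m:ℝ)+2)*θ₀) ≠ (2*(k:ℝ)+1)*Real.pi := by
      intro φ hφ k hk
      apply (hcond φ hφ).2.1
      refine ⟨-(‖c‖), by linarith, ?_⟩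
      rw [cast_t m φ, rep_c φ, hk, exp_odd_pi]
      push_cast; ring
    have hGa : ∀ φ ∈ Set.Ioo θ₁ θ₂, ∀ k : ℤ,
        (b₀ + (((m:ℝ)+2)*φ - ((m:ℝ)+2)*θ₀)) - (((d:ℝ)+2)*φ - ((d:ℝ)+2)*θ₀)
          ≠ (2*(k:ℝ)+1)*Real.pi := by
      intro φ hφ k hk
      apply (hcond φ hφ).2.2
      refine ⟨‖c‖ / ‖t‖, div_pos habsc habst, ?_⟩
      rw [cast_g d m φ]
      exact gamma_eq t c ht (((d:ℝ)+2)*φ) (((m:ℝ)+2)*φ) (((d:ℝ)-(m:ℝ))*φ) _ _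
        (by push_cast; ring) (‖t‖) (‖c‖) habst
        (rep_t φ) (rep_c φ) k hk
    have hAw := window (f := fun φ => ((d:ℝ)+2)*φ - ((d:ℝ)+2)*θ₀) (by fun_prop) hθ₀mem
      (by show ((d:ℝ)+2)*θ₀ - ((d:ℝ)+2)*θ₀ ∈ _
          rw [sub_self]; exact ⟨by linarith, hπ⟩) hAa
    have hBw := window (f := fun φ => b₀ + (((m:ℝ)+2)*φ - ((m:ℝ)+2)*θ₀)) (by fun_prop) hθ₀mem
      (by show b₀ + (((m:ℝ)+2)*θ₀ - ((m:ℝ)+2)*θ₀) ∈ _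
          rw [sub_self, add_zero]; exact hb₀mem) hBa
    have hGw := window
      (f := fun φ => (b₀ + (((m:ℝ)+2)*φ - ((m:ℝ)+2)*θ₀)) - (((d:ℝ)+2)*φ - ((d:ℝ)+2)*θ₀))
      (by fun_prop) hθ₀mem
      (by show (b₀ + (((m:ℝ)+2)*θ₀ - ((m:ℝ)+2)*θ₀)) - (((d:ℝ)+2)*θ₀ - ((d:ℝ)+2)*θ₀) ∈ _
          rw [sub_self, sub_self, add_zero, sub_zero]; exact hb₀mem) hGa
    have hiv : ∀ r : ℝ, 0 < r → ¬ ∃ x : ℝ, x ≤ 0 ∧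
        ((r : ℂ) * Complex.exp ((θ : ℂ) * Complex.I)) ^ 2 *
          (t * ((r : ℂ) * Complex.exp ((θ : ℂ) * Complex.I)) ^ d +
           c * ((r : ℂ) * Complex.exp ((θ : ℂ) * Complex.I)) ^ m) = (x : ℂ) := by
      intro r hr
      rw [zq d m t c r θ, cast_t d θ, cast_t m θ, rep_t θ, rep_c θ,
        mul_cast_assoc, mul_cast_assoc]
      exact sum_ne (by positivity) (by positivity) (hAw θ hθ) (hBw θ hθ) (hGw θ hθ)
    refine ⟨?_, ?_, ?_, hiv⟩
    · rintro ⟨x, hx, hxe⟩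
      rw [cast_t d θ, rep_t θ] at hxe
      exact L2 habst (hAw θ hθ) ⟨x, hx, hxe⟩
    · rintro ⟨x, hx, hxe⟩
      rw [cast_t m θ, rep_c θ] at hxe
      exact L2 habsc (hBw θ hθ) ⟨x, hx, hxe⟩
    · intro r hr hQ
      exact hiv r hr ⟨0, le_refl 0, by rw [hQ, mul_zero, Complex.ofReal_zero]⟩
  · -- Converse
    intro θ hθgood
    obtain ⟨h1, h2, h3, h4⟩ := hθgood
    have rep_t : ∀ φ : ℝ, t * Complex.exp ((((((d:ℝ)+2)*φ : ℝ)):ℂ) * Complex.I)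
        = ((‖t‖ : ℝ):ℂ) *
          Complex.exp ((((Complex.arg (t * Complex.exp ((((((d:ℝ)+2)*θ : ℝ)):ℂ) * Complex.I))
            + (((d:ℝ)+2)*φ - ((d:ℝ)+2)*θ) : ℝ)):ℂ) * Complex.I) :=
      fun φ => rep t (((d:ℝ)+2)*φ) (((d:ℝ)+2)*θ)
    have rep_c : ∀ φ : ℝ, c * Complex.exp ((((((m:ℝ)+2)*φ : ℝ)):ℂ) * Complex.I)
        = ((‖c‖ : ℝ):ℂ) *
          Complex.exp ((((Complex.arg (c * Complex.exp ((((((m:ℝ)+2)*θ : ℝ)):ℂ) * Complex.I))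
            + (((m:ℝ)+2)*φ - ((m:ℝ)+2)*θ) : ℝ)):ℂ) * Complex.I) :=
      fun φ => rep c (((m:ℝ)+2)*φ) (((m:ℝ)+2)*θ)
    set α₀ := Complex.arg (t * Complex.exp ((((((d:ℝ)+2)*θ : ℝ)):ℂ) * Complex.I)) with hα₀def
    set β₀ := Complex.arg (c * Complex.exp ((((((m:ℝ)+2)*θ : ℝ)):ℂ) * Complex.I)) with hβ₀def
    have hα₀mem : α₀ ∈ Set.Ioo (-Real.pi) Real.pi := by
      constructor
      · rw [hα₀def]; exact Complex.neg_pi_lt_arg _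
      · refine lt_of_le_of_ne (by rw [hα₀def]; exact Complex.arg_le_pi _) ?_
        intro hpi
        rw [hα₀def] at hpi
        have h00 := Complex.arg_eq_pi_iff.mp hpi
        apply h1
        refine ⟨(t * Complex.exp ((((((d:ℝ)+2)*θ : ℝ)):ℂ) * Complex.I)).re, h00.1, ?_⟩
        rw [cast_t d θ]
        exact (Complex.ext (by simp) (by simpa using h00.2.symm)).symm
    have hβ₀mem : β₀ ∈ Set.Ioo (-Real.pi) Real.pi := by
      constructor
      · rw [hβ₀def]; exact Complex.neg_pi_lt_arg _
      · refine lt_of_le_of_ne (by rw [hβ₀def]; exact Complex.arg_le_pi _) ?_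
        intro hpi
        rw [hβ₀def] at hpi
        have h00 := Complex.arg_eq_pi_iff.mp hpi
        apply h2
        refine ⟨(c * Complex.exp ((((((m:ℝ)+2)*θ : ℝ)):ℂ) * Complex.I)).re, h00.1, ?_⟩
        rw [cast_t m θ]
        exact (Complex.ext (by simp) (by simpa using h00.2.symm)).symm
    have hrtθ : t * Complex.exp ((((((d:ℝ)+2)*θ : ℝ)):ℂ) * Complex.I)
        = ((‖t‖ : ℝ):ℂ) * Complex.exp ((α₀:ℂ) * Complex.I) := by
      rw [rep_t θ, show α₀ + (((d:ℝ)+2)*θ - ((d:ℝ)+2)*θ) = α₀ by ring]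
    have hrcθ : c * Complex.exp ((((((m:ℝ)+2)*θ : ℝ)):ℂ) * Complex.I)
        = ((‖c‖ : ℝ):ℂ) * Complex.exp ((β₀:ℂ) * Complex.I) := by
      rw [rep_c θ, show β₀ + (((m:ℝ)+2)*θ - ((m:ℝ)+2)*θ) = β₀ by ring]
    have hγ_ne : ∀ k : ℤ, β₀ - α₀ ≠ (2*(k:ℝ)+1)*Real.pi := by
      intro k hk
      have hGθ := gamma_eq t c ht (((d:ℝ)+2)*θ) (((m:ℝ)+2)*θ) (((d:ℝ)-(m:ℝ))*θ) _ _
        (by push_cast; ring) (‖t‖) (‖c‖) habst hrtθ hrcθ k hk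
      have hx : 0 < ‖c‖ / ‖t‖ := div_pos habsc habst
      have hn0 : d - m ≠ 0 := by omega
      have hr : 0 < (‖c‖ / ‖t‖) ^ ((((d - m : ℕ):ℝ))⁻¹) :=
        Real.rpow_pos_of_pos hx _
      set r := (‖c‖ / ‖t‖) ^ ((((d - m : ℕ):ℝ))⁻¹) with hrdef
      have hrn : r ^ (d - m) = ‖c‖ / ‖t‖ := by
        rw [hrdef]; exact Real.rpow_inv_natCast_pow hx.le hn0
      apply h3 r hr
      rw [pow_form r θ d, pow_form r θ m]
      have hgd := gident t c ht ((d:ℝ)*θ) ((m:ℝ)*θ) (((d:ℝ)-(m:ℝ))*θ) (by ring)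
      rw [hGθ] at hgd
      have hrdm : r ^ d = r ^ m * (‖c‖ / ‖t‖) := by
        rw [← hrn, ← pow_add]; congr 1; omega
      calc t * (((r ^ d : ℝ):ℂ) * Complex.exp ((((d:ℝ)*θ : ℝ):ℂ) * Complex.I))
            + c * (((r ^ m : ℝ):ℂ) * Complex.exp ((((m:ℝ)*θ : ℝ):ℂ) * Complex.I))
          = ((r ^ m : ℝ):ℂ) * ((t * Complex.exp ((((d:ℝ)*θ : ℝ):ℂ) * Complex.I))
              * ((‖c‖ / ‖t‖ : ℝ):ℂ)
              + c * Complex.exp ((((m:ℝ)*θ : ℝ):ℂ) * Complex.I)) := by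
            rw [hrdm]; push_cast; ring
        _ = 0 := by rw [hgd]; ring
    have hγmem : β₀ - α₀ ∈ Set.Ioo (-Real.pi) Real.pi := by
      by_contra hcon
      have hne1 : β₀ - α₀ ≠ Real.pi := by
        intro hh; apply hγ_ne 0; rw [hh]; push_cast; ring
      have hne2 : β₀ - α₀ ≠ -Real.pi := by
        intro hh; apply hγ_ne (-1); rw [hh]; push_cast; ring
      have hcase : Real.pi < β₀ - α₀ ∨ β₀ - α₀ < -Real.pi := by
        rw [Set.mem_Ioo, not_and_or, not_lt, not_lt] at hcon
        rcases hcon with hcon | hcon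
        · right; exact lt_of_le_of_ne hcon hne2
        · left; exact lt_of_le_of_ne hcon (Ne.symm hne1)
      obtain ⟨ρ, hρ, hρS⟩ := outer_band hα₀mem hβ₀mem hcase
      have hq : 0 < ρ * ‖c‖ / ‖t‖ := by positivity
      have hn0 : d - m ≠ 0 := by omega
      have hr : 0 < (ρ * ‖c‖ / ‖t‖) ^ ((((d - m : ℕ):ℝ))⁻¹) :=
        Real.rpow_pos_of_pos hq _
      set r := (ρ * ‖c‖ / ‖t‖) ^ ((((d - m : ℕ):ℝ))⁻¹) with hrdef
      have hrn : r ^ (d - m) = ρ * ‖c‖ / ‖t‖ := by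
        rw [hrdef]; exact Real.rpow_inv_natCast_pow hq.le hn0
      obtain ⟨him, hre⟩ := hρS (r^(m+2) * ‖c‖) (by positivity)
      have hR : (r^(d+2) * ‖t‖ : ℝ) = ρ * (r^(m+2) * ‖c‖) := by
        have hsplit : r^(d+2) = r^(m+2) * r^(d-m) := by rw [← pow_add]; congr 1; omega
        rw [hsplit, hrn]; field_simp
      apply h4 r hr
      refine ⟨(ρ * (r^(m+2) * ‖c‖)) * Real.cos α₀
        + (r^(m+2) * ‖c‖) * Real.cos β₀, hre.le, ?_⟩
      rw [zq d m t c r θ, cast_t d θ, cast_t m θ, hrtθ, hrcθ,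
        mul_cast_assoc, mul_cast_assoc, hR, toReal, him]
      simp
    -- construct the sector
    set s := -α₀ / ((d:ℝ)+2) with hsdef
    have hs : ((d:ℝ)+2) * s = -α₀ := by rw [hsdef]; field_simp
    set g := β₀ + ((m:ℝ)+2) * s with hgdef
    have hgeq : g = β₀ + ((m:ℝ)+2) * s := hgdef
    have hgmem : g ∈ Set.Ioo (-Real.pi) Real.pi := by
      rw [hgdef]; constructor
      · rcases le_or_gt 0 s with hss | hss
        · nlinarith [hβ₀mem.1, mul_nonneg hm2.le hss]
        · nlinarith [hγmem.1, hs,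
            mul_nonneg (by linarith : (0:ℝ) ≤ (d:ℝ) - (m:ℝ)) (by linarith : (0:ℝ) ≤ -s)]
      · rcases le_or_gt 0 s with hss | hss
        · nlinarith [hγmem.2, hs,
            mul_nonneg (by linarith : (0:ℝ) ≤ (d:ℝ) - (m:ℝ)) hss]
        · nlinarith [hβ₀mem.2, mul_neg_of_pos_of_neg hm2 hss]
    set θ₀ := θ + s with hθ₀def
    set μ := max (max |α₀| |β₀|) (max |g| |β₀ - α₀|) with hμdef
    have hbm1 : |α₀| ≤ μ := by
      rw [hμdef]; exact le_trans (le_max_left _ _) (le_max_left _ _)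
    have hbm2 : |β₀| ≤ μ := by
      rw [hμdef]; exact le_trans (le_max_right _ _) (le_max_left _ _)
    have hbm3 : |g| ≤ μ := by
      rw [hμdef]; exact le_trans (le_max_left _ _) (le_max_right _ _)
    have hbm4 : |β₀ - α₀| ≤ μ := by
      rw [hμdef]; exact le_trans (le_max_right _ _) (le_max_right _ _)
    have h1μ := abs_le.mp hbm1
    have h2μ := abs_le.mp hbm2
    have h3μ := abs_le.mp hbm3
    have h4μ := abs_le.mp hbm4
    have hμ0 : 0 ≤ μ := le_trans (abs_nonneg α₀) hbm1
    have hμπ : μ < Real.pi := by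
      rw [hμdef]
      apply max_lt (max_lt ?_ ?_) (max_lt ?_ ?_)
      · exact abs_lt.mpr ⟨hα₀mem.1, hα₀mem.2⟩
      · exact abs_lt.mpr ⟨hβ₀mem.1, hβ₀mem.2⟩
      · exact abs_lt.mpr ⟨hgmem.1, hgmem.2⟩
      · exact abs_lt.mpr ⟨hγmem.1, hγmem.2⟩
    set ε := (Real.pi - μ) / (2 * ((d:ℝ)+2)) with hεdef
    have hε : 0 < ε := by
      rw [hεdef]; apply div_pos (by linarith) (by positivity)
    have hKε : ((d:ℝ)+2) * ε = (Real.pi - μ)/2 := by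
      rw [hεdef]; field_simp
    have hMε0 : 0 ≤ ((m:ℝ)+2) * ε := by positivity
    have hMε : ((m:ℝ)+2) * ε ≤ (Real.pi - μ)/2 := by
      nlinarith [mul_nonneg (by linarith : (0:ℝ) ≤ (d:ℝ) - (m:ℝ)) hε.le]
    refine ⟨min θ θ₀ - ε, max θ θ₀ + ε, ?_, ?_, ?_, ?_⟩
    · have := min_le_max (a := θ) (b := θ₀); linarith
    · exact ⟨by linarith [min_le_left θ θ₀], by linarith [le_max_left θ θ₀]⟩
    · refine ⟨θ₀, ⟨by linarith [min_le_right θ θ₀], by linarith [le_max_right θ θ₀]⟩,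
        ‖t‖, habst, ?_⟩
      rw [cast_t d θ₀, rep_t θ₀,
        show α₀ + (((d:ℝ)+2)*θ₀ - ((d:ℝ)+2)*θ) = 0 by rw [hθ₀def]; linear_combination hs]
      simp
    · intro φ hφ
      obtain ⟨hφ1, hφ2⟩ := hφ
      have habs1 := h1μ
      have habs2 := h2μ
      have habs3 := h3μ
      have habs4 := h4μ
      have hdm' : (0:ℝ) < (d:ℝ) - (m:ℝ) := by linarith
      have hbounds : (α₀ + (((d:ℝ)+2)*φ - ((d:ℝ)+2)*θ) ∈ Set.Ioo (-Real.pi) Real.pi) ∧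
          (β₀ + (((m:ℝ)+2)*φ - ((m:ℝ)+2)*θ) ∈ Set.Ioo (-Real.pi) Real.pi) ∧
          ((β₀ + (((m:ℝ)+2)*φ - ((m:ℝ)+2)*θ)) - (α₀ + (((d:ℝ)+2)*φ - ((d:ℝ)+2)*θ))
            ∈ Set.Ioo (-Real.pi) Real.pi) := by
        rcases le_total θ θ₀ with hcmp | hcmp
        · have hmin : min θ θ₀ = θ := min_eq_left hcmp
          have hmax : max θ θ₀ = θ₀ := max_eq_right hcmp
          rw [hmin] at hφ1
          rw [hmax] at hφ2
          have hss : 0 ≤ s := by rw [hθ₀def] at hcmp; linarith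
          rw [hθ₀def] at hφ2
          have hu1 : ((d:ℝ)+2)*φ < ((d:ℝ)+2)*(θ + s + ε) :=
            (mul_lt_mul_iff_right₀ hd2).mpr (by linarith)
          have hl1 : ((d:ℝ)+2)*(θ - ε) < ((d:ℝ)+2)*φ :=
            (mul_lt_mul_iff_right₀ hd2).mpr (by linarith)
          have hu2 : ((m:ℝ)+2)*φ < ((m:ℝ)+2)*(θ + s + ε) :=
            (mul_lt_mul_iff_right₀ hm2).mpr (by linarith)
          have hl2 : ((m:ℝ)+2)*(θ - ε) < ((m:ℝ)+2)*φ :=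
            (mul_lt_mul_iff_right₀ hm2).mpr (by linarith)
          have hu3 : ((d:ℝ)-(m:ℝ))*φ < ((d:ℝ)-(m:ℝ))*(θ + s + ε) :=
            (mul_lt_mul_iff_right₀ hdm').mpr (by linarith)
          have hl3 : ((d:ℝ)-(m:ℝ))*(θ - ε) < ((d:ℝ)-(m:ℝ))*φ :=
            (mul_lt_mul_iff_right₀ hdm').mpr (by linarith)
          refine ⟨⟨?_, ?_⟩, ⟨?_, ?_⟩, ⟨?_, ?_⟩⟩ <;>
            linarith [hs, hKε, hMε, hMε0, hgeq, habs1.1, habs1.2, habs2.1, habs2.2,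
              habs3.1, habs3.2, habs4.1, habs4.2, hμπ, hμ0, hu1, hl1, hu2, hl2, hu3, hl3]
        · have hmin : min θ θ₀ = θ₀ := min_eq_right hcmp
          have hmax : max θ θ₀ = θ := max_eq_left hcmp
          rw [hmin] at hφ1
          rw [hmax] at hφ2
          have hss : s ≤ 0 := by rw [hθ₀def] at hcmp; linarith
          rw [hθ₀def] at hφ1
          have hu1 : ((d:ℝ)+2)*φ < ((d:ℝ)+2)*(θ + ε) :=
            (mul_lt_mul_iff_right₀ hd2).mpr (by linarith)
          have hl1 : ((d:ℝ)+2)*(θ + s - ε) < ((d:ℝ)+2)*φ :=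
            (mul_lt_mul_iff_right₀ hd2).mpr (by linarith)
          have hu2 : ((m:ℝ)+2)*φ < ((m:ℝ)+2)*(θ + ε) :=
            (mul_lt_mul_iff_right₀ hm2).mpr (by linarith)
          have hl2 : ((m:ℝ)+2)*(θ + s - ε) < ((m:ℝ)+2)*φ :=
            (mul_lt_mul_iff_right₀ hm2).mpr (by linarith)
          have hu3 : ((d:ℝ)-(m:ℝ))*φ < ((d:ℝ)-(m:ℝ))*(θ + ε) :=
            (mul_lt_mul_iff_right₀ hdm').mpr (by linarith)
          have hl3 : ((d:ℝ)-(m:ℝ))*(θ + s - ε) < ((d:ℝ)-(m:ℝ))*φ :=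
            (mul_lt_mul_iff_right₀ hdm').mpr (by linarith)
          refine ⟨⟨?_, ?_⟩, ⟨?_, ?_⟩, ⟨?_, ?_⟩⟩ <;>
            linarith [hs, hKε, hMε, hMε0, hgeq, habs1.1, habs1.2, habs2.1, habs2.2,
              habs3.1, habs3.2, habs4.1, habs4.2, hμπ, hμ0, hu1, hl1, hu2, hl2, hu3, hl3]
      obtain ⟨hAφ, hBφ, hΓφ⟩ := hbounds
      refine ⟨?_, ?_, ?_⟩
      · rintro ⟨x, hx, hxe⟩
        rw [cast_t d φ, rep_t φ] at hxe
        exact L2 habst hAφ ⟨x, hx, hxe⟩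
      · rintro ⟨x, hx, hxe⟩
        rw [cast_t m φ, rep_c φ] at hxe
        exact L2 habsc hBφ ⟨x, hx, hxe⟩
      · rintro ⟨x, hx, hxe⟩
        rw [cast_g d m φ] at hxe
        have hpush := gamma_push t c ht (((d:ℝ)+2)*φ) (((m:ℝ)+2)*φ) (((d:ℝ)-(m:ℝ))*φ) _ _
          (by push_cast; ring) (‖t‖) (‖c‖) x (rep_t φ) (rep_c φ) hxe
        obtain ⟨k, hk⟩ := L1 habsc (by nlinarith : -(x * ‖t‖) < 0) hpush
        exact no_odd hΓφ k hk
end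

section
/- Let d > m ≥ 1 be integers, t, c ∈ ℂ \ {0}, and Q(z) = t·z^d + c·z^m. Suppose θ₀ ∈ ℝ satisfies t·e^{i(d+2)θ₀} ∈ (0,∞) (L(θ₀) is an anti-Stokes ray of t z^d) and Q(r·e^{iθ₀}) ≠ 0 for all r > 0 (L(θ₀) contains no turning point of Q). Then there exists ε > 0 such that every θ ∈ (θ₀ − ε, θ₀ + ε) is a good ray for Q. -/
open Complex

/-- Algebraic identity: `z² Q(z) = r^{d+2} · t e^{i(d+2)θ} + r^{m+2} · c e^{i(m+2)θ}`. -/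
lemma keyA (d m : ℕ) (t c : ℂ) (θ r : ℝ) :
    ((r : ℂ) * Complex.exp ((θ : ℂ) * Complex.I)) ^ 2 *
      (t * ((r : ℂ) * Complex.exp ((θ : ℂ) * Complex.I)) ^ d +
       c * ((r : ℂ) * Complex.exp ((θ : ℂ) * Complex.I)) ^ m)
    = ((r ^ (d + 2) : ℝ) : ℂ) * (t * Complex.exp ((((d : ℝ) + 2) * θ : ℂ) * Complex.I)) +
      ((r ^ (m + 2) : ℝ) : ℂ) * (c * Complex.exp ((((m : ℝ) + 2) * θ : ℂ) * Complex.I)) := by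
  have e : ∀ k : ℕ, Complex.exp ((((k : ℝ) + 2) * θ : ℂ) * Complex.I)
      = Complex.exp ((θ : ℂ) * Complex.I) ^ (k + 2) := by
    intro k
    rw [← Complex.exp_nat_mul]
    congr 1
    push_cast
    ring
  rw [e d, e m]
  push_cast
  ring

/-- Core inequality: if `u` lies in a narrow sector about the positive real axis and `v`
avoids a neighbourhood of the nonpositive real axis, then no positive combination
`A u + B v` is a nonpositive real number. -/
lemma keyB (u v : ℂ) (η κ : ℝ) (hη : 0 < η) (hu : 0 < u.re)
    (him : |u.im| ≤ κ * u.re) (hκv : κ * ‖v‖ < η)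
    (hv : v.re ≤ 0 → η ≤ |v.im|) (A B : ℝ) (hA : 0 < A) (hB : 0 < B)
    (x : ℝ) (hx : x ≤ 0) : (A : ℂ) * u + (B : ℂ) * v ≠ (x : ℂ) := by
  intro h
  have hIm : A * u.im + B * v.im = 0 := by
    have h' := congrArg Complex.im h
    simpa using h'
  have hRe : A * u.re + B * v.re = x := by
    have h' := congrArg Complex.re h
    simpa using h'
  have hvre : v.re < 0 := by nlinarith
  have hηv : η ≤ |v.im| := hv hvre.le
  have hBv : B * v.im = -(A * u.im) := by linarith
  have h1 : B * |v.im| ≤ A * (κ * u.re) := by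
    calc B * |v.im| = |B * v.im| := by rw [abs_mul, abs_of_pos hB]
    _ = |A * u.im| := by rw [hBv, abs_neg]
    _ = A * |u.im| := by rw [abs_mul, abs_of_pos hA]
    _ ≤ A * (κ * u.re) := mul_le_mul_of_nonneg_left him hA.le
  have h2 : B * η ≤ A * (κ * u.re) := le_trans (by nlinarith) h1
  have h3 : -(‖v‖) ≤ v.re := by
    have h4 := Complex.abs_re_le_norm v
    have h5 := neg_abs_le v.re
    linarith
  have h4 : B * ‖v‖ < A * u.re := by
    nlinarith [mul_le_mul_of_nonneg_right h2 (norm_nonneg v),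
      mul_lt_mul_of_pos_left hκv (mul_pos hA hu), norm_nonneg v]
  nlinarith [mul_le_mul_of_nonneg_left h3 hB.le]

/-- If `L(θ₀)` is an anti-Stokes ray of `t z^d` containing no turning point of
`Q = t z^d + c z^m`, then all nearby rays are good rays for `Q`. -/
theorem good_subsector_exists
    (d m : ℕ) (hm : 1 ≤ m) (hdm : m < d)
    (t c : ℂ) (ht : t ≠ 0) (hc : c ≠ 0) (θ₀ : ℝ)
    (hanti : ∃ x : ℝ, 0 < x ∧
      t * Complex.exp ((((d : ℝ) + 2) * θ₀ : ℂ) * Complex.I) = (x : ℂ))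
    (hnoturn : ∀ r : ℝ, 0 < r →
      t * ((r : ℂ) * Complex.exp ((θ₀ : ℂ) * Complex.I)) ^ d +
        c * ((r : ℂ) * Complex.exp ((θ₀ : ℂ) * Complex.I)) ^ m ≠ 0) :
    ∃ ε > (0 : ℝ), ∀ θ ∈ Set.Ioo (θ₀ - ε) (θ₀ + ε), GoodRay d m t c θ := by
  obtain ⟨x₀, hx₀, hu₀⟩ := hanti
  have hv₀ne : c * Complex.exp ((((m : ℝ) + 2) * θ₀ : ℂ) * Complex.I) ≠ 0 :=
    mul_ne_zero hc (Complex.exp_ne_zero _)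
  -- Step 1 : v₀ is not a negative real number
  have hv₀neg : ¬ ((c * Complex.exp ((((m : ℝ) + 2) * θ₀ : ℂ) * Complex.I)).im = 0 ∧
      (c * Complex.exp ((((m : ℝ) + 2) * θ₀ : ℂ) * Complex.I)).re < 0) := by
    rintro ⟨him0, hre0⟩
    set v₀ : ℂ := c * Complex.exp ((((m : ℝ) + 2) * θ₀ : ℂ) * Complex.I) with hv₀def
    set s : ℝ := -v₀.re with hs
    have hspos : 0 < s := by simp only [hs]; linarith
    have hv₀eq : v₀ = ((-s : ℝ) : ℂ) := by
      apply Complex.ext <;> simp [hs, him0]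
    set n : ℕ := d - m with hn
    have hnpos : n ≠ 0 := by omega
    set r : ℝ := (s / x₀) ^ ((n : ℝ)⁻¹) with hr
    have hdiv : 0 < s / x₀ := div_pos hspos hx₀
    have hrpos : 0 < r := Real.rpow_pos_of_pos hdiv _
    have hrn : r ^ n = s / x₀ := Real.rpow_inv_natCast_pow hdiv.le hnpos
    have hkey : r ^ (d + 2) * x₀ - r ^ (m + 2) * s = 0 := by
      have hexp : m + 2 + n = d + 2 := by omega
      have hpow : r ^ (d + 2) = r ^ (m + 2) * r ^ n := by rw [← pow_add, hexp]
      rw [hpow, hrn]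
      field_simp
      ring
    apply hnoturn r hrpos
    have hz : ((r : ℂ) * Complex.exp ((θ₀ : ℂ) * Complex.I)) ≠ 0 :=
      mul_ne_zero (by exact_mod_cast hrpos.ne') (Complex.exp_ne_zero _)
    have h2 : ((r : ℂ) * Complex.exp ((θ₀ : ℂ) * Complex.I)) ^ 2 *
        (t * ((r : ℂ) * Complex.exp ((θ₀ : ℂ) * Complex.I)) ^ d +
         c * ((r : ℂ) * Complex.exp ((θ₀ : ℂ) * Complex.I)) ^ m) = 0 := by
      rw [keyA, hu₀, ← hv₀def, hv₀eq]
      have hre : ((r ^ (d + 2) * x₀ + r ^ (m + 2) * (-s) : ℝ) : ℂ) = ((0 : ℝ) : ℂ) := by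
        congr 1
        linarith
      push_cast at hre ⊢
      linear_combination hre
    rcases mul_eq_zero.mp h2 with h | h
    · exact absurd h (pow_ne_zero 2 hz)
    · exact h
  -- Step 2 : pick η, ρ such that near v₀, points in the closed left half-plane
  -- have |Im| ≥ η
  obtain ⟨η, hη, ρ, hρ, hP⟩ :
      ∃ η > (0 : ℝ), ∃ ρ > (0 : ℝ), ∀ w : ℂ,
        ‖w - c * Complex.exp ((((m : ℝ) + 2) * θ₀ : ℂ) * Complex.I)‖ < ρ →
        w.re ≤ 0 → η ≤ |w.im| := by
    set v₀ : ℂ := c * Complex.exp ((((m : ℝ) + 2) * θ₀ : ℂ) * Complex.I) with hv₀def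
    by_cases him0 : v₀.im = 0
    · have hre0 : 0 < v₀.re := by
        rcases lt_trichotomy v₀.re 0 with h | h | h
        · exact absurd ⟨him0, h⟩ hv₀neg
        · exfalso; apply hv₀ne
          apply Complex.ext <;> simp [him0, h]
        · exact h
      refine ⟨1, one_pos, v₀.re / 2, by linarith, fun w hw hwre => ?_⟩
      exfalso
      have h1 : |(w - v₀).re| ≤ ‖w - v₀‖ := Complex.abs_re_le_norm _
      have h2 : |(w.re - v₀.re)| < v₀.re / 2 := by
        simpa [Complex.sub_re] using lt_of_le_of_lt h1 hw
      rw [abs_lt] at h2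
      linarith
    · have h0 : 0 < |v₀.im| := abs_pos.mpr him0
      refine ⟨|v₀.im| / 2, by linarith, |v₀.im| / 2, by linarith, fun w hw _ => ?_⟩
      have h1 : |(w - v₀).im| ≤ ‖w - v₀‖ := Complex.abs_im_le_norm _
      have h2 : |(w.im - v₀.im)| < |v₀.im| / 2 := by
        simpa [Complex.sub_im] using lt_of_le_of_lt h1 hw
      have h3 := abs_sub_abs_le_abs_sub v₀.im w.im
      rw [abs_sub_comm v₀.im w.im] at h3
      linarith
  -- Step 3 : choose κ
  set κ : ℝ := η / (2 * (‖c‖ + 1)) with hκ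
  have habsc : 0 ≤ ‖c‖ := norm_nonneg c
  have hκpos : 0 < κ := by positivity
  have hκc : κ * ‖c‖ < η := by
    rw [hκ, div_mul_eq_mul_div, div_lt_iff₀ (by positivity)]
    nlinarith
  -- Step 4 : continuity
  set ρ' : ℝ := min (x₀ / 2) (κ * x₀ / 2) with hρ'
  have hρ'pos : 0 < ρ' := lt_min (by linarith) (by positivity)
  have hfc : Continuous fun θ : ℝ =>
      t * Complex.exp ((((d : ℝ) + 2) * θ : ℂ) * Complex.I) := by
    fun_prop
  have hgc : Continuous fun θ : ℝ =>
      c * Complex.exp ((((m : ℝ) + 2) * θ : ℂ) * Complex.I) := by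
    fun_prop
  obtain ⟨δ₁, hδ₁, hδ₁'⟩ := Metric.continuousAt_iff.mp hfc.continuousAt ρ' hρ'pos
  obtain ⟨δ₂, hδ₂, hδ₂'⟩ := Metric.continuousAt_iff.mp hgc.continuousAt ρ hρ
  refine ⟨min δ₁ δ₂, lt_min hδ₁ hδ₂, fun θ hθ => ?_⟩
  have hdist : dist θ θ₀ < min δ₁ δ₂ := by
    rw [Real.dist_eq, abs_lt]
    obtain ⟨h1, h2⟩ := hθ
    constructor <;> [linarith [min_le_left δ₁ δ₂]; linarith]
  have hdu : dist (t * Complex.exp ((((d : ℝ) + 2) * θ : ℂ) * Complex.I))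
      (t * Complex.exp ((((d : ℝ) + 2) * θ₀ : ℂ) * Complex.I)) < ρ' :=
    hδ₁' (lt_of_lt_of_le hdist (min_le_left _ _))
  have hdv : dist (c * Complex.exp ((((m : ℝ) + 2) * θ : ℂ) * Complex.I))
      (c * Complex.exp ((((m : ℝ) + 2) * θ₀ : ℂ) * Complex.I)) < ρ :=
    hδ₂' (lt_of_lt_of_le hdist (min_le_right _ _))
  -- properties of u = t e^{i(d+2)θ}
  obtain ⟨u, huEq, hupos, huim⟩ :
      ∃ u : ℂ, t * Complex.exp ((((d : ℝ) + 2) * θ : ℂ) * Complex.I) = u ∧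
        0 < u.re ∧ |u.im| ≤ κ * u.re := by
    refine ⟨_, rfl, ?_, ?_⟩
    · have hdux : ‖t * Complex.exp ((((d : ℝ) + 2) * θ : ℂ) * Complex.I) - ((x₀ : ℝ) : ℂ)‖ < ρ' := by
        rw [← hu₀, ← Complex.dist_eq]
        exact hdu
      have h1 : |(t * Complex.exp ((((d : ℝ) + 2) * θ : ℂ) * Complex.I) - ((x₀ : ℝ) : ℂ)).re|
          ≤ ‖_‖ := Complex.abs_re_le_norm _
      have h2 : |(t * Complex.exp ((((d : ℝ) + 2) * θ : ℂ) * Complex.I)).re - x₀| < ρ' := by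
        simpa [Complex.sub_re] using lt_of_le_of_lt h1 hdux
      rw [abs_lt] at h2
      have := min_le_left (x₀ / 2) (κ * x₀ / 2)
      rw [← hρ'] at this
      linarith
    · have hdux : ‖t * Complex.exp ((((d : ℝ) + 2) * θ : ℂ) * Complex.I) - ((x₀ : ℝ) : ℂ)‖ < ρ' := by
        rw [← hu₀, ← Complex.dist_eq]
        exact hdu
      have h1 : |(t * Complex.exp ((((d : ℝ) + 2) * θ : ℂ) * Complex.I) - ((x₀ : ℝ) : ℂ)).im|
          ≤ ‖_‖ := Complex.abs_im_le_norm _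
      have h2 : |(t * Complex.exp ((((d : ℝ) + 2) * θ : ℂ) * Complex.I)).im| < ρ' := by
        simpa [Complex.sub_im] using lt_of_le_of_lt h1 hdux
      have h1' : |(t * Complex.exp ((((d : ℝ) + 2) * θ : ℂ) * Complex.I) - ((x₀ : ℝ) : ℂ)).re|
          ≤ ‖_‖ := Complex.abs_re_le_norm _
      have h2' : |(t * Complex.exp ((((d : ℝ) + 2) * θ : ℂ) * Complex.I)).re - x₀| < ρ' := by
        simpa [Complex.sub_re] using lt_of_le_of_lt h1' hdux
      rw [abs_lt] at h2'
      have ha := min_le_left (x₀ / 2) (κ * x₀ / 2)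
      have hb := min_le_right (x₀ / 2) (κ * x₀ / 2)
      rw [← hρ'] at ha hb
      nlinarith [abs_nonneg (t * Complex.exp ((((d : ℝ) + 2) * θ : ℂ) * Complex.I)).im]
  -- properties of v = c e^{i(m+2)θ}
  obtain ⟨v, hvEq, hκv, hvP⟩ :
      ∃ v : ℂ, c * Complex.exp ((((m : ℝ) + 2) * θ : ℂ) * Complex.I) = v ∧
        κ * ‖v‖ < η ∧ (v.re ≤ 0 → η ≤ |v.im|) := by
    refine ⟨_, rfl, ?_, ?_⟩
    · have habsv : ‖c * Complex.exp ((((m : ℝ) + 2) * θ : ℂ) * Complex.I)‖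
          = ‖c‖ := by
        rw [norm_mul, Complex.norm_exp]
        have hz : ((((m : ℝ) + 2) * θ : ℂ) * Complex.I).re = 0 := by
          simp [Complex.mul_re]
        rw [hz, Real.exp_zero, mul_one]
      rw [habsv]
      exact hκc
    · intro hre
      apply hP
      · rw [← Complex.dist_eq]
        exact hdv
      · exact hre
  -- conclusion
  refine ⟨?_, ?_, ?_, ?_⟩
  · rintro ⟨x, hx, hxeq⟩
    rw [huEq] at hxeq
    have : u.re = x := by rw [hxeq]; simp
    linarith
  · rintro ⟨x, hx, hxeq⟩
    rw [hvEq] at hxeq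
    have h1 : v.re = x := by rw [hxeq]; simp
    have h2 : v.im = 0 := by rw [hxeq]; simp
    have h3 := hvP (by linarith)
    rw [h2] at h3
    simp only [abs_zero] at h3
    linarith
  · intro r hr h0
    have hA : (0 : ℝ) < r ^ (d + 2) := pow_pos hr _
    have hB : (0 : ℝ) < r ^ (m + 2) := pow_pos hr _
    apply keyB u v η κ hη hupos huim hκv hvP (r ^ (d + 2)) (r ^ (m + 2)) hA hB 0 le_rfl
    rw [← huEq, ← hvEq, ← keyA d m t c θ r, h0]
    simp
  · rintro r hr ⟨x, hx, hxeq⟩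
    have hA : (0 : ℝ) < r ^ (d + 2) := pow_pos hr _
    have hB : (0 : ℝ) < r ^ (m + 2) := pow_pos hr _
    apply keyB u v η κ hη hupos huim hκv hvP (r ^ (d + 2)) (r ^ (m + 2)) hA hB x hx
    rw [← huEq, ← hvEq, ← keyA d m t c θ r]
    exact hxeq
end

section
/- Let d > m ≥ 1 be integers, t, c ∈ ℂ \ {0}, and Q(z) = t·z^d + c·z^m. Then the direction θ = 0 (the positive real ray) is a good ray for Q if and only if (Arg t, Arg c) ∈ H, where Arg denotes the principal argument with values in (−π, π] and H = {(x,y) ∈ ℝ² : |x| < π, |y| < π, |y − x| < π} is the open hexagon. -/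
open Complex

private lemma arg_pos_of_im_pos {z : ℂ} (h : 0 < z.im) : 0 < z.arg := by
  rcases lt_or_eq_of_le (Complex.arg_nonneg_iff.2 h.le) with h' | h'
  · exact h'
  · exact absurd (Complex.arg_eq_zero_iff.1 h'.symm).2 (by linarith)

private lemma im_pos_of_arg {z : ℂ} (h0 : 0 < z.arg) (h1 : z.arg < Real.pi) : 0 < z.im := by
  rcases lt_trichotomy z.im 0 with h | h | h
  · exact absurd (Complex.arg_neg_iff.2 h) (by linarith)
  · rcases lt_trichotomy z.re 0 with hr | hr | hr
    · exact absurd (Complex.arg_eq_pi_iff.2 ⟨hr, h⟩) (by linarith)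
    · have hz : z = 0 := by
        apply Complex.ext <;> simp [hr, h]
      rw [hz, Complex.arg_zero] at h0; linarith
    · exact absurd (Complex.arg_eq_zero_iff.2 ⟨hr.le, h⟩) (by linarith)
  · exact h

private lemma re_pos_of_im_zero {z : ℂ} (hz : z ≠ 0) (h1 : |z.arg| < Real.pi)
    (h : z.im = 0) : 0 < z.re := by
  rcases lt_trichotomy z.re 0 with hr | hr | hr
  · exact absurd (Complex.arg_eq_pi_iff.2 ⟨hr, h⟩) (by rw [abs_lt] at h1; linarith [h1.2])
  · exact absurd (Complex.ext (by simp [hr]) (by simp [h])) hz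
  · exact hr

private lemma notNegReal_iff {t : ℂ} (ht : t ≠ 0) :
    (¬ ∃ x : ℝ, x < 0 ∧ t = (x : ℂ)) ↔ |Complex.arg t| < Real.pi := by
  rw [abs_lt]
  constructor
  · intro h
    refine ⟨Complex.neg_pi_lt_arg t, lt_of_le_of_ne (Complex.arg_le_pi t) ?_⟩
    intro hpi
    obtain ⟨hre, him⟩ := Complex.arg_eq_pi_iff.1 hpi
    exact h ⟨t.re, hre, Complex.ext (by simp) (by simpa using him)⟩
  · rintro ⟨_, h2⟩ ⟨x, hx, hxe⟩
    have : Complex.arg t = Real.pi :=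
      Complex.arg_eq_pi_iff.2 ⟨by simp [hxe, hx], by simp [hxe]⟩
    linarith

private lemma sin_arg_sub (w z : ℂ) (hw : w ≠ 0) (hz : z ≠ 0) :
    Real.sin (w.arg - z.arg) * (‖w‖ * ‖z‖) = w.im * z.re - w.re * z.im := by
  have hw' : ‖w‖ ≠ 0 := norm_ne_zero_iff.mpr hw
  have hz' : ‖z‖ ≠ 0 := norm_ne_zero_iff.mpr hz
  rw [Real.sin_sub, Complex.sin_arg, Complex.sin_arg, Complex.cos_arg hw, Complex.cos_arg hz]
  field_simp

private lemma key_iff (t c : ℂ) (ht : t ≠ 0) (hc : c ≠ 0)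
    (hα : |Complex.arg t| < Real.pi) (hβ : |Complex.arg c| < Real.pi) :
    (∀ s : ℝ, 0 < s → ¬ ∃ x : ℝ, x ≤ 0 ∧ t * (s : ℂ) + c = (x : ℂ)) ↔
      |Complex.arg c - Complex.arg t| < Real.pi := by
  have habs_t : 0 < ‖t‖ := norm_pos_iff.mpr ht
  have habs_c : 0 < ‖c‖ := norm_pos_iff.mpr hc
  obtain ⟨hα1, hα2⟩ := abs_lt.1 hα
  obtain ⟨hβ1, hβ2⟩ := abs_lt.1 hβ
  constructor
  · intro h
    by_contra hcon
    push_neg at hcon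
    rcases le_abs.1 hcon with hd | hd
    · -- π ≤ arg c - arg t
      have hβpos : 0 < Complex.arg c := by linarith
      have hαneg : Complex.arg t < 0 := by linarith
      have hq : 0 < c.im := im_pos_of_arg hβpos hβ2
      have hb : t.im < 0 := Complex.arg_neg_iff.1 hαneg
      set s := c.im / (-t.im) with hs
      have hs0 : 0 < s := div_pos hq (by linarith)
      have h5 : s * (-t.im) = c.im := div_mul_cancel₀ _ (by linarith)
      have hsin : Real.sin (Complex.arg c - Complex.arg t) ≤ 0 := by
        have h2π : Complex.arg c - Complex.arg t - Real.pi ≤ Real.pi := by linarith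
        have h0 : 0 ≤ Complex.arg c - Complex.arg t - Real.pi := by linarith
        have := Real.sin_nonneg_of_nonneg_of_le_pi h0 h2π
        rw [Real.sin_sub_pi] at this
        linarith
      have hqa : c.im * t.re - c.re * t.im ≤ 0 := by
        rw [← sin_arg_sub c t hc ht]
        exact mul_nonpos_of_nonpos_of_nonneg hsin (mul_nonneg habs_c.le habs_t.le)
      refine h s hs0 ⟨s * t.re + c.re, ?_, ?_⟩
      · have h6 : (s * t.re + c.re) * (-t.im) = c.im * t.re - c.re * t.im := by
          linear_combination t.re * h5
        have h7 : (s * t.re + c.re) * (-t.im) ≤ 0 * (-t.im) := by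
          rw [zero_mul]; linarith
        exact le_of_mul_le_mul_right h7 (by linarith)
      · apply Complex.ext
        · simp only [Complex.add_re, Complex.mul_re, Complex.ofReal_re, Complex.ofReal_im,
            mul_zero, sub_zero]
          ring
        · simp only [Complex.add_im, Complex.mul_im, Complex.ofReal_im, Complex.ofReal_re,
            mul_zero, zero_add]
          linear_combination -h5
    · -- π ≤ arg t - arg c
      have hαpos : 0 < Complex.arg t := by linarith
      have hβneg : Complex.arg c < 0 := by linarith
      have hb : 0 < t.im := im_pos_of_arg hαpos hα2
      have hq : c.im < 0 := Complex.arg_neg_iff.1 hβneg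
      set s := (-c.im) / t.im with hs
      have hs0 : 0 < s := div_pos (by linarith) hb
      have h5 : s * t.im = -c.im := div_mul_cancel₀ _ (by linarith)
      have hsin : Real.sin (Complex.arg t - Complex.arg c) ≤ 0 := by
        have h2π : Complex.arg t - Complex.arg c - Real.pi ≤ Real.pi := by linarith
        have h0 : 0 ≤ Complex.arg t - Complex.arg c - Real.pi := by linarith
        have := Real.sin_nonneg_of_nonneg_of_le_pi h0 h2π
        rw [Real.sin_sub_pi] at this
        linarith
      have hqa : t.im * c.re - t.re * c.im ≤ 0 := by
        rw [← sin_arg_sub t c ht hc]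
        exact mul_nonpos_of_nonpos_of_nonneg hsin (mul_nonneg habs_t.le habs_c.le)
      refine h s hs0 ⟨s * t.re + c.re, ?_, ?_⟩
      · have h6 : (s * t.re + c.re) * t.im = t.im * c.re - t.re * c.im := by
          linear_combination t.re * h5
        have h6' : (s * t.re + c.re) * t.im ≤ 0 * t.im := by
          rw [zero_mul]; linarith
        exact le_of_mul_le_mul_right h6' hb
      · apply Complex.ext
        · simp only [Complex.add_re, Complex.mul_re, Complex.ofReal_re, Complex.ofReal_im,
            mul_zero, sub_zero]
          ring
        · simp only [Complex.add_im, Complex.mul_im, Complex.ofReal_im, Complex.ofReal_re,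
            mul_zero, zero_add]
          linear_combination h5
  · rintro hγ s hs ⟨x, hx, heq⟩
    obtain ⟨hγ1, hγ2⟩ := abs_lt.1 hγ
    have him : t.im * s + c.im = 0 := by
      have := congrArg Complex.im heq
      simpa using this
    have hre : t.re * s + c.re = x := by
      have := congrArg Complex.re heq
      simpa using this
    rcases lt_trichotomy t.im 0 with hb | hb | hb
    · have hq : 0 < c.im := by nlinarith [mul_neg_of_neg_of_pos hb hs]
      have hβpos : 0 < Complex.arg c := arg_pos_of_im_pos hq
      have hαneg : Complex.arg t < 0 := Complex.arg_neg_iff.2 hb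
      have hsin : 0 < Real.sin (Complex.arg c - Complex.arg t) :=
        Real.sin_pos_of_pos_of_lt_pi (by linarith) hγ2
      have hqa : 0 < c.im * t.re - c.re * t.im := by
        rw [← sin_arg_sub c t hc ht]
        exact mul_pos hsin (mul_pos habs_c habs_t)
      have hxe : x * (-t.im) = c.im * t.re - c.re * t.im := by
        linear_combination t.im * hre - t.re * him
      have h8 : x * (-t.im) ≤ 0 :=
        mul_nonpos_of_nonpos_of_nonneg hx (by linarith)
      linarith
    · rw [hb] at him
      have hq : c.im = 0 := by linarith [him]
      have ha : 0 < t.re := re_pos_of_im_zero ht hα hb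
      have hp : 0 < c.re := re_pos_of_im_zero hc hβ hq
      nlinarith [mul_pos ha hs]
    · have hq : c.im < 0 := by nlinarith [mul_pos hb hs]
      have hαpos : 0 < Complex.arg t := arg_pos_of_im_pos hb
      have hβneg : Complex.arg c < 0 := Complex.arg_neg_iff.2 hq
      have hsin : 0 < Real.sin (Complex.arg t - Complex.arg c) :=
        Real.sin_pos_of_pos_of_lt_pi (by linarith) (by linarith)
      have hqa : 0 < t.im * c.re - t.re * c.im := by
        rw [← sin_arg_sub t c ht hc]
        exact mul_pos hsin (mul_pos habs_t habs_c)
      have hxe : x * t.im = t.im * c.re - t.re * c.im := by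
        linear_combination -t.im * hre + t.re * him
      have h8 : x * t.im ≤ 0 := mul_nonpos_of_nonpos_of_nonneg hx hb.le
      linarith

private lemma splitpow (R t c : ℂ) (d m : ℕ) (hdm : m ≤ d) :
    R ^ 2 * (t * R ^ d + c * R ^ m) = R ^ (m + 2) * (t * R ^ (d - m) + c) := by
  obtain ⟨k, rfl⟩ : ∃ k, d = k + m := ⟨d - m, (Nat.sub_add_cancel hdm).symm⟩
  simp only [Nat.add_sub_cancel, pow_add]
  ring

private lemma ray_iff (d m : ℕ) (hdm : m < d) (t c : ℂ) :
    (∀ r : ℝ, 0 < r → ¬ ∃ x : ℝ, x ≤ 0 ∧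
        (r : ℂ) ^ 2 * (t * (r : ℂ) ^ d + c * (r : ℂ) ^ m) = (x : ℂ)) ↔
      (∀ s : ℝ, 0 < s → ¬ ∃ x : ℝ, x ≤ 0 ∧ t * (s : ℂ) + c = (x : ℂ)) := by
  constructor
  · rintro h s hs ⟨x, hx, he⟩
    set r : ℝ := s ^ (((d - m : ℕ) : ℝ))⁻¹ with hr0
    have hr : 0 < r := Real.rpow_pos_of_pos hs _
    have hrdm : r ^ (d - m) = s := by
      rw [hr0, ← Real.rpow_natCast (s ^ (((d - m : ℕ) : ℝ))⁻¹) (d - m),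
        ← Real.rpow_mul hs.le, inv_mul_cancel₀, Real.rpow_one]
      exact_mod_cast (by omega : (d - m : ℕ) ≠ 0)
    refine h r hr ⟨r ^ (m + 2) * x, mul_nonpos_of_nonneg_of_nonpos (pow_nonneg hr.le _) hx, ?_⟩
    rw [splitpow _ t c d m hdm.le]
    have hc : ((r : ℂ)) ^ (d - m) = (s : ℂ) := by
      rw [← hrdm]; push_cast; ring
    rw [hc, he]
    push_cast
    ring
  · rintro h r hr ⟨x, hx, he⟩
    have hs : 0 < r ^ (d - m) := pow_pos hr _
    have hRne : ((r : ℂ)) ^ (m + 2) ≠ 0 := pow_ne_zero _ (by exact_mod_cast hr.ne')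
    refine h (r ^ (d - m)) hs
      ⟨x / r ^ (m + 2), div_nonpos_of_nonpos_of_nonneg hx (pow_nonneg hr.le _), ?_⟩
    rw [splitpow _ t c d m hdm.le] at he
    have hcast : ((r ^ (d - m) : ℝ) : ℂ) = ((r : ℂ)) ^ (d - m) := by push_cast; ring
    rw [hcast]
    have h9 : t * (r : ℂ) ^ (d - m) + c = (x : ℂ) / ((r : ℂ)) ^ (m + 2) := by
      rw [eq_div_iff hRne, ← he]; ring
    rw [h9]
    push_cast
    ring

/-- The positive real ray is a good ray for `Q = t z^d + c z^m` if and only if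
`(Arg t, Arg c)` lies in the open hexagon
`H = {(x,y) : |x| < π, |y| < π, |y − x| < π}`. -/
theorem positive_ray_good_iff_hexagon
    (d m : ℕ) (hm : 1 ≤ m) (hdm : m < d)
    (t c : ℂ) (ht : t ≠ 0) (hc : c ≠ 0) :
    GoodRay d m t c 0 ↔
      (|Complex.arg t| < Real.pi ∧ |Complex.arg c| < Real.pi ∧
        |Complex.arg c - Complex.arg t| < Real.pi) := by
  unfold GoodRay
  simp only [Complex.ofReal_zero, mul_zero, Complex.ofReal_mul, zero_mul, Complex.exp_zero,
    mul_one]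
  constructor
  · rintro ⟨h1, h2, h3, h4⟩
    exact ⟨(notNegReal_iff ht).1 h1, (notNegReal_iff hc).1 h2,
      (key_iff t c ht hc ((notNegReal_iff ht).1 h1) ((notNegReal_iff hc).1 h2)).1
        ((ray_iff d m hdm t c).1 h4)⟩
  · rintro ⟨h1, h2, h3⟩
    have key := (key_iff t c ht hc h1 h2).2 h3
    have h4 := (ray_iff d m hdm t c).2 key
    refine ⟨(notNegReal_iff ht).2 h1, (notNegReal_iff hc).2 h2, ?_, h4⟩
    intro r hr h0
    exact h4 r hr ⟨0, le_refl 0, by rw [h0]; simp⟩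
end

section
/- Let d > m ≥ 1 be integers, t, c ∈ ℂ \ {0}, Q(z) = t·z^d + c·z^m, and θ ∈ ℝ. Then θ is a good ray for Q if and only if there exist integers k and l such that (Arg t + (d+2)θ − 2πk, Arg c + (m+2)θ − 2πl) ∈ H, where Arg denotes the principal argument with values in (−π, π] and H = {(x,y) ∈ ℝ² : |x| < π, |y| < π, |y − x| < π}. -/
open Complex

namespace GoodRayAux

local notation "π" => Real.pi

lemma re_eq {z : ℂ} (hz : z ≠ 0) : z.re = ‖z‖ * Real.cos (Complex.arg z) := by
  rw [Complex.cos_arg hz, mul_comm, div_mul_cancel₀ _ (norm_ne_zero_iff.mpr hz)]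

lemma im_eq {z : ℂ} (hz : z ≠ 0) : z.im = ‖z‖ * Real.sin (Complex.arg z) := by
  rw [Complex.sin_arg, mul_comm, div_mul_cancel₀ _ (norm_ne_zero_iff.mpr hz)]

/-- Claim (1): if the reduced args are within π of each other, no positive multiple
plus the other is a nonpositive real. -/
lemma aux1 {A B : ℂ} (hA : A ≠ 0) (hB : B ≠ 0)
    (haπ : Complex.arg A ≠ π) (hbπ : Complex.arg B ≠ π)
    (hab : |Complex.arg B - Complex.arg A| < π) :
    ∀ s : ℝ, 0 < s → ¬ ∃ x : ℝ, x ≤ 0 ∧ (s : ℂ) * A + B = (x : ℂ) := by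
  intro s hs ⟨x, hx, heq⟩
  set a := Complex.arg A with ha_def
  set b := Complex.arg B with hb_def
  have ha1 : -π < a := Complex.neg_pi_lt_arg A
  have ha2 : a < π := lt_of_le_of_ne (Complex.arg_le_pi A) haπ
  have hb1 : -π < b := Complex.neg_pi_lt_arg B
  have hb2 : b < π := lt_of_le_of_ne (Complex.arg_le_pi B) hbπ
  have hu : 0 < s * ‖A‖ := mul_pos hs (norm_pos_iff.mpr hA)
  have hv : 0 < ‖B‖ := norm_pos_iff.mpr hB
  set u := s * ‖A‖
  set v := ‖B‖
  have him : u * Real.sin a + v * Real.sin b = 0 := by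
    have := congrArg Complex.im heq
    simp only [Complex.add_im, Complex.mul_im, Complex.ofReal_re, Complex.ofReal_im,
      zero_mul, add_zero, mul_zero] at this
    rw [im_eq hA, im_eq hB] at this
    rw [← this]; ring
  have hre : u * Real.cos a + v * Real.cos b ≤ x := by
    have := congrArg Complex.re heq
    simp only [Complex.add_re, Complex.mul_re, Complex.ofReal_re, Complex.ofReal_im,
      zero_mul, sub_zero, mul_zero] at this
    rw [re_eq hA, re_eq hB] at this
    rw [← this]; ring_nf; rfl
  have hre' : u * Real.cos a + v * Real.cos b ≤ 0 := le_trans hre hx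
  rcases lt_trichotomy (Real.sin a) 0 with hsina | hsina | hsina
  · -- sin a < 0, so sin b > 0, b ∈ (0,π), a ∈ (-π,0)
    have hsinb : 0 < Real.sin b := by nlinarith
    have hbpos : 0 < b := by
      by_contra h
      push_neg at h
      have : Real.sin b ≤ 0 := by
        have := Real.sin_nonneg_of_nonneg_of_le_pi (x := -b) (by linarith) (by linarith)
        rw [Real.sin_neg] at this; linarith
      linarith
    have hapos : a < 0 := by
      by_contra h
      push_neg at h
      have : 0 ≤ Real.sin a := Real.sin_nonneg_of_nonneg_of_le_pi h (le_of_lt ha2)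
      linarith
    have hba : 0 < b - a := by linarith
    have hba2 : b - a < π := by
      have : b - a ≤ |b - a| := le_abs_self _
      linarith
    have hsinba : 0 < Real.sin (b - a) := Real.sin_pos_of_pos_of_lt_pi hba hba2
    have h1 : 0 ≤ (u * Real.cos a + v * Real.cos b) * Real.sin a := by nlinarith
    have h2 : (u * Real.sin a + v * Real.sin b) * Real.cos a = 0 := by rw [him]; ring
    have key : v * Real.sin (b - a) ≤ 0 := by
      rw [Real.sin_sub]; nlinarith
    nlinarith
  · -- sin a = 0, so a = 0, b = 0
    have ha0 : a = 0 := (Real.sin_eq_zero_iff_of_lt_of_lt ha1 ha2).1 hsina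
    have hsinb : Real.sin b = 0 := by
      rw [ha0] at him; simp at him
      rcases him with h | h
      · exact absurd h (ne_of_gt hv)
      · exact h
    have hb0 : b = 0 := (Real.sin_eq_zero_iff_of_lt_of_lt hb1 hb2).1 hsinb
    rw [ha0, hb0] at hre'
    simp [Real.cos_zero] at hre'
    nlinarith
  · -- sin a > 0: sin b < 0, a ∈ (0,π), b ∈ (-π,0)
    have hsinb : Real.sin b < 0 := by nlinarith
    have hbneg : b < 0 := by
      by_contra h
      push_neg at h
      have : 0 ≤ Real.sin b := Real.sin_nonneg_of_nonneg_of_le_pi h (le_of_lt hb2)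
      linarith
    have hapos : 0 < a := by
      by_contra h
      push_neg at h
      have : Real.sin a ≤ 0 := by
        have := Real.sin_nonneg_of_nonneg_of_le_pi (x := -a) (by linarith) (by linarith)
        rw [Real.sin_neg] at this; linarith
      linarith
    have hab1 : 0 < a - b := by linarith
    have hab2 : a - b < π := by
      have h' : a - b ≤ |b - a| := by rw [abs_sub_comm]; exact le_abs_self _
      linarith
    have hsinab : 0 < Real.sin (a - b) := Real.sin_pos_of_pos_of_lt_pi hab1 hab2
    have h1 : (u * Real.cos a + v * Real.cos b) * Real.sin a ≤ 0 :=
      mul_nonpos_of_nonpos_of_nonneg hre' (le_of_lt hsina)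
    have h2 : (u * Real.sin a + v * Real.sin b) * Real.cos a = 0 := by rw [him]; ring
    have key : v * Real.sin (a - b) ≤ 0 := by
      rw [Real.sin_sub]; nlinarith
    nlinarith


/-- Claim (2)+(3): if reduced args are at distance ≥ π, some positive multiple
plus the other is a nonpositive real. -/
lemma aux2 {A B : ℂ} (hA : A ≠ 0) (hB : B ≠ 0)
    (haπ : Complex.arg A ≠ π) (hbπ : Complex.arg B ≠ π)
    (hab : π ≤ |Complex.arg B - Complex.arg A|) :
    ∃ s : ℝ, 0 < s ∧ ∃ x : ℝ, x ≤ 0 ∧ (s : ℂ) * A + B = (x : ℂ) := by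
  set a := Complex.arg A with ha_def
  set b := Complex.arg B with hb_def
  have ha1 : -π < a := Complex.neg_pi_lt_arg A
  have ha2 : a < π := lt_of_le_of_ne (Complex.arg_le_pi A) haπ
  have hb1 : -π < b := Complex.neg_pi_lt_arg B
  have hb2 : b < π := lt_of_le_of_ne (Complex.arg_le_pi B) hbπ
  have hvA : 0 < ‖A‖ := norm_pos_iff.mpr hA
  have hvB : 0 < ‖B‖ := norm_pos_iff.mpr hB
  rcases eq_or_lt_of_le hab with heq | hlt
  · -- |b - a| = π : B is a negative multiple of A
    have hE : Complex.exp ((b : ℂ) * I) = - Complex.exp ((a : ℂ) * I) := by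
      rcases abs_eq (le_of_lt Real.pi_pos) |>.1 heq.symm with h | h
      · have hb' : b = a + π := by linarith
        rw [hb']
        push_cast
        rw [add_mul, Complex.exp_add, Complex.exp_pi_mul_I]
        ring
      · have hb' : a = b + π := by linarith
        rw [hb']
        push_cast
        rw [add_mul, Complex.exp_add, Complex.exp_pi_mul_I]
        ring
    refine ⟨‖B‖ / ‖A‖, div_pos hvB hvA, 0, le_refl 0, ?_⟩
    have e1 := Complex.norm_mul_exp_arg_mul_I A
    have e2 := Complex.norm_mul_exp_arg_mul_I B
    rw [← ha_def] at e1
    rw [← hb_def] at e2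
    set nA := ‖A‖ with hnA
    set nB := ‖B‖ with hnB
    clear_value nA nB
    rw [← e1, ← e2, hE]
    push_cast
    have : (nA : ℂ) ≠ 0 := by exact_mod_cast (ne_of_gt hvA)
    field_simp
    ring
  · -- π < |b - a|
    have Ncalc : -B.im * A.re + B.re * A.im
        = ‖A‖ * ‖B‖ * Real.sin (a - b) := by
      rw [re_eq hA, re_eq hB, im_eq hA, im_eq hB, Real.sin_sub]; ring
    have sum_eq : ∀ _ : A.im ≠ 0, ((-B.im / A.im : ℝ) : ℂ) * A + B
        = (((-B.im / A.im) * A.re + B.re : ℝ) : ℂ) := by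
      intro hAim
      refine Complex.ext ?_ ?_
      · simp [Complex.mul_re, Complex.mul_im]
      · simp [Complex.mul_re, Complex.mul_im]
        field_simp
        ring
    rcases lt_abs.1 hlt with h | h
    · -- π < b - a : a ∈ (-π,0), b ∈ (0,π)
      have hbpos : 0 < b := by linarith
      have haneg : a < 0 := by linarith
      have hsb : 0 < Real.sin b := Real.sin_pos_of_pos_of_lt_pi hbpos hb2
      have hsa : Real.sin a < 0 := by
        have := Real.sin_pos_of_pos_of_lt_pi (x := -a) (by linarith) (by linarith)
        rw [Real.sin_neg] at this; linarith
      have hAim : A.im < 0 := by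
        rw [im_eq hA]; exact mul_neg_of_pos_of_neg hvA hsa
      have hBim : 0 < B.im := by
        rw [im_eq hB]; exact mul_pos hvB hsb
      have hsinab : 0 < Real.sin (a - b) := by
        have h0 : 0 < Real.sin (a - b + 2 * π) :=
          Real.sin_pos_of_pos_of_lt_pi (by linarith) (by linarith)
        rwa [Real.sin_add_two_pi] at h0
      have hN : 0 < -B.im * A.re + B.re * A.im := by
        rw [Ncalc]; exact mul_pos (mul_pos hvA hvB) hsinab
      refine ⟨-B.im / A.im, ?_, (-B.im / A.im) * A.re + B.re, ?_, sum_eq (ne_of_lt hAim)⟩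
      · rw [div_pos_iff]; right; exact ⟨by linarith, hAim⟩
      · have he : (-B.im / A.im) * A.re + B.re = (-B.im * A.re + B.re * A.im) / A.im := by
          rw [div_mul_eq_mul_div, div_add' _ _ _ (ne_of_lt hAim)]
        rw [he]
        exact le_of_lt (div_neg_of_pos_of_neg hN hAim)
    · -- π < a - b : b ∈ (-π,0), a ∈ (0,π)
      have hapos : 0 < a := by linarith
      have hbneg : b < 0 := by linarith
      have hsa : 0 < Real.sin a := Real.sin_pos_of_pos_of_lt_pi hapos ha2
      have hsb : Real.sin b < 0 := by
        have := Real.sin_pos_of_pos_of_lt_pi (x := -b) (by linarith) (by linarith)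
        rw [Real.sin_neg] at this; linarith
      have hAim : 0 < A.im := by
        rw [im_eq hA]; exact mul_pos hvA hsa
      have hBim : B.im < 0 := by
        rw [im_eq hB]; exact mul_neg_of_pos_of_neg hvB hsb
      have hsinab : Real.sin (a - b) < 0 := by
        have h0 : 0 < Real.sin (a - b - π) :=
          Real.sin_pos_of_pos_of_lt_pi (by linarith) (by linarith)
        have h1 : Real.sin ((a - b - π) + π) = -Real.sin (a - b - π) := Real.sin_add_pi _
        have h2 : a - b - π + π = a - b := by ring
        rw [h2] at h1
        rw [h1]; linarith
      have hN : -B.im * A.re + B.re * A.im < 0 := by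
        rw [Ncalc]
        exact mul_neg_of_pos_of_neg (mul_pos hvA hvB) hsinab
      refine ⟨-B.im / A.im, ?_, (-B.im / A.im) * A.re + B.re, ?_, sum_eq (ne_of_gt hAim)⟩
      · exact div_pos (by linarith) hAim
      · have he : (-B.im / A.im) * A.re + B.re = (-B.im * A.re + B.re * A.im) / A.im := by
          rw [div_mul_eq_mul_div, div_add' _ _ _ (ne_of_gt hAim)]
        rw [he]
        exact le_of_lt (div_neg_of_neg_of_pos hN hAim)


/-- Algebraic identity: `z² Q(z) = r^{m+2} (r^{d-m} A + B)` on the ray. -/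
lemma key_id (d m : ℕ) (hdm : m ≤ d) (t c : ℂ) (θ r : ℝ) :
    ((r : ℂ) * Complex.exp ((θ : ℂ) * I)) ^ 2 *
      (t * ((r : ℂ) * Complex.exp ((θ : ℂ) * I)) ^ d +
       c * ((r : ℂ) * Complex.exp ((θ : ℂ) * I)) ^ m)
    = ((r : ℂ)) ^ (m + 2) *
        (((r : ℂ)) ^ (d - m) * (t * Complex.exp ((((d : ℝ) + 2) * θ : ℂ) * I)) +
          c * Complex.exp ((((m : ℝ) + 2) * θ : ℂ) * I)) := by
  obtain ⟨n, rfl⟩ : ∃ n, d = m + n := ⟨d - m, by omega⟩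
  have e1 : ((((m + n : ℕ) : ℝ) + 2) * θ : ℂ) * I = ((m + n + 2 : ℕ) : ℂ) * ((θ : ℂ) * I) := by
    push_cast; ring
  have e2 : ((((m : ℕ) : ℝ) + 2) * θ : ℂ) * I = ((m + 2 : ℕ) : ℂ) * ((θ : ℂ) * I) := by
    push_cast; ring
  rw [e1, e2, Complex.exp_nat_mul, Complex.exp_nat_mul]
  have hnm : m + n - m = n := by omega
  rw [hnm]
  ring

/-- The argument of `t e^{iψ}` as an angle. -/
lemma arg_angle (t : ℂ) (ht : t ≠ 0) (ψ : ℝ) :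
    ((Complex.arg (t * Complex.exp ((ψ : ℂ) * I)) : ℝ) : Real.Angle)
      = ((Complex.arg t + ψ : ℝ) : Real.Angle) := by
  rw [Complex.arg_mul_coe_angle ht (Complex.exp_ne_zero _)]
  have hexp : Complex.exp ((ψ : ℂ) * I)
      = Real.Angle.cos (ψ : Real.Angle) + Real.Angle.sin (ψ : Real.Angle) * I := by
    rw [Real.Angle.cos_coe, Real.Angle.sin_coe, Complex.exp_mul_I, ← Complex.ofReal_cos,
      ← Complex.ofReal_sin]
  rw [hexp, Complex.arg_cos_add_sin_mul_I_coe_angle, ← Real.Angle.coe_add]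

/-- Uniqueness of the representative in `(-π, π)`. -/
lemma uniq {α a : ℝ} (ha1 : -π < a) (ha2 : a ≤ π) {k₀ k : ℤ}
    (h0 : α - a = 2 * π * (k₀ : ℝ)) (h : |α - 2 * π * (k : ℝ)| < π) :
    α - 2 * π * (k : ℝ) = a := by
  have hπ := Real.pi_pos
  have habs : |a| ≤ π := abs_le.mpr ⟨le_of_lt ha1, ha2⟩
  have hd : α - 2 * π * (k : ℝ) - a = 2 * π * (((k₀ - k : ℤ) : ℝ)) := by
    push_cast; linarith
  have h2 : |α - 2 * π * (k : ℝ) - a| < 2 * π := by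
    calc |α - 2 * π * (k : ℝ) - a| ≤ |α - 2 * π * (k : ℝ)| + |a| := abs_sub _ _
    _ < 2 * π := by linarith
  rw [hd] at h2
  have h3 : |((k₀ - k : ℤ) : ℝ)| < 1 := by
    rw [abs_mul, abs_of_pos (by linarith : (0:ℝ) < 2 * π)] at h2
    nlinarith [abs_nonneg ((k₀ - k : ℤ) : ℝ)]
  have h4 : k₀ = k := by
    by_contra hne
    have : (1 : ℤ) ≤ |k₀ - k| := Int.one_le_abs (sub_ne_zero.mpr hne)
    have : (1 : ℝ) ≤ |((k₀ - k : ℤ) : ℝ)| := by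
      rw [← Int.cast_abs]; exact_mod_cast this
    linarith
  rw [h4] at hd
  push_cast at hd
  linarith


lemma neg_real_iff {A : ℂ} : (∃ x : ℝ, x < 0 ∧ A = (x : ℂ)) ↔ Complex.arg A = π := by
  rw [Complex.arg_eq_pi_iff]
  constructor
  · rintro ⟨x, hx, rfl⟩
    exact ⟨by simpa using hx, by simp⟩
  · rintro ⟨hre, him⟩
    exact ⟨A.re, hre, by apply Complex.ext <;> simp [him]⟩

end GoodRayAux



open GoodRayAux

local notation "π" => Real.pi

/-- The ray `L(θ)` is a good ray for `Q = t z^d + c z^m` if and only if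
`(Arg t, Arg c)` belongs to the hexagon `H` translated by
`(2πk − (d+2)θ, 2πl − (m+2)θ)` for some integers `k, l`. -/
theorem ray_good_iff_translated_hexagon
    (d m : ℕ) (hm : 1 ≤ m) (hdm : m < d)
    (t c : ℂ) (ht : t ≠ 0) (hc : c ≠ 0) (θ : ℝ) :
    GoodRay d m t c θ ↔
      ∃ k l : ℤ,
        |Complex.arg t + ((d : ℝ) + 2) * θ - 2 * Real.pi * (k : ℝ)| < Real.pi ∧
        |Complex.arg c + ((m : ℝ) + 2) * θ - 2 * Real.pi * (l : ℝ)| < Real.pi ∧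
        |(Complex.arg c + ((m : ℝ) + 2) * θ - 2 * Real.pi * (l : ℝ)) -
          (Complex.arg t + ((d : ℝ) + 2) * θ - 2 * Real.pi * (k : ℝ))| < Real.pi := by
  have hπ := Real.pi_pos
  unfold GoodRay
  set ψA : ℝ := ((d : ℝ) + 2) * θ with hψA_def
  set ψB : ℝ := ((m : ℝ) + 2) * θ with hψB_def
  set A : ℂ := t * Complex.exp ((((d : ℝ) + 2) * θ : ℂ) * Complex.I) with hA_def
  set B : ℂ := c * Complex.exp ((((m : ℝ) + 2) * θ : ℂ) * Complex.I) with hB_def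
  have hA0 : A ≠ 0 := mul_ne_zero ht (Complex.exp_ne_zero _)
  have hB0 : B ≠ 0 := mul_ne_zero hc (Complex.exp_ne_zero _)
  have hAψ : A = t * Complex.exp ((ψA : ℂ) * Complex.I) := by
    have e : ((ψA : ℝ) : ℂ) = (((d : ℝ) + 2) * θ : ℂ) := by rw [hψA_def]; push_cast; ring
    rw [hA_def, ← e]
  have hBψ : B = c * Complex.exp ((ψB : ℂ) * Complex.I) := by
    have e : ((ψB : ℝ) : ℂ) = (((m : ℝ) + 2) * θ : ℂ) := by rw [hψB_def]; push_cast; ring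
    rw [hB_def, ← e]
  set a := Complex.arg A with ha_def
  set b := Complex.arg B with hb_def
  have ha1 : -π < a := Complex.neg_pi_lt_arg A
  have ha2 : a ≤ π := Complex.arg_le_pi A
  have hb1 : -π < b := Complex.neg_pi_lt_arg B
  have hb2 : b ≤ π := Complex.arg_le_pi B
  obtain ⟨k₀, hk₀⟩ : ∃ k : ℤ, (Complex.arg t + ψA) - a = 2 * π * (k : ℝ) := by
    refine Real.Angle.angle_eq_iff_two_pi_dvd_sub.1 ?_
    rw [ha_def, hAψ]
    exact (arg_angle t ht ψA).symm
  obtain ⟨l₀, hl₀⟩ : ∃ l : ℤ, (Complex.arg c + ψB) - b = 2 * π * (l : ℝ) := by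
    refine Real.Angle.angle_eq_iff_two_pi_dvd_sub.1 ?_
    rw [hb_def, hBψ]
    exact (arg_angle c hc ψB).symm
  constructor
  · rintro ⟨h1, h2, h3, h4⟩
    have haπ : a ≠ π := fun h => h1 (neg_real_iff.2 h)
    have hbπ : b ≠ π := fun h => h2 (neg_real_iff.2 h)
    have hab : |b - a| < π := by
      by_contra hcon
      push_neg at hcon
      obtain ⟨s, hs, x, hx, heq⟩ := aux2 hA0 hB0 haπ hbπ hcon
      have hn0 : d - m ≠ 0 := by omega
      set r : ℝ := s ^ (((d - m : ℕ) : ℝ))⁻¹ with hr_def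
      have hr : 0 < r := Real.rpow_pos_of_pos hs _
      have hrn : r ^ (d - m) = s := Real.rpow_inv_natCast_pow (le_of_lt hs) hn0
      refine h4 r hr ⟨r ^ (m + 2) * x, ?_, ?_⟩
      · nlinarith [pow_pos hr (m + 2)]
      · rw [key_id d m (le_of_lt hdm) t c θ r]
        have hcast : ((r : ℂ)) ^ (d - m) = ((s : ℝ) : ℂ) := by
          rw [← hrn, Complex.ofReal_pow]
        rw [hcast, heq]
        push_cast
        ring
    have hka : Complex.arg t + ψA - 2 * π * (k₀ : ℝ) = a := by linarith
    have hlb : Complex.arg c + ψB - 2 * π * (l₀ : ℝ) = b := by linarith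
    refine ⟨k₀, l₀, ?_, ?_, ?_⟩
    · rw [hka]
      exact abs_lt.mpr ⟨ha1, lt_of_le_of_ne ha2 haπ⟩
    · rw [hlb]
      exact abs_lt.mpr ⟨hb1, lt_of_le_of_ne hb2 hbπ⟩
    · rw [hka, hlb]
      exact hab
  · rintro ⟨k, l, h1, h2, h3⟩
    have hka : Complex.arg t + ψA - 2 * π * (k : ℝ) = a := uniq ha1 ha2 hk₀ h1
    have hlb : Complex.arg c + ψB - 2 * π * (l : ℝ) = b := uniq hb1 hb2 hl₀ h2
    rw [hka] at h1
    rw [hlb] at h2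
    rw [hka, hlb] at h3
    have haπ : a ≠ π := by
      intro hh
      rw [hh, abs_of_pos hπ] at h1
      exact lt_irrefl _ h1
    have hbπ : b ≠ π := by
      intro hh
      rw [hh, abs_of_pos hπ] at h2
      exact lt_irrefl _ h2
    refine ⟨fun h => haπ (neg_real_iff.1 h), fun h => hbπ (neg_real_iff.1 h), ?_, ?_⟩
    · -- no zeros on the ray
      intro r hr h0
      have hid := key_id d m (le_of_lt hdm) t c θ r
      rw [h0, mul_zero] at hid
      have hpowc : ((r : ℂ)) ^ (m + 2) ≠ 0 :=
        pow_ne_zero _ (by exact_mod_cast ne_of_gt hr)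
      have hz : ((r : ℂ)) ^ (d - m) * A + B = 0 := by
        rcases mul_eq_zero.1 hid.symm with h' | h'
        · exact absurd h' hpowc
        · exact h'
      refine aux1 hA0 hB0 haπ hbπ h3 (r ^ (d - m)) (pow_pos hr _) ⟨0, le_refl 0, ?_⟩
      push_cast
      exact hz
    · -- not tangent
      rintro r hr ⟨x, hx, heq⟩
      rw [key_id d m (le_of_lt hdm) t c θ r] at heq
      have hpow : (0 : ℝ) < r ^ (m + 2) := pow_pos hr _
      have hpowc : ((r : ℂ)) ^ (m + 2) ≠ 0 :=
        pow_ne_zero _ (by exact_mod_cast ne_of_gt hr)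
      have hz : ((r : ℂ)) ^ (d - m) * A + B = ((x / r ^ (m + 2) : ℝ) : ℂ) := by
        apply mul_left_cancel₀ hpowc
        rw [heq]
        push_cast
        field_simp
      refine aux1 hA0 hB0 haπ hbπ h3 (r ^ (d - m)) (pow_pos hr _)
        ⟨x / r ^ (m + 2), ?_, ?_⟩
      · exact div_nonpos_of_nonpos_of_nonneg hx (le_of_lt hpow)
      · push_cast at hz ⊢
        exact hz
end

section
/- Let d > m ≥ 1 be integers with d and m both even, t, c ∈ ℂ \ {0}, and Q(z) = t·z^d + c·z^m. Then both the positive real direction θ = 0 and the negative real direction θ = π are good rays for Q if and only if (Arg t, Arg c) ∈ H, where Arg is the principal argument with values in (−π, π] and H = {(x,y) ∈ ℝ² : |x| < π, |y| < π, |y − x| < π}. -/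
open Complex

private lemma pos_of_sin_pos {y : ℝ} (h1 : -Real.pi < y) (hs : 0 < Real.sin y) : 0 < y := by
  by_contra hy
  push_neg at hy
  have h2 : (0:ℝ) ≤ Real.sin (-y) :=
    Real.sin_nonneg_of_nonneg_of_le_pi (by linarith) (by linarith)
  rw [Real.sin_neg] at h2
  linarith

private lemma neg_of_sin_neg {y : ℝ} (h2 : y < Real.pi) (hs : Real.sin y < 0) : y < 0 := by
  have := pos_of_sin_pos (y := -y) (by linarith) (by rw [Real.sin_neg]; linarith)
  linarith

private lemma not_neg_iff (z : ℂ) : (¬ ∃ x : ℝ, x < 0 ∧ z = (x : ℂ)) ↔ |z.arg| < Real.pi := by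
  rw [← not_iff_not, not_not, not_lt]
  constructor
  · rintro ⟨x, hx, rfl⟩
    rw [Complex.arg_ofReal_of_neg hx, abs_of_pos Real.pi_pos]
  · intro hge
    have h1 := Complex.abs_arg_le_pi z
    have h2 := Complex.neg_pi_lt_arg z
    have hpi : z.arg = Real.pi := by
      rcases abs_cases z.arg with ⟨he, _⟩ | ⟨he, _⟩ <;> [linarith; linarith]
    obtain ⟨hre, him⟩ := Complex.arg_eq_pi_iff.mp hpi
    exact ⟨z.re, hre, by apply Complex.ext <;> simp [him]⟩

private lemma real_forward {α β a b u v x : ℝ} (ha : 0 < a) (hb : 0 < b)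
    (hu : 0 < u) (hv : 0 < v) (hx : x ≤ 0)
    (hα1 : -Real.pi < α) (hα2 : α < Real.pi) (hβ1 : -Real.pi < β) (hβ2 : β < Real.pi)
    (h1 : -Real.pi < β - α) (h2 : β - α < Real.pi)
    (hre : a * Real.cos α * u + b * Real.cos β * v = x)
    (him : a * Real.sin α * u + b * Real.sin β * v = 0) : False := by
  have hA : 0 < a * u := mul_pos ha hu
  have hB : 0 < b * v := mul_pos hb hv
  have hI1 : (a * u) * Real.sin (β - α) = x * Real.sin β := by
    rw [Real.sin_sub]; linear_combination Real.sin β * hre - Real.cos β * him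
  have hI2 : (b * v) * Real.sin (β - α) = -(x * Real.sin α) := by
    rw [Real.sin_sub]; linear_combination Real.cos α * him - Real.sin α * hre
  rcases lt_trichotomy (Real.sin (β - α)) 0 with hs | hs | hs
  · have hx1 : x * Real.sin β < 0 := by nlinarith
    have hsβ : 0 < Real.sin β := by nlinarith
    have hx0 : x ≠ 0 := by intro h0; rw [h0] at hx1; simp at hx1
    have hxneg : x < 0 := lt_of_le_of_ne hx hx0
    have hsα : Real.sin α < 0 := by nlinarith
    have hβpos : 0 < β := pos_of_sin_pos hβ1 hsβ
    have hαneg : α < 0 := neg_of_sin_neg hα2 hsα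
    have : 0 < Real.sin (β - α) :=
      Real.sin_pos_of_pos_of_lt_pi (by linarith) (by linarith)
    linarith
  · have hba : β = α := by
      by_contra hne
      rcases lt_or_gt_of_ne (sub_ne_zero.mpr hne) with hlt | hgt
      · have : 0 < Real.sin (α - β) :=
          Real.sin_pos_of_pos_of_lt_pi (by linarith) (by linarith)
        rw [show α - β = -(β - α) by ring, Real.sin_neg] at this
        linarith
      · have : 0 < Real.sin (β - α) :=
          Real.sin_pos_of_pos_of_lt_pi (by linarith) (by linarith)
        linarith
    rw [hba] at him hre
    have hsα : Real.sin α = 0 := by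
      have h0 : Real.sin α * (a * u + b * v) = 0 := by linear_combination him
      rcases mul_eq_zero.mp h0 with h' | h'
      · exact h'
      · linarith
    have hα0 : α = 0 := by
      by_contra h0
      rcases lt_or_gt_of_ne h0 with hlt | hgt
      · have h' : 0 < Real.sin (-α) :=
          Real.sin_pos_of_pos_of_lt_pi (by linarith) (by linarith)
        rw [Real.sin_neg, hsα] at h'
        norm_num at h'
      · have := Real.sin_pos_of_pos_of_lt_pi hgt hα2
        linarith
    rw [hα0] at hre
    simp [Real.cos_zero] at hre
    nlinarith
  · have hx1 : 0 < x * Real.sin β := by nlinarith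
    have hsβ : Real.sin β < 0 := by nlinarith
    have hx0 : x ≠ 0 := by intro h0; rw [h0] at hx1; simp at hx1
    have hxneg : x < 0 := lt_of_le_of_ne hx hx0
    have hsα : 0 < Real.sin α := by nlinarith
    have hβneg : β < 0 := neg_of_sin_neg hβ2 hsβ
    have hαpos : 0 < α := pos_of_sin_pos hα1 hsα
    have : Real.sin (β - α) < 0 := by
      have h' : 0 < Real.sin (α - β) :=
        Real.sin_pos_of_pos_of_lt_pi (by linarith) (by linarith)
      rw [show α - β = -(β - α) by ring, Real.sin_neg] at h'
      linarith
    linarith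

private lemma key_forward (t c : ℂ) (ht : t ≠ 0) (hc : c ≠ 0)
    (hα : |t.arg| < Real.pi) (hβ : |c.arg| < Real.pi)
    (h : |c.arg - t.arg| < Real.pi)
    (u v : ℝ) (hu : 0 < u) (hv : 0 < v) (x : ℝ) (hx : x ≤ 0) :
    t * (u : ℂ) + c * (v : ℂ) ≠ (x : ℂ) := by
  intro heq
  obtain ⟨hα1, hα2⟩ := abs_lt.mp hα
  obtain ⟨hβ1, hβ2⟩ := abs_lt.mp hβ
  obtain ⟨h1, h2⟩ := abs_lt.mp h
  have ha : 0 < ‖t‖ := norm_pos_iff.mpr ht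
  have hb : 0 < ‖c‖ := norm_pos_iff.mpr hc
  have htre : t.re = ‖t‖ * Real.cos t.arg := by
    rw [Complex.cos_arg ht]; field_simp
  have htim : t.im = ‖t‖ * Real.sin t.arg := by
    rw [Complex.sin_arg]; field_simp
  have hcre : c.re = ‖c‖ * Real.cos c.arg := by
    rw [Complex.cos_arg hc]; field_simp
  have hcim : c.im = ‖c‖ * Real.sin c.arg := by
    rw [Complex.sin_arg]; field_simp
  have hre : t.re * u + c.re * v = x := by
    have := congrArg Complex.re heq; simpa using this
  have him : t.im * u + c.im * v = 0 := by
    have := congrArg Complex.im heq; simpa using this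
  rw [htre, hcre] at hre
  rw [htim, hcim] at him
  exact real_forward ha hb hu hv hx hα1 hα2 hβ1 hβ2 h1 h2 hre him

private lemma key_reverse (t c : ℂ) (ht : t ≠ 0) (hc : c ≠ 0)
    (hα : |t.arg| < Real.pi) (hβ : |c.arg| < Real.pi)
    (h : Real.pi ≤ c.arg - t.arg) (m n : ℕ) (hn : 1 ≤ n) :
    ∃ r : ℝ, 0 < r ∧ ∃ x : ℝ, x ≤ 0 ∧ t * (r : ℂ) ^ (m + n) + c * (r : ℂ) ^ m = (x : ℂ) := by
  obtain ⟨hα1, hα2⟩ := abs_lt.mp hα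
  obtain ⟨hβ1, hβ2⟩ := abs_lt.mp hβ
  have hπ := Real.pi_pos
  set α := t.arg with hαdef
  set β := c.arg with hβdef
  set a := ‖t‖ with hadef
  set b := ‖c‖ with hbdef
  have ha : 0 < a := norm_pos_iff.mpr ht
  have hb : 0 < b := norm_pos_iff.mpr hc
  have hαneg : α < 0 := by linarith
  have hβpos : 0 < β := by linarith
  have hsα : Real.sin α < 0 := by
    have := Real.sin_pos_of_pos_of_lt_pi (x := -α) (by linarith) (by linarith)
    rw [Real.sin_neg] at this; linarith
  have hsβ : 0 < Real.sin β := Real.sin_pos_of_pos_of_lt_pi hβpos hβ2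
  set ρ := (b * Real.sin β) / (a * (-Real.sin α)) with hρdef
  have hρ : 0 < ρ := div_pos (mul_pos hb hsβ) (mul_pos ha (by linarith))
  set r := ρ ^ ((n : ℝ)⁻¹) with hrdef
  have hr : 0 < r := Real.rpow_pos_of_pos hρ _
  have hnne : (n : ℝ) ≠ 0 := Nat.cast_ne_zero.mpr (by omega)
  have hrn : r ^ n = ρ := by
    rw [hrdef, ← Real.rpow_natCast (ρ ^ ((n : ℝ)⁻¹)) n, ← Real.rpow_mul hρ.le,
      inv_mul_cancel₀ hnne, Real.rpow_one]
  have hsin0 : a * Real.sin α * ρ + b * Real.sin β = 0 := by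
    rw [hρdef]; field_simp [ha.ne', hsα.ne]; ring
  set xe := a * Real.cos α * ρ + b * Real.cos β with hxedef
  have hsd : Real.sin (β - α) ≤ 0 := by
    have h2 : (0:ℝ) ≤ Real.sin (β - α - Real.pi) :=
      Real.sin_nonneg_of_nonneg_of_le_pi (by linarith) (by linarith)
    rw [Real.sin_sub, Real.sin_pi, Real.cos_pi] at h2
    nlinarith [Real.sin_sub β α]
  have hxe : xe ≤ 0 := by
    have hxeval : xe = b * Real.sin (β - α) / (-Real.sin α) := by
      rw [hxedef, hρdef, Real.sin_sub]
      field_simp [ha.ne', hsα.ne]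
      ring
    rw [hxeval]
    apply div_nonpos_of_nonpos_of_nonneg (by nlinarith) (by linarith)
  refine ⟨r, hr, r ^ m * xe, by nlinarith [pow_pos hr m], ?_⟩
  have hts : ((a : ℝ) : ℂ) * (↑(Real.cos α) + ↑(Real.sin α) * Complex.I) = t := by
    rw [hadef, hαdef, Complex.ofReal_cos, Complex.ofReal_sin]
    exact Complex.norm_mul_cos_add_sin_mul_I t
  have hcs : ((b : ℝ) : ℂ) * (↑(Real.cos β) + ↑(Real.sin β) * Complex.I) = c := by
    rw [hbdef, hβdef, Complex.ofReal_cos, Complex.ofReal_sin]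
    exact Complex.norm_mul_cos_add_sin_mul_I c
  have hrnC : ((r : ℂ)) ^ n = (ρ : ℂ) := by
    have := congrArg (fun y : ℝ => (y : ℂ)) hrn
    push_cast at this
    exact this
  have hsin0C : ((a : ℝ) : ℂ) * ↑(Real.sin α) * ↑(ρ : ℝ) + ↑(b : ℝ) * ↑(Real.sin β) = 0 := by
    exact_mod_cast congrArg (fun y : ℝ => (y : ℂ)) hsin0
  have hxeC : ((a : ℝ) : ℂ) * ↑(Real.cos α) * ↑(ρ : ℝ) + ↑(b : ℝ) * ↑(Real.cos β)
      = ((xe : ℝ) : ℂ) := by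
    rw [hxedef]; push_cast; ring
  rw [← hts, ← hcs, pow_add, hrnC, Complex.ofReal_mul, Complex.ofReal_pow]
  linear_combination ((r : ℂ) ^ m * Complex.I) * hsin0C + (r : ℂ) ^ m * hxeC

/-- For `d` and `m` both even, both real rays (positive, `θ = 0`, and negative, `θ = π`)
are good for `Q = t z^d + c z^m` if and only if `(Arg t, Arg c)` lies in the open hexagon
`H = {(x,y) : |x| < π, |y| < π, |y − x| < π}`. -/
theorem both_real_rays_good_iff_even_even
    (d m : ℕ) (hm : 1 ≤ m) (hdm : m < d) (hd_even : Even d) (hm_even : Even m)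
    (t c : ℂ) (ht : t ≠ 0) (hc : c ≠ 0) :
    (GoodRay d m t c 0 ∧ GoodRay d m t c Real.pi) ↔
      (|Complex.arg t| < Real.pi ∧ |Complex.arg c| < Real.pi ∧
        |Complex.arg c - Complex.arg t| < Real.pi) := by
  have key : (GoodRay d m t c 0 ∧ GoodRay d m t c Real.pi) ↔
      ((¬ ∃ x : ℝ, x < 0 ∧ t = (x : ℂ)) ∧ (¬ ∃ x : ℝ, x < 0 ∧ c = (x : ℂ)) ∧
        ∀ r : ℝ, 0 < r → ∀ x : ℝ, x ≤ 0 → t * (r : ℂ) ^ d + c * (r : ℂ) ^ m ≠ (x : ℂ)) := by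
    constructor
    · rintro ⟨⟨h1, h2, h3, h4⟩, -⟩
      simp only [Complex.ofReal_zero, mul_zero, zero_mul, Complex.exp_zero, mul_one]
        at h1 h2 h3 h4
      refine ⟨h1, h2, fun r hr x hx heq => h4 r hr
        ⟨r ^ 2 * x, by nlinarith [sq_nonneg r], by rw [heq]; push_cast; ring⟩⟩
    · rintro ⟨h1, h2, h3⟩
      have g3 : ∀ r : ℝ, 0 < r → t * (r : ℂ) ^ d + c * (r : ℂ) ^ m ≠ 0 := by
        intro r hr h0
        exact h3 r hr 0 le_rfl (by rw [h0]; simp)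
      have g4 : ∀ r : ℝ, 0 < r → ¬ ∃ x : ℝ, x ≤ 0 ∧
          ((r : ℂ)) ^ 2 * (t * (r : ℂ) ^ d + c * (r : ℂ) ^ m) = (x : ℂ) := by
        rintro r hr ⟨x, hx, heq⟩
        refine h3 r hr (x / r ^ 2) (div_nonpos_of_nonpos_of_nonneg hx (sq_nonneg r)) ?_
        have hr2 : ((r : ℂ)) ^ 2 ≠ 0 := pow_ne_zero _ (Complex.ofReal_ne_zero.mpr hr.ne')
        push_cast
        rw [eq_div_iff hr2]
        linear_combination heq
      have ed : Complex.exp ((((d : ℝ) : ℂ) + 2) * ((Real.pi : ℝ) : ℂ) * Complex.I) = 1 := by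
        obtain ⟨k, hk⟩ := hd_even
        have harg : (((d : ℝ) : ℂ) + 2) * ((Real.pi : ℝ) : ℂ) * Complex.I
            = ((k + 1 : ℕ) : ℂ) * (2 * (Real.pi : ℂ) * Complex.I) := by
          push_cast [hk]; ring
        rw [harg, Complex.exp_nat_mul, Complex.exp_two_pi_mul_I, one_pow]
      have em : Complex.exp ((((m : ℝ) : ℂ) + 2) * ((Real.pi : ℝ) : ℂ) * Complex.I) = 1 := by
        obtain ⟨k, hk⟩ := hm_even
        have harg : (((m : ℝ) : ℂ) + 2) * ((Real.pi : ℝ) : ℂ) * Complex.I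
            = ((k + 1 : ℕ) : ℂ) * (2 * (Real.pi : ℂ) * Complex.I) := by
          push_cast [hk]; ring
        rw [harg, Complex.exp_nat_mul, Complex.exp_two_pi_mul_I, one_pow]
      constructor
      · refine ⟨?_, ?_, ?_, ?_⟩ <;>
          simp only [Complex.ofReal_zero, mul_zero, zero_mul, Complex.exp_zero, mul_one]
        exacts [h1, h2, g3, g4]
      · refine ⟨?_, ?_, ?_, ?_⟩ <;>
          simp only [ed, em, Complex.exp_pi_mul_I, mul_one, mul_neg_one,
            hd_even.neg_pow, hm_even.neg_pow, even_two.neg_pow]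
        exacts [h1, h2, g3, g4]
  rw [key]
  constructor
  · rintro ⟨h1, h2, h3⟩
    have hat := (not_neg_iff t).mp h1
    have hac := (not_neg_iff c).mp h2
    refine ⟨hat, hac, ?_⟩
    by_contra hcon
    push_neg at hcon
    rcases le_abs.mp hcon with hd1 | hd2
    · obtain ⟨r, hr, x, hx, heq⟩ := key_reverse t c ht hc hat hac hd1 m (d - m) (by omega)
      rw [show m + (d - m) = d from by omega] at heq
      exact h3 r hr x hx heq
    · have htπ : t.arg ≠ Real.pi := by
        intro hh; rw [hh, abs_of_pos Real.pi_pos] at hat; exact lt_irrefl _ hat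
      have hcπ : c.arg ≠ Real.pi := by
        intro hh; rw [hh, abs_of_pos Real.pi_pos] at hac; exact lt_irrefl _ hac
      have hct : ((starRingEnd ℂ) t).arg = -t.arg := by
        rw [Complex.arg_conj, if_neg htπ]
      have hcc : ((starRingEnd ℂ) c).arg = -c.arg := by
        rw [Complex.arg_conj, if_neg hcπ]
      have ht' : (starRingEnd ℂ) t ≠ 0 := by simpa using ht
      have hc' : (starRingEnd ℂ) c ≠ 0 := by simpa using hc
      obtain ⟨r, hr, x, hx, heq⟩ := key_reverse ((starRingEnd ℂ) t) ((starRingEnd ℂ) c)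
        ht' hc' (by rw [hct, abs_neg]; exact hat) (by rw [hcc, abs_neg]; exact hac)
        (by rw [hct, hcc]; linarith) m (d - m) (by omega)
      rw [show m + (d - m) = d from by omega] at heq
      apply h3 r hr x hx
      have hconj := congrArg (starRingEnd ℂ) heq
      simpa [map_add, map_mul, map_pow, Complex.conj_ofReal] using hconj
  · rintro ⟨hat, hac, hd⟩
    refine ⟨(not_neg_iff t).mpr hat, (not_neg_iff c).mpr hac, ?_⟩
    intro r hr x hx heq
    exact key_forward t c ht hc hat hac hd (r ^ d) (r ^ m) (pow_pos hr d) (pow_pos hr m) x hx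
      (by push_cast; exact heq)
end

section
/- Let d > m ≥ 1 be integers with d and m both odd, t, c ∈ ℂ \ {0}, and Q(z) = t·z^d + c·z^m. Then both the positive real direction θ = 0 and the negative real direction θ = π are good rays for Q if and only if (Arg t, Arg c) belongs to the union of the two open squares (0,π)×(0,π) and (−π,0)×(−π,0), where Arg is the principal argument with values in (−π, π]. -/
open Complex

private lemma exp_odd_shape (n : ℕ) (hn : Odd n) :
    Complex.exp (((((n : ℝ) : ℂ)) + 2) * ((Real.pi : ℝ) : ℂ) * Complex.I) = -1 := by
  obtain ⟨k, hk⟩ := hn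
  have h : ((((n : ℝ) : ℂ)) + 2) * ((Real.pi : ℝ) : ℂ) * Complex.I
      = ((k + 1 : ℤ) : ℂ) * (2 * (Real.pi : ℂ) * Complex.I) + (Real.pi : ℂ) * Complex.I := by
    push_cast [hk]; ring
  rw [h, Complex.exp_add, Complex.exp_int_mul_two_pi_mul_I (k + 1), Complex.exp_pi_mul_I, one_mul]

private lemma imQ (t c : ℂ) (d m : ℕ) (r : ℝ) :
    (t * (r : ℂ) ^ d + c * (r : ℂ) ^ m).im = t.im * r ^ d + c.im * r ^ m := by
  simp [← Complex.ofReal_pow]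

private lemma eq_re_of_im_eq_zero {z : ℂ} (h : z.im = 0) : z = (z.re : ℂ) :=
  Complex.ext rfl (by simp [h])

private lemma arg_Ioo_pos {z : ℂ} (hz : z ≠ 0) : z.arg ∈ Set.Ioo 0 Real.pi ↔ 0 < z.im := by
  constructor
  · rintro ⟨h1, h2⟩
    rcases lt_trichotomy z.im 0 with h | h | h
    · have := Complex.arg_neg_iff.mpr h; linarith
    · rcases lt_trichotomy z.re 0 with hr | hr | hr
      · have := Complex.arg_eq_pi_iff.mpr ⟨hr, h⟩; linarith
      · exact absurd (Complex.ext (by simpa using hr) (by simpa using h)) hz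
      · have := Complex.arg_eq_zero_iff.mpr ⟨hr.le, h⟩; linarith
    · exact h
  · intro h
    refine ⟨lt_of_le_of_ne (Complex.arg_nonneg_iff.mpr h.le) ?_,
            lt_of_le_of_ne (Complex.arg_le_pi z) ?_⟩
    · intro h0; have := (Complex.arg_eq_zero_iff.mp h0.symm).2; linarith
    · intro h0; have := (Complex.arg_eq_pi_iff.mp h0).2; linarith

private lemma arg_Ioo_neg {z : ℂ} : z.arg ∈ Set.Ioo (-Real.pi) 0 ↔ z.im < 0 :=
  ⟨fun h => Complex.arg_neg_iff.mp h.2, fun h => ⟨Complex.neg_pi_lt_arg z, Complex.arg_neg_iff.mpr h⟩⟩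

private lemma ne_ofReal_of_im_ne {z : ℂ} (hz : z.im ≠ 0) (x : ℝ) : z ≠ (x : ℂ) :=
  fun h => hz (by rw [h]; simp)

/-- For `d` and `m` both odd, both real rays (positive, `θ = 0`, and negative, `θ = π`)
are good for `Q = t z^d + c z^m` if and only if `(Arg t, Arg c)` belongs to the union of
the two open squares `(0,π)² ∪ (−π,0)²`. -/
theorem both_real_rays_good_iff_odd_odd
    (d m : ℕ) (hm : 1 ≤ m) (hdm : m < d) (hd_odd : Odd d) (hm_odd : Odd m)
    (t c : ℂ) (ht : t ≠ 0) (hc : c ≠ 0) :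
    (GoodRay d m t c 0 ∧ GoodRay d m t c Real.pi) ↔
      ((Complex.arg t ∈ Set.Ioo 0 Real.pi ∧ Complex.arg c ∈ Set.Ioo 0 Real.pi) ∨
       (Complex.arg t ∈ Set.Ioo (-Real.pi) 0 ∧ Complex.arg c ∈ Set.Ioo (-Real.pi) 0)) := by
  rw [arg_Ioo_pos ht, arg_Ioo_pos hc, arg_Ioo_neg, arg_Ioo_neg]
  simp only [GoodRay, Complex.ofReal_zero, mul_zero, zero_mul, Complex.exp_zero, mul_one,
    Complex.exp_pi_mul_I, exp_odd_shape d hd_odd, exp_odd_shape m hm_odd]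
  constructor
  · rintro ⟨⟨h1, _h2, _h3, h4⟩, g1, g2, _g3, g4⟩
    -- t.im ≠ 0
    have htim : t.im ≠ 0 := by
      intro h0
      rcases lt_trichotomy t.re 0 with hr | hr | hr
      · exact h1 ⟨t.re, hr, eq_re_of_im_eq_zero h0⟩
      · exact ht (Complex.ext (by simpa using hr) (by simpa using h0))
      · refine g1 ⟨-t.re, by linarith, ?_⟩
        rw [eq_re_of_im_eq_zero h0]; simp
    have hcim : c.im ≠ 0 := by
      intro h0
      rcases lt_trichotomy c.re 0 with hr | hr | hr
      · exact _h2 ⟨c.re, hr, eq_re_of_im_eq_zero h0⟩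
      · exact hc (Complex.ext (by simpa using hr) (by simpa using h0))
      · refine g2 ⟨-c.re, by linarith, ?_⟩
        rw [eq_re_of_im_eq_zero h0]; simp
    -- signs cannot be opposite
    have main : ∀ hti : 0 < t.im, ∀ hci : c.im < 0, False := by
      intro hti hci
      have hx0 : 0 < -c.im / t.im := div_pos (by linarith) hti
      set r : ℝ := (-c.im / t.im) ^ (((d - m : ℕ) : ℝ))⁻¹ with hrdef
      have hr : 0 < r := Real.rpow_pos_of_pos hx0 _
      have hrp : r ^ (d - m) = -c.im / t.im :=
        Real.rpow_inv_natCast_pow hx0.le (by omega)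
      have hwim : (t * (r : ℂ) ^ d + c * (r : ℂ) ^ m).im = 0 := by
        rw [imQ]
        have hdd : r ^ d = r ^ m * r ^ (d - m) := by
          rw [← pow_add]; congr 1; omega
        rw [hdd, hrp]
        field_simp
        ring
      set W := t * (r : ℂ) ^ d + c * (r : ℂ) ^ m with hWdef
      have hsq : ((r : ℂ)) ^ 2 = ((r ^ 2 : ℝ) : ℂ) := by push_cast; ring
      have hWre : W = (W.re : ℂ) := eq_re_of_im_eq_zero hwim
      rcases le_total W.re 0 with hre | hre
      · refine h4 r hr ⟨r ^ 2 * W.re, mul_nonpos_of_nonneg_of_nonpos (sq_nonneg r) hre, ?_⟩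
        rw [hsq, ← hWdef]
        conv_lhs => rw [hWre]
        push_cast; ring
      · refine g4 r hr ⟨-(r ^ 2 * W.re), by nlinarith [sq_nonneg r], ?_⟩
        have key : ((r : ℂ) * -1) ^ 2 * (t * ((r : ℂ) * -1) ^ d + c * ((r : ℂ) * -1) ^ m)
            = -(((r ^ 2 : ℝ) : ℂ) * W) := by
          rw [show ((r : ℂ) * (-1 : ℂ)) = -(r : ℂ) from by ring,
            hd_odd.neg_pow, hm_odd.neg_pow, hWdef]
          push_cast; ring
        rw [key]
        conv_lhs => rw [hWre]
        push_cast; ring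
    have main' : ∀ hti : t.im < 0, ∀ hci : 0 < c.im, False := by
      intro hti hci
      have hx0 : 0 < -c.im / t.im := div_pos_of_neg_of_neg (by linarith) (by linarith)
      set r : ℝ := (-c.im / t.im) ^ (((d - m : ℕ) : ℝ))⁻¹ with hrdef
      have hr : 0 < r := Real.rpow_pos_of_pos hx0 _
      have hrp : r ^ (d - m) = -c.im / t.im :=
        Real.rpow_inv_natCast_pow hx0.le (by omega)
      have hwim : (t * (r : ℂ) ^ d + c * (r : ℂ) ^ m).im = 0 := by
        rw [imQ]
        have hdd : r ^ d = r ^ m * r ^ (d - m) := by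
          rw [← pow_add]; congr 1; omega
        rw [hdd, hrp]
        field_simp
        ring
      set W := t * (r : ℂ) ^ d + c * (r : ℂ) ^ m with hWdef
      have hsq : ((r : ℂ)) ^ 2 = ((r ^ 2 : ℝ) : ℂ) := by push_cast; ring
      have hWre : W = (W.re : ℂ) := eq_re_of_im_eq_zero hwim
      rcases le_total W.re 0 with hre | hre
      · refine h4 r hr ⟨r ^ 2 * W.re, mul_nonpos_of_nonneg_of_nonpos (sq_nonneg r) hre, ?_⟩
        rw [hsq, ← hWdef]
        conv_lhs => rw [hWre]
        push_cast; ring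
      · refine g4 r hr ⟨-(r ^ 2 * W.re), by nlinarith [sq_nonneg r], ?_⟩
        have key : ((r : ℂ) * -1) ^ 2 * (t * ((r : ℂ) * -1) ^ d + c * ((r : ℂ) * -1) ^ m)
            = -(((r ^ 2 : ℝ) : ℂ) * W) := by
          rw [show ((r : ℂ) * (-1 : ℂ)) = -(r : ℂ) from by ring,
            hd_odd.neg_pow, hm_odd.neg_pow, hWdef]
          push_cast; ring
        rw [key]
        conv_lhs => rw [hWre]
        push_cast; ring
    rcases lt_trichotomy t.im 0 with hti | hti | hti
    · rcases lt_trichotomy c.im 0 with hci | hci | hci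
      · exact Or.inr ⟨hti, hci⟩
      · exact absurd hci hcim
      · exact absurd (main' hti hci) not_false
    · exact absurd hti htim
    · rcases lt_trichotomy c.im 0 with hci | hci | hci
      · exact absurd (main hti hci) not_false
      · exact absurd hci hcim
      · exact Or.inl ⟨hti, hci⟩
  · intro hsign
    have htim : t.im ≠ 0 := by rcases hsign with ⟨h1, _⟩ | ⟨h1, _⟩ <;> linarith
    have hcim : c.im ≠ 0 := by rcases hsign with ⟨_, h2⟩ | ⟨_, h2⟩ <;> linarith
    have him : ∀ r : ℝ, 0 < r → (t * (r : ℂ) ^ d + c * (r : ℂ) ^ m).im ≠ 0 := by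
      intro r hr
      rw [imQ]
      have hpd := pow_pos hr d
      have hpm := pow_pos hr m
      rcases hsign with ⟨h1, h2⟩ | ⟨h1, h2⟩
      · nlinarith
      · nlinarith
    refine ⟨⟨?_, ?_, ?_, ?_⟩, ?_, ?_, ?_, ?_⟩
    · rintro ⟨x, _, hxe⟩; exact ne_ofReal_of_im_ne htim x hxe
    · rintro ⟨x, _, hxe⟩; exact ne_ofReal_of_im_ne hcim x hxe
    · intro r hr h0
      exact him r hr (by rw [h0]; simp)
    · rintro r hr ⟨x, _, hxe⟩
      refine ne_ofReal_of_im_ne ?_ x hxe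
      rw [show ((r : ℂ)) ^ 2 = ((r ^ 2 : ℝ) : ℂ) from by push_cast; ring]
      simp only [Complex.im_ofReal_mul]
      exact mul_ne_zero (pow_ne_zero 2 hr.ne') (him r hr)
    · rintro ⟨x, _, hxe⟩
      refine ne_ofReal_of_im_ne ?_ x hxe
      simp only [Complex.mul_im]
      simpa using htim
    · rintro ⟨x, _, hxe⟩
      refine ne_ofReal_of_im_ne ?_ x hxe
      simp only [Complex.mul_im]
      simpa using hcim
    · intro r hr h0
      have key : t * ((r : ℂ) * -1) ^ d + c * ((r : ℂ) * -1) ^ m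
          = -(t * (r : ℂ) ^ d + c * (r : ℂ) ^ m) := by
        rw [show ((r : ℂ) * (-1 : ℂ)) = -(r : ℂ) from by ring,
          hd_odd.neg_pow, hm_odd.neg_pow]
        ring
      rw [key, neg_eq_zero] at h0
      exact him r hr (by rw [h0]; simp)
    · rintro r hr ⟨x, _, hxe⟩
      have key : ((r : ℂ) * -1) ^ 2 * (t * ((r : ℂ) * -1) ^ d + c * ((r : ℂ) * -1) ^ m)
          = ((r ^ 2 : ℝ) : ℂ) * (-(t * (r : ℂ) ^ d + c * (r : ℂ) ^ m)) := by
        rw [show ((r : ℂ) * (-1 : ℂ)) = -(r : ℂ) from by ring,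
          hd_odd.neg_pow, hm_odd.neg_pow]
        push_cast; ring
      rw [key] at hxe
      refine ne_ofReal_of_im_ne ?_ x hxe
      simp only [Complex.im_ofReal_mul, Complex.neg_im]
      exact mul_ne_zero (pow_ne_zero 2 hr.ne') (neg_ne_zero.mpr (him r hr))
end

section
/- Let d > m ≥ 1 be integers, c ∈ ℂ with |c| = 1, and M > 0. Let α < β with β − α < 2π and let S = {r·e^{iθ} : r > 0, α < θ < β}. Assume that for every t ≥ 0, every θ ∈ [α, β] and every r > 0 one has t·(r e^{iθ})^d + c·(r e^{iθ})^m ≠ 0 (the closure of S contains no turning point of t z^d + c z^m for any t ≥ 0). Let q : ℂ → ℂ satisfy |q(z)| ≤ M·|z|^{m−1} for all |z| ≥ 1, and for t ≥ 0 set Q_t(z) = t·z^d + c·z^m + q(z). Then for every ε > 0 there exists R ≥ 1 such that for every t ≥ 0 and every z ∈ S with |z| ≥ R: (i) Q_t(z) ≠ 0; and (ii) there exist s > 0 and ψ ∈ (−ε, ε) with Q_t(z) = s·e^{iψ}·(t z^d + c z^m); consequently the vertical direction of Q_t(z)dz² at z differs from that of (t z^d + c z^m)dz² by an angle less than ε/2.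 -/
open Complex

lemma arg_small_aux {w : ℂ} {η : ℝ} (hη : η ≤ 1/2)
    (h : ‖w - 1‖ ≤ η) : |Complex.arg w| ≤ Real.pi * η := by
  have hη0 : 0 ≤ η := le_trans (norm_nonneg _) h
  have hre : 1 - η ≤ w.re := by
    have := Complex.abs_re_le_norm (w - 1)
    simp only [Complex.sub_re, Complex.one_re] at this
    have := abs_le.mp (this.trans h)
    linarith [this.1]
  have hre0 : 0 ≤ w.re := by linarith
  have harg : |Complex.arg w| ≤ Real.pi / 2 :=
    Complex.abs_arg_le_pi_div_two_iff.mpr hre0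
  have him : |w.im| ≤ η := by
    have := Complex.abs_im_le_norm (w - 1)
    simp only [Complex.sub_im, Complex.one_im, sub_zero] at this
    exact this.trans h
  have habsw : (1:ℝ)/2 ≤ ‖w‖ := by
    calc (1:ℝ)/2 ≤ w.re := by linarith
    _ ≤ |w.re| := le_abs_self _
    _ ≤ ‖w‖ := Complex.abs_re_le_norm w
  have hsin : |Real.sin (Complex.arg w)| ≤ 2 * η := by
    rw [Complex.sin_arg, abs_div]
    rw [div_le_iff₀ (by positivity : (0:ℝ) < |‖w‖|)]
    have : |‖w‖| = ‖w‖ := abs_of_nonneg (norm_nonneg _)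
    rw [this]
    nlinarith
  have jordan := Real.mul_abs_le_abs_sin harg
  have hπ : (0:ℝ) < Real.pi := Real.pi_pos
  have : 2 / Real.pi * |Complex.arg w| ≤ 2 * η := jordan.trans hsin
  rw [div_mul_eq_mul_div, div_le_iff₀ hπ] at this
  nlinarith [abs_nonneg (Complex.arg w)]

/-- Perturbation lemma: away from the turning points of the binomial `t z^d + c z^m`,
a lower-order perturbation `q` with `|q(z)| ≤ M |z|^{m-1}` does not create turning points
far from the origin in the sector `S`, and only rotates the value of the potential
(hence the vertical direction of the quadratic differential) by an arbitrarily small angle. -/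
theorem perturbed_binomial_directions
    (d m : ℕ) (hm : 1 ≤ m) (hdm : m < d)
    (c : ℂ) (hc : ‖c‖ = 1) (M : ℝ) (hM : 0 < M)
    (α β : ℝ) (hαβ : α < β) (hwidth : β - α < 2 * Real.pi)
    (hnoturn : ∀ t : ℝ, 0 ≤ t → ∀ θ ∈ Set.Icc α β, ∀ r : ℝ, 0 < r →
      (t : ℂ) * ((r : ℂ) * Complex.exp ((θ : ℂ) * Complex.I)) ^ d +
        c * ((r : ℂ) * Complex.exp ((θ : ℂ) * Complex.I)) ^ m ≠ 0)
    (q : ℂ → ℂ) (hq : ∀ z : ℂ, 1 ≤ ‖z‖ → ‖q z‖ ≤ M * ‖z‖ ^ (m - 1)) :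
    ∀ ε > (0 : ℝ), ∃ R : ℝ, 1 ≤ R ∧ ∀ t : ℝ, 0 ≤ t → ∀ z : ℂ,
      (∃ r θ : ℝ, 0 < r ∧ α < θ ∧ θ < β ∧ z = (r : ℂ) * Complex.exp ((θ : ℂ) * Complex.I)) →
      R ≤ ‖z‖ →
      ((t : ℂ) * z ^ d + c * z ^ m + q z ≠ 0 ∧
       ∃ s ψ : ℝ, 0 < s ∧ |ψ| < ε ∧
         (t : ℂ) * z ^ d + c * z ^ m + q z =
           (s : ℂ) * Complex.exp ((ψ : ℂ) * Complex.I) * ((t : ℂ) * z ^ d + c * z ^ m)) := by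
  intro ε hε
  set k : ℕ := d - m with hk
  have hdmk : d = m + k := by omega
  -- nonvanishing of u * e^k + c on the closed sector directions
  have key : ∀ u : ℝ, 0 ≤ u → ∀ θ ∈ Set.Icc α β,
      (u : ℂ) * Complex.exp ((θ : ℂ) * Complex.I) ^ k + c ≠ 0 := by
    intro u hu θ hθ
    have h1 := hnoturn u hu θ hθ 1 one_pos
    set e := Complex.exp ((θ : ℂ) * Complex.I) with he
    have he0 : e ≠ 0 := Complex.exp_ne_zero _
    have h2 : (u : ℂ) * e ^ d + c * e ^ m ≠ 0 := by
      simpa using h1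
    intro hcontra
    apply h2
    rw [hdmk, pow_add]
    calc (u:ℂ) * (e ^ m * e ^ k) + c * e ^ m = e ^ m * ((u:ℂ) * e ^ k + c) := by ring
    _ = 0 := by rw [hcontra, mul_zero]
  -- uniform lower bound δ
  obtain ⟨δ, hδ0, hδ1, hδ⟩ : ∃ δ : ℝ, 0 < δ ∧ δ ≤ 1 ∧ ∀ u : ℝ, 0 ≤ u → ∀ θ ∈ Set.Icc α β,
      δ ≤ ‖(u : ℂ) * Complex.exp ((θ : ℂ) * Complex.I) ^ k + c‖ := by
    set f : ℝ × ℝ → ℝ := fun p =>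
      ‖(p.1 : ℂ) * Complex.exp ((p.2 : ℂ) * Complex.I) ^ k + c‖ with hf
    have hcont : Continuous f := by
      apply continuous_norm.comp
      fun_prop
    have hK : IsCompact ((Set.Icc (0:ℝ) 2) ×ˢ (Set.Icc α β)) :=
      isCompact_Icc.prod isCompact_Icc
    have hne : ((Set.Icc (0:ℝ) 2) ×ˢ (Set.Icc α β)).Nonempty :=
      ⟨(0, α), by constructor <;> simp [hαβ.le]⟩
    obtain ⟨p₀, hp₀, hmin⟩ := hK.exists_isMinOn hne hcont.continuousOn
    have hfp₀ : 0 < f p₀ := by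
      have := key p₀.1 hp₀.1.1 p₀.2 hp₀.2
      simpa [hf, norm_pos_iff] using this
    refine ⟨min (f p₀) 1, lt_min hfp₀ one_pos, min_le_right _ _, ?_⟩
    intro u hu θ hθ
    rcases le_or_gt u 2 with hu2 | hu2
    · have : f p₀ ≤ f (u, θ) := hmin ⟨⟨hu, hu2⟩, hθ⟩
      exact (min_le_left _ _).trans this
    · have habse : ‖(u:ℂ) * Complex.exp ((θ:ℂ) * Complex.I) ^ k‖ = u := by
        rw [norm_mul, norm_pow, Complex.norm_exp_ofReal_mul_I, one_pow, mul_one,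
          Complex.norm_real, Real.norm_eq_abs, _root_.abs_of_nonneg hu]
      have htri : u ≤ ‖(u:ℂ) * Complex.exp ((θ:ℂ) * Complex.I) ^ k + c‖ + 1 := by
        have := norm_add_le ((u:ℂ) * Complex.exp ((θ:ℂ) * Complex.I) ^ k + c) (-c)
        simp only [add_neg_cancel_right, norm_neg, hc] at this
        rw [habse] at this
        linarith
      have : (1:ℝ) ≤ ‖(u:ℂ) * Complex.exp ((θ:ℂ) * Complex.I) ^ k + c‖ := by
        linarith
      exact (min_le_right _ _).trans this
  -- choose η and R
  set η : ℝ := min (1/2) (ε/4) with hη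
  have hη0 : 0 < η := lt_min (by norm_num) (by linarith)
  have hη2 : η ≤ 1/2 := min_le_left _ _
  have hηε : η ≤ ε/4 := min_le_right _ _
  refine ⟨max 1 (M / (δ * η)), le_max_left _ _, ?_⟩
  intro t ht z hz hR
  obtain ⟨r, θ, hr, hθ1, hθ2, hzeq⟩ := hz
  set e := Complex.exp ((θ : ℂ) * Complex.I) with he
  have habz : ‖z‖ = r := by
    rw [hzeq, norm_mul, he, Complex.norm_exp_ofReal_mul_I, mul_one,
      Complex.norm_real, Real.norm_eq_abs, abs_of_pos hr]
  have hr1 : 1 ≤ r := by rw [← habz]; exact (le_max_left _ _).trans hR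
  have hrM : M / (δ * η) ≤ r := by rw [← habz]; exact (le_max_right _ _).trans hR
  have hMr : M ≤ δ * η * r := by
    rw [div_le_iff₀ (by positivity)] at hrM
    nlinarith
  set B : ℂ := (t : ℂ) * z ^ d + c * z ^ m with hB
  set u : ℝ := t * r ^ k with hu
  have hufact : B = z ^ m * ((u : ℂ) * e ^ k + c) := by
    rw [hB, hzeq, hdmk, hu]
    push_cast
    ring
  have hθicc : θ ∈ Set.Icc α β := ⟨hθ1.le, hθ2.le⟩
  have hu0 : 0 ≤ u := mul_nonneg ht (pow_nonneg (by linarith) _)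
  have hinner : δ ≤ ‖(u : ℂ) * e ^ k + c‖ := hδ u hu0 θ hθicc
  have hBabs : ‖B‖ = r ^ m * ‖(u : ℂ) * e ^ k + c‖ := by
    rw [hufact, norm_mul, norm_pow, habz]
  have hBlow : δ * r ^ m ≤ ‖B‖ := by
    rw [hBabs]
    have hrm : (0:ℝ) ≤ r ^ m := pow_nonneg (by linarith) _
    nlinarith
  have hB0 : B ≠ 0 := by
    intro h0
    rw [h0, norm_zero] at hBlow
    nlinarith [pow_pos hr m]
  -- bound on the perturbation
  have hqz : ‖q z‖ ≤ M * r ^ (m - 1) := by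
    have := hq z (by rw [habz]; exact hr1)
    rwa [habz] at this
  have hrm1 : r ^ m = r ^ (m - 1) * r := by
    rw [← pow_succ, Nat.sub_add_cancel hm]
  have hqB : ‖q z‖ ≤ η * ‖B‖ := by
    have h1 : M * r ^ (m - 1) ≤ η * (δ * r ^ m) := by
      rw [hrm1]
      have hrm10 : (0:ℝ) ≤ r ^ (m - 1) := pow_nonneg (by linarith) _
      nlinarith
    have h2 : η * (δ * r ^ m) ≤ η * ‖B‖ :=
      mul_le_mul_of_nonneg_left hBlow hη0.le
    linarith
  -- the rotation factor
  set w : ℂ := 1 + q z / B with hw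
  have hBpos : (0:ℝ) < ‖B‖ := lt_of_lt_of_le (by positivity) hBlow
  have hw1 : ‖w - 1‖ ≤ η := by
    rw [hw, add_sub_cancel_left, norm_div]
    rw [div_le_iff₀ hBpos]
    linarith
  have hwabs : (1:ℝ)/2 ≤ ‖w‖ := by
    have h1 : ‖w + (1 - w)‖ ≤ ‖w‖ + ‖1 - w‖ :=
      norm_add_le w (1 - w)
    have h2 : w + (1 - w) = 1 := by ring
    have h3 : ‖1 - w‖ = ‖w - 1‖ := by
      rw [show (1:ℂ) - w = -(w - 1) by ring, norm_neg]
    rw [h2, h3, norm_one] at h1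
    linarith
  have hw0 : w ≠ 0 := by
    intro h0
    rw [h0, norm_zero] at hwabs
    norm_num at hwabs
  have hQw : (t : ℂ) * z ^ d + c * z ^ m + q z = B * w := by
    rw [hw, mul_add, mul_one, mul_div_cancel₀ _ hB0, hB]
  refine ⟨?_, ‖w‖, Complex.arg w, norm_pos_iff.mpr hw0, ?_, ?_⟩
  · rw [hQw]
    exact mul_ne_zero hB0 hw0
  · have harg := arg_small_aux hη2 hw1
    have hπ : Real.pi < 4 := by linarith [Real.pi_lt_d2]
    have hπ0 := Real.pi_pos
    have h1 : |Complex.arg w| ≤ Real.pi * (ε/4) :=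
      harg.trans (mul_le_mul_of_nonneg_left hηε hπ0.le)
    have h2 : Real.pi * (ε/4) < 4 * (ε/4) :=
      mul_lt_mul_of_pos_right hπ (by linarith)
    linarith
  · rw [hQw, Complex.norm_mul_exp_arg_mul_I w]
    ring
end
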